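/- arXiv:2006.01046 — 8 statements merged into one kernel-verified Lean document; each statement's English description precedes it below -/
import Mathlib

section
/- Let α ∈ ℂ with −1 < Re(α) < 0, let b > 0 be real, and let t ∈ ℝ. Then the improper integrals converge: the functions R ↦ (1/Γ(−α)) ∫_0^R u^(−α−1) e^(ib(t−u)) du tend, as R → ∞, to (ib)^α e^(ibt), where (ib)^α is defined by the principal branch of the complex power. -/
open MeasureTheory Complex Filter Set intervalIntegral
open scoped Real Interval

noncomputable section

namespace RLaux

/-- The holomorphic integrand. -/
def f (s : ℂ) (b : ℝ) (z : ℂ) : ℂ := z ^ (s - 1) * Complex.exp (-(Complex.I * b * z))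

/-- The dominating function. -/
def g (s : ℂ) (b : ℝ) (v : ℝ) : ℝ :=
  Real.exp (π * |s.im|) * (v ^ (s.re - 1) * Real.exp (-b * v))

/-- The vertical-line integral. -/
def G (s : ℂ) (b c : ℝ) : ℂ := ∫ v in Ioi (0:ℝ), f s b (c - v * Complex.I)

lemma norm_f_le (s : ℂ) (b : ℝ) {z : ℂ} (hz : z ≠ 0) :
    ‖f s b z‖ ≤ Real.exp (π * |s.im|) * (‖z‖ ^ (s.re - 1) * Real.exp (b * z.im)) := by
  have h1 : ‖z ^ (s - 1)‖ = ‖z‖ ^ (s.re - 1) / Real.exp (z.arg * (s - 1).im) := by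
    rw [Complex.norm_cpow_of_ne_zero hz]
    simp
  have h2 : ‖Complex.exp (-(Complex.I * b * z))‖ = Real.exp (b * z.im) := by
    rw [Complex.norm_exp]
    congr 1
    simp [Complex.mul_re]
  calc ‖f s b z‖ = ‖z ^ (s - 1)‖ * ‖Complex.exp (-(Complex.I * b * z))‖ := norm_mul _ _
    _ = ‖z‖ ^ (s.re - 1) * Real.exp (b * z.im) * (Real.exp (z.arg * (s-1).im))⁻¹ := by
        rw [h1, h2]; ring
    _ ≤ ‖z‖ ^ (s.re - 1) * Real.exp (b * z.im) * Real.exp (π * |s.im|) := by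
        refine mul_le_mul_of_nonneg_left ?_ (by positivity)
        rw [← Real.exp_neg]
        refine Real.exp_le_exp.2 ?_
        calc -(z.arg * (s-1).im) ≤ |z.arg * (s-1).im| := neg_le_abs _
          _ = |z.arg| * |s.im| := by rw [abs_mul]; simp
          _ ≤ π * |s.im| := by
              exact mul_le_mul_of_nonneg_right (Complex.abs_arg_le_pi z) (abs_nonneg _)
    _ = Real.exp (π * |s.im|) * (‖z‖ ^ (s.re - 1) * Real.exp (b * z.im)) := by ring

lemma g_integrable {s : ℂ} (hs0 : 0 < s.re) {b : ℝ} (hb : 0 < b) :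
    IntegrableOn (g s b) (Ioi 0) := by
  have h := integrableOn_rpow_mul_exp_neg_mul_rpow (p := 1) (s := s.re - 1) (b := b)
    (by linarith) one_pos hb
  simp only [Real.rpow_one] at h
  exact (h.const_mul _)

lemma norm_f_vert (s : ℂ) {b c v : ℝ} (hs1 : s.re < 1) (hc : 0 ≤ c) (hv : 0 < v) :
    ‖f s b (c - v * Complex.I)‖ ≤ g s b v := by
  have hz : (c - v * Complex.I : ℂ) ≠ 0 := by
    intro h
    have : (c - v * Complex.I : ℂ).im = 0 := by rw [h]; simp
    simp at this
    linarith
  refine (norm_f_le s b hz).trans ?_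
  unfold g
  refine mul_le_mul_of_nonneg_left ?_ (Real.exp_pos _).le
  have him : (c - v * Complex.I : ℂ).im = -v := by simp
  have habs : v ≤ ‖(c - v * Complex.I : ℂ)‖ := by
    have h1 := Complex.abs_im_le_norm (c - v * Complex.I : ℂ)
    rw [him] at h1
    simpa [abs_of_pos hv] using h1
  rw [him, mul_neg, ← neg_mul]
  refine mul_le_mul_of_nonneg_right ?_ (Real.exp_pos _).le
  exact Real.rpow_le_rpow_of_nonpos hv habs (by linarith)

lemma f_vert_integrable {s : ℂ} (hs0 : 0 < s.re) (hs1 : s.re < 1) {b : ℝ} (hb : 0 < b)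
    {c : ℝ} (hc : 0 ≤ c) :
    IntegrableOn (fun v : ℝ => f s b (c - v * Complex.I)) (Ioi 0) := by
  have hmeas : AEStronglyMeasurable (fun v : ℝ => f s b (c - v * Complex.I))
      (volume.restrict (Ioi 0)) := by
    refine (ContinuousOn.aestronglyMeasurable ?_ measurableSet_Ioi)
    intro v hv
    have hv' : (0:ℝ) < v := hv
    have hmem : (c - v * Complex.I : ℂ) ∈ Complex.slitPlane := by
      refine Or.inr ?_
      simp [hv'.ne']
    have hcont : ContinuousAt (f s b) (c - v * Complex.I) := by
      unfold f
      exact ((continuousAt_cpow_const hmem).mul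
        ((Complex.continuous_exp.comp (by fun_prop)).continuousAt))
    have : ContinuousAt (fun v : ℝ => (c - v * Complex.I : ℂ)) v := by fun_prop
    exact ContinuousAt.continuousWithinAt (ContinuousAt.comp (g := f s b) hcont this)
  refine Integrable.mono' (g_integrable hs0 hb) hmeas ?_
  filter_upwards [ae_restrict_mem measurableSet_Ioi] with v hv
  exact norm_f_vert s hs1 hc hv

lemma g_tendsto_zero {s : ℂ} (hs1 : s.re < 1) {b : ℝ} (hb : 0 < b) :
    Tendsto (g s b) atTop (nhds 0) := by
  have h1 : Tendsto (fun v : ℝ => v ^ (s.re - 1)) atTop (nhds 0) := by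
    have := tendsto_rpow_neg_atTop (y := 1 - s.re) (by linarith)
    refine this.congr' ?_
    filter_upwards [eventually_gt_atTop 0] with v hv
    rw [show -(1 - s.re) = s.re - 1 by ring]
  have h2 : Tendsto (fun v : ℝ => Real.exp (-b * v)) atTop (nhds 0) := by
    have hbv : Tendsto (fun v : ℝ => b * v) atTop atTop :=
      Tendsto.const_mul_atTop hb tendsto_id
    have := Real.tendsto_exp_neg_atTop_nhds_zero.comp hbv
    refine this.congr fun v => ?_
    simp [Function.comp, neg_mul]
  have h3 := (h1.mul h2).const_mul (Real.exp (π * |s.im|))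
  simp only [mul_zero, zero_mul] at h3
  exact h3.congr fun v => by unfold g; ring

lemma rect {s : ℂ} (hs0 : 0 < s.re) (hs1 : s.re < 1) {b : ℝ} (hb : 0 < b) {δ R : ℝ}
    (hδ : 0 < δ) (hδR : δ ≤ R) :
    ∫ u in δ..R, f s b u = Complex.I * G s b R - Complex.I * G s b δ := by
  have hR : 0 < R := lt_of_lt_of_le hδ hδR
  -- Step A : Cauchy on the rectangle [δ,R] × [-H,0]
  have hA : ∀ H : ℝ, (∫ x in δ..R, f s b x) =
      (∫ x in δ..R, f s b (x - H * Complex.I))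
        + Complex.I * (∫ y in (-H)..(0:ℝ), f s b (R + y * Complex.I))
        - Complex.I * (∫ y in (-H)..(0:ℝ), f s b (δ + y * Complex.I)) := by
    intro H
    have hdiff : DifferentiableOn ℂ (f s b)
        ([[((δ:ℂ) - H * Complex.I).re, ((R:ℂ)).re]] ×ℂ
          [[((δ:ℂ) - H * Complex.I).im, ((R:ℂ)).im]]) := by
      intro z hz
      rw [Complex.mem_reProdIm] at hz
      have hzre : z.re ∈ [[δ, R]] := by simpa using hz.1
      rw [uIcc_of_le hδR] at hzre
      have hre : 0 < z.re := lt_of_lt_of_le hδ hzre.1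
      have h1 : DifferentiableAt ℂ (fun z : ℂ => z ^ (s - 1)) z :=
        ((hasDerivAt_id z).cpow_const (Or.inl hre)).differentiableAt
      have h2 : DifferentiableAt ℂ (fun z : ℂ => Complex.exp (-(Complex.I * b * z))) z :=
        (((differentiableAt_const _).mul differentiableAt_id).neg).cexp
      exact (h1.mul h2).differentiableWithinAt
    have hC := Complex.integral_boundary_rect_eq_zero_of_differentiableOn (f s b)
      ((δ:ℂ) - H * Complex.I) (R:ℂ) hdiff
    have hzre : ((δ:ℂ) - H * Complex.I).re = δ := by simp
    have hzim : ((δ:ℂ) - H * Complex.I).im = -H := by simp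
    have hwre : ((R:ℂ)).re = R := by simp
    have hwim : ((R:ℂ)).im = 0 := by simp
    rw [hzre, hzim, hwre, hwim] at hC
    simp only [Complex.ofReal_neg, Complex.ofReal_zero, zero_mul, add_zero, smul_eq_mul,
      neg_mul, ← sub_eq_add_neg] at hC
    linear_combination -hC
  -- Step B : limits as H → ∞
  have hT1 : Tendsto (fun H : ℝ => ∫ x in δ..R, f s b (x - H * Complex.I)) atTop (nhds 0) := by
    have hlim : Tendsto (fun H : ℝ => g s b H * |R - δ|) atTop (nhds 0) := by
      simpa using (g_tendsto_zero hs1 hb).mul_const |R - δ|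
    refine squeeze_zero_norm' ?_ hlim
    filter_upwards [eventually_gt_atTop 0] with H hH
    refine intervalIntegral.norm_integral_le_of_norm_le_const fun x hx => ?_
    have hx0 : 0 ≤ x := by
      rcases hx with ⟨h1, h2⟩
      have : min δ R = δ := min_eq_left hδR
      rw [this] at h1
      linarith
    exact norm_f_vert s hs1 hx0 hH
  have hT2 : ∀ c : ℝ, 0 ≤ c →
      Tendsto (fun H : ℝ => ∫ y in (-H)..(0:ℝ), f s b (c + y * Complex.I)) atTop
        (nhds (G s b c)) := by
    intro c hc
    have key := MeasureTheory.intervalIntegral_tendsto_integral_Ioi 0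
      (f_vert_integrable hs0 hs1 hb hc) (tendsto_id (α := ℝ))
    refine key.congr fun H => ?_
    rw [show (∫ v in (0:ℝ)..(id H), f s b (c - v * Complex.I))
        = ∫ y in (-H)..(0:ℝ), f s b (c + y * Complex.I) from ?_]
    have := intervalIntegral.integral_comp_neg (a := (0:ℝ)) (b := H)
      (fun y : ℝ => f s b (c + y * Complex.I))
    rw [neg_zero] at this
    rw [← this]
    refine intervalIntegral.integral_congr fun v _ => ?_
    push_cast
    ring_nf
  have hfin : Tendsto (fun H : ℝ =>
      (∫ x in δ..R, f s b (x - H * Complex.I))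
        + Complex.I * (∫ y in (-H)..(0:ℝ), f s b (R + y * Complex.I))
        - Complex.I * (∫ y in (-H)..(0:ℝ), f s b (δ + y * Complex.I))) atTop
      (nhds (0 + Complex.I * G s b R - Complex.I * G s b δ)) :=
    (hT1.add ((hT2 R hR.le).const_mul _)).sub ((hT2 δ hδ.le).const_mul _)
  rw [zero_add] at hfin
  exact tendsto_nhds_unique (l := atTop) tendsto_const_nhds (hfin.congr fun H => (hA H).symm)

lemma f_intervalIntegrable {s : ℂ} (hs0 : 0 < s.re) (b a c : ℝ) :
    IntervalIntegrable (fun u : ℝ => f s b u) volume a c := by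
  have h1 : IntervalIntegrable (fun x : ℝ => (x:ℂ) ^ (s - 1)) volume a c :=
    intervalIntegrable_cpow' (by simp; linarith)
  have h2 : ContinuousOn (fun u : ℝ => Complex.exp (-(Complex.I * b * u))) [[a, c]] := by
    fun_prop
  exact h1.mul_continuousOn h2

lemma G_cont0 {s : ℂ} (hs0 : 0 < s.re) (hs1 : s.re < 1) {b : ℝ} (hb : 0 < b) :
    Tendsto (G s b) (nhdsWithin (0:ℝ) (Ioi 0)) (nhds (G s b 0)) := by
  unfold G
  refine tendsto_integral_filter_of_dominated_convergence (g s b) ?_ ?_ (g_integrable hs0 hb) ?_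
  · filter_upwards [self_mem_nhdsWithin] with c hc
    exact (f_vert_integrable hs0 hs1 hb (le_of_lt hc)).aestronglyMeasurable
  · filter_upwards [self_mem_nhdsWithin] with c hc
    filter_upwards [ae_restrict_mem measurableSet_Ioi] with v hv
    exact norm_f_vert s hs1 (le_of_lt hc) hv
  · filter_upwards [ae_restrict_mem measurableSet_Ioi] with v hv
    have hv' : (0:ℝ) < v := hv
    have hmem : (((0:ℝ):ℂ) - v * Complex.I) ∈ Complex.slitPlane := by
      refine Or.inr ?_
      simp [hv'.ne']
    have hcont : ContinuousAt (f s b) (((0:ℝ):ℂ) - v * Complex.I) := by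
      unfold f
      exact (continuousAt_cpow_const hmem).mul
        ((Complex.continuous_exp.comp (by fun_prop)).continuousAt)
    have hc2 : ContinuousAt (fun c : ℝ => ((c:ℂ) - v * Complex.I)) 0 := by fun_prop
    exact (Filter.Tendsto.comp hcont hc2).mono_left nhdsWithin_le_nhds

lemma rect0 {s : ℂ} (hs0 : 0 < s.re) (hs1 : s.re < 1) {b : ℝ} (hb : 0 < b) {R : ℝ}
    (hR : 0 < R) :
    ∫ u in (0:ℝ)..R, f s b u = Complex.I * G s b R - Complex.I * G s b 0 := by
  have hIoo : Ioo (0:ℝ) R ∈ nhdsWithin (0:ℝ) (Ioi 0) :=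
    Ioo_mem_nhdsGT_of_mem ⟨le_rfl, hR⟩
  -- LHS tendsto
  have hint : IntegrableOn (fun u : ℝ => f s b u) [[0, R]] volume := by
    rw [uIcc_of_le hR.le]
    exact ((f_intervalIntegrable hs0 b 0 R).1).congr_set_ae Ioc_ae_eq_Icc.symm
  have hprim : ContinuousOn (fun x : ℝ => ∫ u in (0:ℝ)..x, f s b u) [[0, R]] :=
    intervalIntegral.continuousOn_primitive_interval hint
  have hzero : Tendsto (fun δ : ℝ => ∫ u in (0:ℝ)..δ, f s b u)
      (nhdsWithin (0:ℝ) (Ioi 0)) (nhds 0) := by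
    have h0mem : (0:ℝ) ∈ [[0, R]] := by
      rw [uIcc_of_le hR.le]; exact ⟨le_rfl, hR.le⟩
    have := (hprim.continuousWithinAt h0mem)
    have heq : (∫ u in (0:ℝ)..(0:ℝ), f s b u) = 0 := intervalIntegral.integral_same
    rw [ContinuousWithinAt, heq] at this
    refine this.mono_left ?_
    rw [nhdsWithin_restrict'' (Ioi (0:ℝ)) hIoo]
    refine nhdsWithin_mono _ ?_
    rw [uIcc_of_le hR.le]
    exact fun x hx => ⟨hx.2.1.le, hx.2.2.le⟩
  have hL : Tendsto (fun δ : ℝ => ∫ u in δ..R, f s b u)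
      (nhdsWithin (0:ℝ) (Ioi 0)) (nhds (∫ u in (0:ℝ)..R, f s b u)) := by
    have hsub : Tendsto (fun δ : ℝ => (∫ u in (0:ℝ)..R, f s b u) - ∫ u in (0:ℝ)..δ, f s b u)
        (nhdsWithin (0:ℝ) (Ioi 0)) (nhds ((∫ u in (0:ℝ)..R, f s b u) - 0)) :=
      tendsto_const_nhds.sub hzero
    rw [sub_zero] at hsub
    refine hsub.congr' ?_
    filter_upwards [hIoo] with δ hδ
    have := intervalIntegral.integral_add_adjacent_intervals
      (f_intervalIntegrable hs0 b 0 δ) (f_intervalIntegrable hs0 b δ R)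
    linear_combination -this
  have hRside : Tendsto (fun δ : ℝ => Complex.I * G s b R - Complex.I * G s b δ)
      (nhdsWithin (0:ℝ) (Ioi 0)) (nhds (Complex.I * G s b R - Complex.I * G s b 0)) :=
    tendsto_const_nhds.sub ((G_cont0 hs0 hs1 hb).const_mul _)
  have heq : (fun δ : ℝ => ∫ u in δ..R, f s b u) =ᶠ[nhdsWithin (0:ℝ) (Ioi 0)]
      (fun δ : ℝ => Complex.I * G s b R - Complex.I * G s b δ) := by
    filter_upwards [hIoo] with δ hδ
    exact rect hs0 hs1 hb hδ.1 hδ.2.le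
  exact tendsto_nhds_unique hL (hRside.congr' heq.symm)

lemma G_tendsto_zero {s : ℂ} (hs1 : s.re < 1) {b : ℝ} (hb : 0 < b) :
    Tendsto (G s b) atTop (nhds 0) := by
  set K : ℝ := Real.exp (π * |s.im|) * ∫ v in Ioi (0:ℝ), Real.exp (-b * v) with hK
  have hexp : IntegrableOn (fun v : ℝ => Real.exp (-b * v)) (Ioi 0) :=
    exp_neg_integrableOn_Ioi 0 hb
  have hbound : ∀ R : ℝ, 0 < R → ‖G s b R‖ ≤ K * R ^ (s.re - 1) := by
    intro R hR
    have h1 : ‖G s b R‖ ≤ ∫ v in Ioi (0:ℝ),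
        Real.exp (π * |s.im|) * R ^ (s.re - 1) * Real.exp (-b * v) := by
      refine norm_integral_le_of_norm_le ((hexp.const_mul _)) ?_
      filter_upwards [ae_restrict_mem measurableSet_Ioi] with v hv
      have hv' : (0:ℝ) < v := hv
      have hz : ((R:ℂ) - v * Complex.I) ≠ 0 := by
        intro h
        have : ((R:ℂ) - v * Complex.I).im = 0 := by rw [h]; simp
        simp at this
        linarith
      refine (norm_f_le s b hz).trans ?_
      have him : ((R:ℂ) - v * Complex.I).im = -v := by simp
      rw [him]
      have habs : R ≤ ‖((R:ℂ) - v * Complex.I)‖ := by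
        have h2 := Complex.abs_re_le_norm ((R:ℂ) - v * Complex.I)
        have hre : ((R:ℂ) - v * Complex.I).re = R := by simp
        rw [hre, abs_of_pos hR] at h2
        exact h2
      have h3 : ‖((R:ℂ) - v * Complex.I)‖ ^ (s.re - 1) ≤ R ^ (s.re - 1) :=
        Real.rpow_le_rpow_of_nonpos hR habs (by linarith)
      calc Real.exp (π * |s.im|) * (‖((R:ℂ) - ↑v * Complex.I)‖ ^ (s.re - 1)
            * Real.exp (b * -v))
          ≤ Real.exp (π * |s.im|) * (R ^ (s.re - 1) * Real.exp (b * -v)) := by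
            refine mul_le_mul_of_nonneg_left ?_ (Real.exp_pos _).le
            exact mul_le_mul_of_nonneg_right h3 (Real.exp_pos _).le
        _ = Real.exp (π * |s.im|) * R ^ (s.re - 1) * Real.exp (-b * v) := by ring_nf
    rw [MeasureTheory.integral_const_mul] at h1
    calc ‖G s b R‖ ≤ _ := h1
      _ = K * R ^ (s.re - 1) := by rw [hK]; ring
  have hKR : Tendsto (fun R : ℝ => K * R ^ (s.re - 1)) atTop (nhds 0) := by
    have h1 : Tendsto (fun R : ℝ => R ^ (s.re - 1)) atTop (nhds 0) := by
      have := tendsto_rpow_neg_atTop (y := 1 - s.re) (by linarith)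
      refine this.congr' ?_
      filter_upwards [eventually_gt_atTop 0] with v hv
      rw [show -(1 - s.re) = s.re - 1 by ring]
    simpa using h1.const_mul K
  refine squeeze_zero_norm' ?_ hKR
  filter_upwards [eventually_gt_atTop 0] with R hR
  exact hbound R hR

lemma G_zero {s : ℂ} (hs0 : 0 < s.re) {b : ℝ} (hb : 0 < b) :
    Complex.I * G s b 0 = -((Complex.I * b) ^ (-s) * Complex.Gamma s) := by
  have hI : (-Complex.I : ℂ) ≠ 0 := by simp [Complex.I_ne_zero]
  have hbne : ((b:ℂ)) ≠ 0 := Complex.ofReal_ne_zero.2 hb.ne'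
  have h1 : G s b 0 = (-Complex.I) ^ (s - 1) * ((1 / (b:ℂ)) ^ s * Complex.Gamma s) := by
    unfold G
    rw [← Complex.integral_cpow_mul_exp_neg_mul_Ioi hs0 hb, ← MeasureTheory.integral_const_mul]
    refine setIntegral_congr_fun measurableSet_Ioi fun v hv => ?_
    have hv' : (0:ℝ) < v := hv
    unfold f
    have e1 : (((0:ℝ)):ℂ) - ↑v * Complex.I = ↑v * (-Complex.I) := by push_cast; ring
    have e2 : -(Complex.I * ↑b * ((((0:ℝ)):ℂ) - ↑v * Complex.I)) = -(↑b * ↑v) := by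
      push_cast
      linear_combination (↑b * ↑v : ℂ) * Complex.I_sq
    rw [e2, e1]
    have e3 : ((v:ℂ) * (-Complex.I)) ^ (s - 1) = (v:ℂ) ^ (s - 1) * (-Complex.I) ^ (s - 1) := by
      rw [Complex.cpow_def_of_ne_zero (mul_ne_zero (Complex.ofReal_ne_zero.2 hv'.ne') hI),
        Complex.cpow_def_of_ne_zero (Complex.ofReal_ne_zero.2 hv'.ne'),
        Complex.cpow_def_of_ne_zero hI,
        Complex.log_ofReal_mul hv' hI, ← Complex.ofReal_log hv'.le, add_mul, Complex.exp_add]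
    rw [e3]
    ring
  rw [h1]
  have h2 : (-Complex.I) ^ (s - 1) * (-Complex.I) = (-Complex.I) ^ s := by
    calc (-Complex.I) ^ (s - 1) * (-Complex.I)
        = (-Complex.I) ^ (s - 1) * (-Complex.I) ^ (1:ℂ) := by rw [Complex.cpow_one]
      _ = (-Complex.I) ^ (s - 1 + 1) := (Complex.cpow_add _ _ hI).symm
      _ = (-Complex.I) ^ s := by rw [sub_add_cancel]
  have h3 : (-Complex.I) ^ s * (1 / (b:ℂ)) ^ s = (Complex.I * b) ^ (-s) := by
    rw [Complex.cpow_def_of_ne_zero hI, Complex.cpow_def_of_ne_zero (one_div_ne_zero hbne),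
      Complex.cpow_def_of_ne_zero (mul_ne_zero Complex.I_ne_zero hbne), ← Complex.exp_add]
    congr 1
    rw [Complex.log_neg_I, mul_comm Complex.I (b:ℂ), Complex.log_ofReal_mul hb Complex.I_ne_zero,
      Complex.log_I]
    rw [show (1 / (b:ℂ)) = ((b⁻¹ : ℝ) : ℂ) by push_cast; ring,
      ← Complex.ofReal_log (by positivity : (0:ℝ) ≤ b⁻¹), Real.log_inv]
    push_cast
    ring
  calc Complex.I * ((-Complex.I) ^ (s - 1) * ((1 / (b:ℂ)) ^ s * Complex.Gamma s))
      = -(((-Complex.I) ^ (s - 1) * (-Complex.I)) * (1 / (b:ℂ)) ^ s * Complex.Gamma s) := by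
        ring
    _ = -((Complex.I * b) ^ (-s) * Complex.Gamma s) := by rw [h2, mul_assoc, ← mul_assoc, h3]

lemma key {s : ℂ} (hs0 : 0 < s.re) (hs1 : s.re < 1) {b : ℝ} (hb : 0 < b) :
    Tendsto (fun R : ℝ => ∫ u in (0:ℝ)..R, f s b u) atTop
      (nhds ((Complex.I * b) ^ (-s) * Complex.Gamma s)) := by
  have h1 : Tendsto (fun R : ℝ => Complex.I * G s b R - Complex.I * G s b 0) atTop
      (nhds (Complex.I * 0 - Complex.I * G s b 0)) :=
    (((G_tendsto_zero hs1 hb).const_mul Complex.I)).sub tendsto_const_nhds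
  rw [mul_zero, zero_sub, G_zero hs0 hb, neg_neg] at h1
  refine h1.congr' ?_
  filter_upwards [eventually_gt_atTop 0] with R hR
  rw [← G_zero hs0 hb]
  exact (rect0 hs0 hs1 hb hR).symm

end RLaux

open RLaux

theorem rl_fracderiv_exp_boundary (α : ℂ) (hα1 : -1 < α.re) (hα2 : α.re < 0)
    (b : ℝ) (hb : 0 < b) (t : ℝ) :
    Filter.Tendsto
      (fun R : ℝ => (1 / Complex.Gamma (-α)) *
        ∫ u in (0 : ℝ)..R,
          (u : ℂ) ^ (-α - 1) * Complex.exp (Complex.I * (b : ℂ) * ((t : ℂ) - (u : ℂ))))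
      Filter.atTop
      (nhds ((Complex.I * (b : ℂ)) ^ α * Complex.exp (Complex.I * (b : ℂ) * (t : ℂ)))) := by
  have hs0 : 0 < (-α).re := by simp only [Complex.neg_re]; linarith
  have hs1 : (-α).re < 1 := by simp only [Complex.neg_re]; linarith
  have hΓ : Complex.Gamma (-α) ≠ 0 := by
    refine Complex.Gamma_ne_zero fun m => ?_
    intro h
    rw [h] at hs0
    simp only [Complex.neg_re, Complex.natCast_re] at hs0
    have : (0:ℝ) ≤ (m:ℝ) := Nat.cast_nonneg m
    linarith
  set c : ℂ := (1 / Complex.Gamma (-α)) * Complex.exp (Complex.I * b * t) with hc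
  have hkey := (key hs0 hs1 hb).const_mul c
  have hval : c * ((Complex.I * b) ^ (-(-α)) * Complex.Gamma (-α))
      = (Complex.I * b) ^ α * Complex.exp (Complex.I * b * t) := by
    rw [neg_neg, hc]
    field_simp
  rw [hval] at hkey
  refine hkey.congr fun R => ?_
  rw [show (∫ u in (0:ℝ)..R, (u:ℂ) ^ (-α - 1)
        * Complex.exp (Complex.I * b * ((t:ℂ) - (u:ℂ))))
      = Complex.exp (Complex.I * b * t) * ∫ u in (0:ℝ)..R, f (-α) b u from ?_]
  · rw [hc]; ring
  · rw [← intervalIntegral.integral_const_mul]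
    refine intervalIntegral.integral_congr fun u _ => ?_
    unfold f
    rw [show Complex.I * b * ((t:ℂ) - u) = Complex.I * b * t + -(Complex.I * b * u) by ring,
      Complex.exp_add]
    ring
end
end

section
/- Let α, k ∈ ℂ with Re(α) < 0 and Re(k) < 0, and let t ∈ ℝ. Then the function u ↦ u^(−α−1) e^(k(t+u)) is integrable on (0, ∞), and (1/Γ(−α)) ∫_0^∞ u^(−α−1) e^(k(t+u)) du = (−k)^α e^(kt), where (−k)^α is defined by the principal branch of the complex power. -/
open MeasureTheory Set Filter Complex

set_option maxHeartbeats 1000000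

-- continuity / measurability of the integrand
lemma weyl_aux_contOn (c k : ℂ) :
    ContinuousOn (fun u : ℝ => (u : ℂ) ^ c * Complex.exp (k * u)) (Ioi 0) := by
  refine ContinuousOn.mul ?_ ?_
  · intro u hu
    exact (Complex.continuousAt_ofReal_cpow_const u c (Or.inr (ne_of_gt hu))).continuousWithinAt
  · exact (Complex.continuous_exp.comp
      (continuous_const.mul Complex.continuous_ofReal)).continuousOn

lemma weyl_aux_meas (c k : ℂ) :
    AEStronglyMeasurable (fun u : ℝ => (u : ℂ) ^ c * Complex.exp (k * u))
      (volume.restrict (Ioi 0)) :=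
  (weyl_aux_contOn c k).aestronglyMeasurable measurableSet_Ioi

lemma weyl_aux_norm (c k : ℂ) {u : ℝ} (hu : 0 < u) :
    ‖(u : ℂ) ^ c * Complex.exp (k * u)‖ = u ^ c.re * Real.exp (k.re * u) := by
  rw [norm_mul,
    Complex.norm_cpow_eq_rpow_re_of_pos hu, Complex.norm_exp]
  congr 2
  simp [Complex.mul_re]

lemma weyl_aux_integrable {a k : ℂ} (ha : 0 < a.re) (hk : k.re < 0) :
    IntegrableOn (fun u : ℝ => (u : ℂ) ^ (a - 1) * Complex.exp (k * u)) (Ioi 0) := by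
  have hbound : IntegrableOn (fun u : ℝ => u ^ (a.re - 1) * Real.exp (-(-k.re) * u)) (Ioi 0) := by
    have := integrableOn_rpow_mul_exp_neg_mul_rpow (p := 1) (s := a.re - 1) (b := -k.re)
      (by linarith) zero_lt_one (by linarith)
    simpa using this
  refine Integrable.mono' hbound (weyl_aux_meas _ _) ?_
  filter_upwards [ae_restrict_mem measurableSet_Ioi] with u hu
  rw [weyl_aux_norm _ _ hu]
  simp only [Complex.sub_re, Complex.one_re, neg_neg]
  exact le_of_eq rfl

-- the key integral formula for real negative k
lemma weyl_aux_real {a : ℂ} (ha : 0 < a.re) {x : ℝ} (hx : x < 0) :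
    ∫ u in Ioi (0:ℝ), (u : ℂ) ^ (a - 1) * Complex.exp ((x : ℂ) * u)
      = (-(x:ℂ)) ^ (-a) * Complex.Gamma a := by
  have hr : 0 < -x := by linarith
  have h := Complex.integral_cpow_mul_exp_neg_mul_Ioi ha hr
  have h2 : ∀ u : ℝ, (x : ℂ) * u = -(((-x : ℝ) : ℂ) * u) := by
    intro u; push_cast; ring
  rw [show ∫ u in Ioi (0:ℝ), (u : ℂ) ^ (a - 1) * Complex.exp ((x : ℂ) * u)
      = ∫ u in Ioi (0:ℝ), (u : ℂ) ^ (a - 1) * Complex.exp (-(((-x : ℝ) : ℂ) * u)) by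
    refine setIntegral_congr_fun measurableSet_Ioi fun u _ => ?_
    rw [h2 u], h]
  congr 1
  have hne : ((-x : ℝ) : ℂ) ≠ 0 := by
    simp only [ne_eq, Complex.ofReal_eq_zero]; linarith
  rw [Complex.cpow_neg, show (-(x:ℂ)) = ((-x : ℝ) : ℂ) by push_cast; ring,
    ← Complex.cpow_neg, one_div, Complex.inv_cpow _ _ ?_, Complex.cpow_neg]
  rw [Complex.arg_ofReal_of_nonneg hr.le]
  exact Real.pi_ne_zero.symm
lemma weyl_aux_deriv {a : ℂ} (ha : 0 < a.re) {z₀ : ℂ} (hz₀re : z₀.re < 0) :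
    HasDerivAt (fun z : ℂ => ∫ u in Ioi (0:ℝ), (u : ℂ) ^ (a - 1) * Complex.exp (z * u))
      (∫ u in Ioi (0:ℝ), (u : ℂ) ^ (a - 1) * (Complex.exp (z₀ * u) * u)) z₀ := by
  set δ : ℝ := -z₀.re / 2 with hδ
  have hδpos : (0:ℝ) < δ := by simp only [hδ]; linarith
  have h1 : ∀ᶠ z in nhds z₀, AEStronglyMeasurable
      (fun u : ℝ => (u : ℂ) ^ (a - 1) * Complex.exp (z * u))
      (volume.restrict (Ioi (0:ℝ))) :=
    Filter.Eventually.of_forall fun z => weyl_aux_meas _ _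
  have h2 : Integrable (fun u : ℝ => (u : ℂ) ^ (a - 1) * Complex.exp (z₀ * u))
      (volume.restrict (Ioi (0:ℝ))) := weyl_aux_integrable ha hz₀re
  have h3 : AEStronglyMeasurable
      (fun u : ℝ => (u : ℂ) ^ (a - 1) * (Complex.exp (z₀ * u) * (u:ℂ)))
      (volume.restrict (Ioi (0:ℝ))) := by
    have hc1 : ContinuousOn (fun u : ℝ => (u : ℂ) ^ (a - 1)) (Ioi 0) := fun u hu =>
      (Complex.continuousAt_ofReal_cpow_const u (a-1) (Or.inr (ne_of_gt hu))).continuousWithinAt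
    have hc2 : Continuous (fun u : ℝ => Complex.exp (z₀ * u) * (u:ℂ)) :=
      (Complex.continuous_exp.comp (continuous_const.mul Complex.continuous_ofReal)).mul
        Complex.continuous_ofReal
    exact (hc1.mul hc2.continuousOn).aestronglyMeasurable measurableSet_Ioi
  have h5 : Integrable (fun u : ℝ => u ^ a.re * Real.exp (-δ * u))
      (volume.restrict (Ioi (0:ℝ))) := by
    have := integrableOn_rpow_mul_exp_neg_mul_rpow (p := 1) (s := a.re) (b := δ)
      (by linarith) zero_lt_one hδpos
    simpa [IntegrableOn] using this
  have h4 : ∀ᵐ (u : ℝ) ∂(volume.restrict (Ioi (0:ℝ))), ∀ z ∈ Metric.ball z₀ δ,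
      ‖(u : ℂ) ^ (a - 1) * (Complex.exp (z * u) * (u:ℂ))‖ ≤ u ^ a.re * Real.exp (-δ * u) := by
    filter_upwards [ae_restrict_mem measurableSet_Ioi] with u hu
    intro z hz
    have hzre : z.re ≤ -δ := by
      have hb := (Complex.abs_re_le_norm (z - z₀)).trans (le_of_lt (mem_ball_iff_norm.mp hz))
      simp only [Complex.sub_re] at hb
      have hb2 := abs_le.mp hb
      simp only [hδ]; linarith [hb2.1, hb2.2]
    rw [norm_mul, norm_mul]
    rw [Complex.norm_cpow_eq_rpow_re_of_pos hu,
      Complex.norm_exp]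
    have e1 : (z * u).re = z.re * u := by simp [Complex.mul_re]
    have e2 : ‖(u : ℂ)‖ = u := by
      rw [Complex.norm_real, Real.norm_eq_abs, abs_of_pos hu]
    rw [e1, e2]
    have e3 : u ^ (a.re - 1) * u = u ^ a.re := by
      rw [← Real.rpow_add_one (ne_of_gt hu) (a.re - 1), sub_add_cancel]
    rw [show (a-1).re = a.re - 1 by simp]
    calc u ^ (a.re - 1) * (Real.exp (z.re * u) * u)
        = u ^ a.re * Real.exp (z.re * u) := by rw [← e3]; ring
      _ ≤ u ^ a.re * Real.exp (-δ * u) :=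
        mul_le_mul_of_nonneg_left
          (Real.exp_le_exp.mpr (mul_le_mul_of_nonneg_right hzre hu.le))
          (Real.rpow_nonneg hu.le _)
  have h6 : ∀ᵐ (u : ℝ) ∂(volume.restrict (Ioi (0:ℝ))), ∀ z ∈ Metric.ball z₀ δ,
      HasDerivAt (fun z : ℂ => (u : ℂ) ^ (a - 1) * Complex.exp (z * u))
        ((u : ℂ) ^ (a - 1) * (Complex.exp (z * u) * (u:ℂ))) z := by
    filter_upwards [] with u
    intro z hz
    have h : HasDerivAt (fun z : ℂ => Complex.exp (z * u)) (Complex.exp (z * u) * u) z := by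
      have h := ((hasDerivAt_id z).mul_const ((u:ℝ):ℂ)).cexp
      simpa using h
    simpa using h.const_mul ((u:ℂ) ^ (a - 1))
  exact (hasDerivAt_integral_of_dominated_loc_of_deriv_le (𝕜 := ℂ)
    (μ := volume.restrict (Ioi (0:ℝ)))
    (F := fun z (u : ℝ) => (u : ℂ) ^ (a - 1) * Complex.exp (z * u))
    (F' := fun z (u : ℝ) => (u : ℂ) ^ (a - 1) * (Complex.exp (z * u) * (u:ℂ)))
    (bound := fun u : ℝ => u ^ a.re * Real.exp (-δ * u))
    (Metric.ball_mem_nhds z₀ hδpos) h1 h2 h3 h4 h5 h6).2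

lemma weyl_aux_key {a : ℂ} (ha : 0 < a.re) {k : ℂ} (hk : k.re < 0) :
    ∫ u in Ioi (0:ℝ), (u : ℂ) ^ (a - 1) * Complex.exp (k * u)
      = (-k) ^ (-a) * Complex.Gamma a := by
  have hUopen : IsOpen {z : ℂ | z.re < 0} := isOpen_lt Complex.continuous_re continuous_const
  have hUconn : IsPreconnected {z : ℂ | z.re < 0} :=
    (convex_halfSpace_re_lt 0).isPreconnected
  have hfd : DifferentiableOn ℂ
      (fun z : ℂ => ∫ u in Ioi (0:ℝ), (u : ℂ) ^ (a - 1) * Complex.exp (z * u))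
      {z : ℂ | z.re < 0} := fun z₀ hz₀ =>
    (weyl_aux_deriv ha hz₀).differentiableAt.differentiableWithinAt
  have hga : DifferentiableOn ℂ (fun z : ℂ => (-z) ^ (-a) * Complex.Gamma a)
      {z : ℂ | z.re < 0} := by
    intro z hz
    refine DifferentiableAt.differentiableWithinAt ?_
    refine DifferentiableAt.mul ?_ (differentiableAt_const _)
    refine DifferentiableAt.cpow (differentiable_neg.differentiableAt)
      (differentiableAt_const _) ?_
    exact Or.inl (by simpa using hz)
  have hfa := hfd.analyticOnNhd hUopen
  have hgan := hga.analyticOnNhd hUopen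
  have hm1 : (-1 : ℂ) ∈ {z : ℂ | z.re < 0} := by norm_num [Set.mem_setOf_eq]
  have hfreq : ∃ᶠ z in nhdsWithin (-1 : ℂ) {(-1:ℂ)}ᶜ,
      (fun z : ℂ => ∫ u in Ioi (0:ℝ), (u : ℂ) ^ (a - 1) * Complex.exp (z * u)) z
      = (fun z : ℂ => (-z) ^ (-a) * Complex.Gamma a) z := by
    have ht : Tendsto (fun x : ℝ => (x : ℂ)) (nhdsWithin (-1 : ℝ) {(-1:ℝ)}ᶜ)
        (nhdsWithin (-1 : ℂ) {(-1:ℂ)}ᶜ) := by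
      rw [tendsto_nhdsWithin_iff]
      constructor
      · have h0 : Tendsto (fun x : ℝ => (x : ℂ)) (nhds (-1:ℝ)) (nhds ((-1:ℝ) : ℂ)) :=
          Complex.continuous_ofReal.tendsto _
        simp only [Complex.ofReal_neg, Complex.ofReal_one] at h0
        exact h0.mono_left (nhdsWithin_le_nhds (s := {(-1:ℝ)}ᶜ))
      · have hself : {(-1:ℝ)}ᶜ ∈ nhdsWithin (-1 : ℝ) {(-1:ℝ)}ᶜ := self_mem_nhdsWithin
        filter_upwards [hself] with x hx
        simp only [mem_compl_iff, mem_singleton_iff] at hx ⊢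
        intro h
        apply hx
        have h2 : ((x:ℂ)) = ((-1:ℝ):ℂ) := by push_cast; exact h
        exact_mod_cast h2
    refine ht.frequently ?_
    have hev : ∀ᶠ x in nhdsWithin (-1 : ℝ) {(-1:ℝ)}ᶜ, x < 0 := by
      refine eventually_nhdsWithin_of_eventually_nhds ?_
      exact eventually_nhds_iff.mpr ⟨Iio 0, fun y hy => hy, isOpen_Iio, by norm_num⟩
    refine hev.frequently.mono fun x hx => ?_
    exact weyl_aux_real ha hx
  have heq := hfa.eqOn_of_preconnected_of_frequently_eq hgan hUconn hm1 hfreq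
  exact heq hk

theorem weyl_fracderiv_exp (α k : ℂ) (hα : α.re < 0) (hk : k.re < 0) (t : ℝ) :
    IntegrableOn
      (fun u : ℝ => (u : ℂ) ^ (-α - 1) * Complex.exp (k * ((t : ℂ) + (u : ℂ))))
      (Set.Ioi 0) ∧
    (1 / Complex.Gamma (-α)) *
        ∫ u in Set.Ioi (0 : ℝ), (u : ℂ) ^ (-α - 1) * Complex.exp (k * ((t : ℂ) + (u : ℂ)))
      = (-k) ^ α * Complex.exp (k * (t : ℂ)) := by
  have ha : 0 < (-α).re := by simpa using hα
  have hfun : ∀ u : ℝ, (u : ℂ) ^ (-α - 1) * Complex.exp (k * ((t : ℂ) + (u : ℂ)))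
      = Complex.exp (k * t) * ((u : ℂ) ^ (-α - 1) * Complex.exp (k * u)) := by
    intro u
    rw [mul_add, Complex.exp_add]
    ring
  constructor
  · simp_rw [hfun]
    exact (weyl_aux_integrable ha hk).const_mul _
  · have hint : ∫ u in Ioi (0:ℝ), (u : ℂ) ^ (-α - 1) * Complex.exp (k * ((t : ℂ) + (u : ℂ)))
        = Complex.exp (k * t) * ((-k) ^ α * Complex.Gamma (-α)) := by
      simp_rw [hfun]
      rw [integral_const_mul]
      congr 1
      have h := weyl_aux_key ha hk
      simpa [neg_neg] using h
    rw [hint]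
    have hΓ : Complex.Gamma (-α) ≠ 0 := by
      refine Complex.Gamma_ne_zero fun m => ?_
      intro h
      rw [h] at ha
      simp only [Complex.neg_re, Complex.natCast_re] at ha
      have h2 : (0:ℝ) ≤ (m:ℝ) := Nat.cast_nonneg m
      linarith
    field_simp
end

section
/- Let α ∈ ℂ with −1 < Re(α) < 0, let b > 0 be real, and let t ∈ ℝ. Then the functions R ↦ (1/Γ(−α)) ∫_0^R u^(−α−1) e^(−ib(t+u)) du tend, as R → ∞, to (ib)^α e^(−ibt), where (ib)^α is defined by the principal branch of the complex power. -/
open MeasureTheory Complex Set Filter intervalIntegral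

section aux
variable {s : ℂ}

lemma cont_integrand {z : ℂ} :
    ContinuousOn (fun u : ℝ => (u:ℂ) ^ (s-1) * Complex.exp (-(z * u))) (Ioi 0) := by
  intro x hx
  apply ContinuousAt.continuousWithinAt
  apply ContinuousAt.mul
  · exact (continuousAt_cpow_const (ofReal_mem_slitPlane.2 hx)).comp continuous_ofReal.continuousAt
  · exact Complex.continuous_exp.continuousAt.comp (by fun_prop)

lemma cont_integrand' {z : ℂ} :
    ContinuousOn (fun u : ℝ => -(u:ℂ) * ((u:ℂ) ^ (s-1) * Complex.exp (-(z * u)))) (Ioi 0) :=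
  (Complex.continuous_ofReal.continuousOn.neg).mul cont_integrand

lemma key_integrable (hs0 : 0 < s.re) {z : ℂ} (hz : 0 < z.re) :
    IntegrableOn (fun u : ℝ => (u:ℂ) ^ (s-1) * Complex.exp (-(z * u))) (Ioi 0) := by
  have hmaj : IntegrableOn (fun u : ℝ => u ^ (s.re - 1) * Real.exp (-z.re * u ^ (1:ℝ))) (Ioi 0) :=
    integrableOn_rpow_mul_exp_neg_mul_rpow (by linarith) one_pos hz
  refine (hmaj.mono' (cont_integrand.aestronglyMeasurable measurableSet_Ioi) ?_)
  filter_upwards [ae_restrict_mem measurableSet_Ioi] with u hu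
  rw [norm_mul]
  rw [Complex.norm_cpow_eq_rpow_re_of_pos hu,
    Complex.norm_exp]
  have : (s-1).re = s.re - 1 := by simp
  rw [this]
  gcongr
  · exact Real.rpow_nonneg hu.le _
  · rw [Real.rpow_one]; simp [mul_comm]

set_option maxHeartbeats 1000000 in
lemma key_hasDeriv (hs0 : 0 < s.re) {z₀ : ℂ} (hz : 0 < z₀.re) :
    HasDerivAt (fun z => ∫ u in Ioi (0:ℝ), (u:ℂ) ^ (s-1) * Complex.exp (-(z * u)))
      (∫ u in Ioi (0:ℝ), -(u:ℂ) * ((u:ℂ) ^ (s-1) * Complex.exp (-(z₀ * u)))) z₀ := by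
  have key := _root_.hasDerivAt_integral_of_dominated_loc_of_deriv_le (μ := volume.restrict (Ioi 0))
    (F := fun (z : ℂ) (u : ℝ) => (u:ℂ) ^ (s-1) * Complex.exp (-(z * u)))
    (F' := fun (z : ℂ) (u : ℝ) => -(u:ℂ) * ((u:ℂ) ^ (s-1) * Complex.exp (-(z * u))))
    (x₀ := z₀) (bound := fun u => u ^ s.re * Real.exp (-(z₀.re/2) * u))
    (s := Metric.ball z₀ (z₀.re/2)) (Metric.ball_mem_nhds _ (by positivity))
    (Filter.Eventually.of_forall fun z =>
      cont_integrand.aestronglyMeasurable measurableSet_Ioi)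
    ?hint
    (cont_integrand'.aestronglyMeasurable measurableSet_Ioi)
    ?hbound ?bint ?hdiff
  · exact key.2
  case hint => exact key_integrable hs0 hz
  case hbound =>
    filter_upwards [ae_restrict_mem measurableSet_Ioi] with u hu z hzb
    have hzre : z₀.re/2 ≤ z.re := by
      have h1 : |(z - z₀).re| ≤ ‖z - z₀‖ := Complex.abs_re_le_norm _
      rw [Metric.mem_ball, dist_eq_norm] at hzb
      have := abs_le.mp (h1.trans hzb.le) |>.1
      simp only [Complex.sub_re] at this
      linarith
    rw [norm_mul, norm_mul, 
      Complex.norm_cpow_eq_rpow_re_of_pos hu, Complex.norm_exp, norm_neg, Complex.norm_real,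
      Real.norm_eq_abs, abs_of_pos (show (0:ℝ) < u from hu), ← mul_assoc]
    have h2 : u * u ^ ((s-1).re) = u ^ s.re := by
      simp only [Complex.sub_re, Complex.one_re]
      nth_rewrite 1 [← Real.rpow_one u]
      rw [← Real.rpow_add hu]
      ring_nf
    rw [h2]
    gcongr
    · exact Real.rpow_nonneg hu.le _
    · simp only [Complex.neg_re, Complex.mul_re, Complex.ofReal_re, Complex.ofReal_im,
        mul_zero, sub_zero]
      have hu' : (0:ℝ) < u := hu
      nlinarith [mul_le_mul_of_nonneg_right hzre hu'.le]
  case bint =>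
    have := integrableOn_rpow_mul_exp_neg_mul_rpow (p := 1) (s := s.re) (b := z₀.re/2)
      (by linarith) one_pos (by positivity)
    simpa [Real.rpow_one, IntegrableOn] using this
  case hdiff =>
    filter_upwards [ae_restrict_mem measurableSet_Ioi] with u hu z hzb
    have h1 : HasDerivAt (fun z : ℂ => -(z * u)) (-(u:ℂ)) z := by
      simpa [Pi.neg_def] using ((hasDerivAt_id z).mul_const (u:ℂ)).neg
    have h2 := (h1.cexp).const_mul ((u:ℂ) ^ (s-1))
    exact h2.congr_deriv (by ring)

lemma gamma_identity (hs0 : 0 < s.re) {z : ℂ} (hz : 0 < z.re) :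
    ∫ u in Ioi (0:ℝ), (u:ℂ) ^ (s-1) * Complex.exp (-(z * u))
      = Complex.Gamma s * z ^ (-s) := by
  have hU : IsOpen {w : ℂ | 0 < w.re} := by
    simpa using isOpen_lt continuous_const Complex.continuous_re
  have hsub : {w : ℂ | 0 < w.re} ⊆ Complex.slitPlane := fun w hw => Or.inl hw
  have h1 : AnalyticOnNhd ℂ
      (fun z => ∫ u in Ioi (0:ℝ), (u:ℂ) ^ (s-1) * Complex.exp (-(z * u)))
      {w : ℂ | 0 < w.re} :=
    DifferentiableOn.analyticOnNhd
      (fun w hw => ((key_hasDeriv hs0 hw).differentiableAt).differentiableWithinAt) hU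
  have h2 : AnalyticOnNhd ℂ (fun z : ℂ => Complex.Gamma s * z ^ (-s)) {w : ℂ | 0 < w.re} :=
    DifferentiableOn.analyticOnNhd
      (fun w hw => (((differentiableAt_id.cpow (differentiableAt_const _)
        (hsub hw))).const_mul _).differentiableWithinAt) hU
  have h3 : IsPreconnected {w : ℂ | 0 < w.re} := (convex_halfSpace_re_gt 0).isPreconnected
  have h4 : (1 : ℂ) ∈ {w : ℂ | 0 < w.re} := by simp
  have heqreal : ∀ r : ℝ, 0 < r →
      (∫ u in Ioi (0:ℝ), (u:ℂ) ^ (s-1) * Complex.exp (-((r:ℂ) * u)))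
        = Complex.Gamma s * (r:ℂ) ^ (-s) := by
    intro r hr
    rw [Complex.integral_cpow_mul_exp_neg_mul_Ioi hs0 hr, mul_comm]
    congr 1
    rw [Complex.cpow_neg, one_div, Complex.inv_cpow]
    rw [Complex.arg_ofReal_of_nonneg hr.le]
    exact Real.pi_ne_zero.symm
  have hfreq : ∃ᶠ w in nhdsWithin (1:ℂ) {(1:ℂ)}ᶜ,
      (∫ u in Ioi (0:ℝ), (u:ℂ) ^ (s-1) * Complex.exp (-(w * u)))
        = Complex.Gamma s * w ^ (-s) := by
    have htend : Tendsto (fun n : ℕ => ((1 + ((n:ℝ)+1)⁻¹ : ℝ) : ℂ)) atTop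
        (nhdsWithin (1:ℂ) {(1:ℂ)}ᶜ) := by
      apply tendsto_nhdsWithin_of_tendsto_nhds_of_eventually_within
      · have : Tendsto (fun n : ℕ => (1 + ((n:ℝ)+1)⁻¹ : ℝ)) atTop (nhds 1) := by
          simpa using tendsto_const_nhds.add ((tendsto_one_div_add_atTop_nhds_zero_nat (𝕜 := ℝ)).comp
            (tendsto_id)) |>.congr (fun n => rfl)
        have h5 := (Complex.continuous_ofReal.tendsto 1).comp this
        simpa [Function.comp_def] using h5
      · filter_upwards with n
        simp only [mem_compl_iff, mem_singleton_iff]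
        intro h
        have : (1 + ((n:ℝ)+1)⁻¹ : ℝ) = 1 := by exact_mod_cast h
        have : ((n:ℝ)+1)⁻¹ > 0 := by positivity
        linarith
    exact htend.frequently (Frequently.of_forall fun n =>
      heqreal _ (by positivity))
  exact h1.eqOn_of_preconnected_of_frequently_eq h2 h3 h4 hfreq hz

lemma tail_bound (hs1 : s.re < 1) {b : ℝ} (hb : 0 < b) {z : ℂ}
    (hzre : 0 ≤ z.re) (hzb : b ≤ ‖z‖) {R M : ℝ} (hR : 1 ≤ R) (hM : R ≤ M) :
    ‖∫ x in R..M, (x:ℂ) ^ (s-1) * Complex.exp (-(z * x))‖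
      ≤ ((2 + ‖s-1‖ / (1 - s.re)) / b) * R ^ (s.re - 1) := by
  have hz0 : z ≠ 0 := by
    intro h; rw [h] at hzb; simp at hzb; linarith
  have hR0 : (0:ℝ) < R := by linarith
  have hIcc : ∀ x ∈ Set.uIcc R M, 0 < x := by
    intro x hx
    rw [uIcc_of_le hM] at hx
    linarith [hx.1]
  have hu : ∀ x ∈ Set.uIcc R M, HasDerivAt (fun x : ℝ => (x:ℂ) ^ (s-1))
      ((s-1) * (x:ℂ) ^ (s-2)) x := by
    intro x hx
    have h2 := ((Complex.hasStrictDerivAt_cpow_const (c := s-1)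
      (ofReal_mem_slitPlane.2 (hIcc x hx))).hasDerivAt).comp_ofReal
    have h3 : s - 1 - 1 = s - 2 := by ring
    simpa [h3] using h2
  have hv : ∀ x ∈ Set.uIcc R M, HasDerivAt (fun x : ℝ => -(1/z) * Complex.exp (-(z * x)))
      (Complex.exp (-(z * x))) x := by
    intro x hx
    have h2 : HasDerivAt (fun w : ℂ => -(z * w)) (-z) (x:ℂ) := by
      simpa [Pi.neg_def] using ((hasDerivAt_id (x:ℂ)).const_mul z).neg
    have h3 := ((h2.cexp).const_mul (-(1/z))).comp_ofReal
    convert h3 using 1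
    field_simp
  have hu' : IntervalIntegrable (fun x : ℝ => (s-1) * (x:ℂ) ^ (s-2)) volume R M := by
    apply ContinuousOn.intervalIntegrable
    intro x hx
    exact (continuousAt_const.mul ((continuousAt_cpow_const
      (ofReal_mem_slitPlane.2 (hIcc x hx))).comp
        continuous_ofReal.continuousAt)).continuousWithinAt
  have hv' : IntervalIntegrable (fun x : ℝ => Complex.exp (-(z * x))) volume R M := by
    apply Continuous.intervalIntegrable
    fun_prop
  have ibp := integral_mul_deriv_eq_deriv_mul hu hv hu' hv'
  rw [ibp]
  have habs_z : ‖-(1/z)‖ ≤ 1/b := by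
    rw [norm_neg, norm_div, norm_one]
    exact one_div_le_one_div_of_le hb hzb
  have hexp_le : ∀ x : ℝ, 0 ≤ x → ‖Complex.exp (-(z * x))‖ ≤ 1 := by
    intro x hx
    rw [Complex.norm_exp]
    apply Real.exp_le_one_iff.2
    simp only [Complex.neg_re, Complex.mul_re, Complex.ofReal_re, Complex.ofReal_im, mul_zero,
      sub_zero]
    nlinarith
  have hcpow_norm : ∀ x : ℝ, 0 < x → ‖(x:ℂ) ^ (s-1)‖ = x ^ (s.re - 1) := by
    intro x hx
    rw [Complex.norm_cpow_eq_rpow_re_of_pos hx]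
    norm_num
  have hterm : ∀ x : ℝ, R ≤ x → ‖(x:ℂ) ^ (s-1) * (-(1/z) * Complex.exp (-(z * x)))‖
      ≤ R ^ (s.re - 1) / b := by
    intro x hx
    have hx0 : 0 < x := by linarith
    rw [norm_mul, norm_mul, hcpow_norm x hx0]
    have e1 : x ^ (s.re-1) ≤ R ^ (s.re-1) :=
      Real.rpow_le_rpow_of_nonpos hR0 hx (by linarith)
    have e2 : ‖-(1/z)‖ * ‖Complex.exp (-(z * x))‖ ≤ (1/b) * 1 :=
      mul_le_mul habs_z (hexp_le x hx0.le) (norm_nonneg _) (by positivity)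
    calc x ^ (s.re-1) * (‖-(1/z)‖ * ‖Complex.exp (-(z * x))‖)
        ≤ R ^ (s.re-1) * ((1/b) * 1) :=
          mul_le_mul e1 e2 (by positivity) (Real.rpow_nonneg hR0.le _)
      _ = R ^ (s.re-1) / b := by ring
  have hintpiece : ‖∫ x in R..M, ((s-1) * (x:ℂ) ^ (s-2)) * (-(1/z) * Complex.exp (-(z * x)))‖
      ≤ (‖s-1‖ / b) * (R ^ (s.re-1) / (1 - s.re)) := by
    have hbound : ∀ᵐ (t : ℝ) ∂(volume.restrict (Set.uIoc R M)),
        ‖((s-1) * (t:ℂ) ^ (s-2)) * (-(1/z) * Complex.exp (-(z * t)))‖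
          ≤ (‖s-1‖ / b) * t ^ (s.re - 2) := by
      filter_upwards [ae_restrict_mem measurableSet_uIoc] with t ht
      have ht0 : 0 < t := by
        rw [uIoc_of_le hM] at ht
        linarith [ht.1]
      rw [norm_mul, norm_mul, norm_mul]
      have h1 : ‖(t:ℂ) ^ (s-2)‖ = t ^ (s.re - 2) := by
        rw [Complex.norm_cpow_eq_rpow_re_of_pos ht0]
        norm_num
      rw [h1]
      have e2 : ‖-(1/z)‖ * ‖Complex.exp (-(z * t))‖ ≤ (1/b) * 1 :=
        mul_le_mul habs_z (hexp_le t ht0.le) (norm_nonneg _) (by positivity)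
      calc ‖s-1‖ * t ^ (s.re-2) * (‖-(1/z)‖ * ‖Complex.exp (-(z*t))‖)
          ≤ ‖s-1‖ * t ^ (s.re-2) * ((1/b) * 1) := by
            apply mul_le_mul_of_nonneg_left e2
            positivity
        _ = (‖s-1‖ / b) * t ^ (s.re-2) := by
            ring
    have hgint : IntervalIntegrable (fun t : ℝ => (‖s-1‖ / b) * t ^ (s.re-2))
        volume R M := by
      apply ContinuousOn.intervalIntegrable
      intro x hx
      exact (continuousAt_const.mul
        (Real.continuousAt_rpow_const x _ (Or.inl (hIcc x hx).ne'))).continuousWithinAt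
    refine (intervalIntegral.norm_integral_le_abs_of_norm_le hbound hgint).trans ?_
    have hne : s.re - 2 ≠ -1 := by intro h; apply absurd hs1; intro _; linarith
    rw [intervalIntegral.integral_const_mul, integral_rpow (Or.inr ⟨hne, fun h => (hIcc 0 h).false⟩)]
    have ha : s.re - 2 + 1 = s.re - 1 := by ring
    rw [ha, abs_mul, _root_.abs_of_nonneg (by positivity : (0:ℝ) ≤ ‖s-1‖ / b)]
    apply mul_le_mul_of_nonneg_left ?_ (by positivity)
    have hMR : M ^ (s.re - 1) ≤ R ^ (s.re - 1) :=
      Real.rpow_le_rpow_of_nonpos hR0 hM (by linarith)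
    have hMpos : (0:ℝ) ≤ M ^ (s.re - 1) := Real.rpow_nonneg (by linarith) _
    rw [abs_div, abs_of_nonpos (by linarith : M ^ (s.re-1) - R ^ (s.re-1) ≤ 0),
      abs_of_nonpos (by linarith : s.re - 1 ≤ 0), neg_sub, neg_sub]
    exact div_le_div_of_nonneg_right (by linarith) (by linarith) |>.trans le_rfl
  have hA := hterm M (by linarith : R ≤ M)
  have hB := hterm R le_rfl
  refine ((norm_sub_le _ _).trans (add_le_add ((norm_sub_le _ _).trans
    (add_le_add hA hB)) hintpiece)).trans (le_of_eq ?_)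
  have h1σ : (1:ℝ) - s.re ≠ 0 := by intro h; linarith
  field_simp
  ring

lemma core_limit (hs0 : 0 < s.re) (hs1 : s.re < 1) {b : ℝ} (hb : 0 < b) :
    Tendsto (fun R : ℝ => ∫ u in (0:ℝ)..R, (u:ℂ) ^ (s-1) * Complex.exp (-(Complex.I * b * u)))
      atTop (nhds (Complex.Gamma s * (Complex.I * b) ^ (-s))) := by
  set L := Complex.Gamma s * (Complex.I * b) ^ (-s) with hL
  set C := (2 + ‖s-1‖ / (1 - s.re)) / b with hC
  have main : ∀ R : ℝ, 1 ≤ R →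
      ‖(∫ u in (0:ℝ)..R, (u:ℂ) ^ (s-1) * Complex.exp (-(Complex.I * b * u))) - L‖
        ≤ C * R ^ (s.re - 1) := by
    intro R hR
    have hR0 : (0:ℝ) ≤ R := by linarith
    set ε : ℕ → ℝ := fun n => ((n:ℝ)+1)⁻¹ with hε
    set z : ℕ → ℂ := fun n => (ε n : ℂ) + Complex.I * b with hzdef
    have hεpos : ∀ n, 0 < ε n := fun n => by positivity
    have hzre : ∀ n, (z n).re = ε n := by intro n; simp [hzdef]
    have hzim : ∀ n, (z n).im = b := by intro n; simp [hzdef]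
    have hzrepos : ∀ n, 0 < (z n).re := fun n => by rw [hzre]; exact hεpos n
    have hzabs : ∀ n, b ≤ ‖z n‖ := by
      intro n
      calc b = |(z n).im| := by rw [hzim n]; exact (abs_of_pos hb).symm
        _ ≤ ‖z n‖ := Complex.abs_im_le_norm _
    have hzlim : Tendsto z atTop (nhds (Complex.I * b)) := by
      have h0 : Tendsto ε atTop (nhds 0) := by
        simpa [hε, one_div] using tendsto_one_div_add_atTop_nhds_zero_nat (𝕜 := ℝ)
      have h1 : Tendsto (fun n => ((ε n : ℝ) : ℂ)) atTop (nhds 0) := by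
        have := (Complex.continuous_ofReal.tendsto 0).comp h0
        simpa [Function.comp_def] using this
      simpa using h1.add (tendsto_const_nhds (x := Complex.I * (b:ℂ)))
    -- split identity
    have hid : ∀ n, (∫ u in (0:ℝ)..R, (u:ℂ) ^ (s-1) * Complex.exp (-(z n * u)))
        = Complex.Gamma s * (z n) ^ (-s)
          - ∫ u in Ioi R, (u:ℂ) ^ (s-1) * Complex.exp (-(z n * u)) := by
      intro n
      have hint := key_integrable hs0 (hzrepos n)
      have hsplit := setIntegral_union (f := fun u : ℝ => (u:ℂ) ^ (s-1) *
          Complex.exp (-(z n * u))) (μ := volume)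
        (Set.Ioc_disjoint_Ioi le_rfl) measurableSet_Ioi
        (hint.mono_set Set.Ioc_subset_Ioi_self)
        (hint.mono_set (Set.Ioi_subset_Ioi hR0))
      rw [Set.Ioc_union_Ioi_eq_Ioi hR0] at hsplit
      rw [gamma_identity hs0 (hzrepos n)] at hsplit
      rw [intervalIntegral.integral_of_le hR0]
      rw [hsplit]
      ring
    -- tail bound
    have htail : ∀ n, ‖∫ u in Ioi R, (u:ℂ) ^ (s-1) * Complex.exp (-(z n * u))‖
        ≤ C * R ^ (s.re - 1) := by
      intro n
      have hint : IntegrableOn (fun u : ℝ => (u:ℂ) ^ (s-1) * Complex.exp (-(z n * u)))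
          (Ioi R) volume :=
        (key_integrable hs0 (hzrepos n)).mono_set (Set.Ioi_subset_Ioi hR0)
      have hlim := (intervalIntegral_tendsto_integral_Ioi R hint tendsto_id).norm
      refine le_of_tendsto hlim ?_
      filter_upwards [eventually_ge_atTop R] with M hM
      exact tail_bound hs1 hb (hzrepos n).le (hzabs n) hR hM
    -- convergence of interval integrals
    have hconv1 : Tendsto (fun n => ∫ u in (0:ℝ)..R, (u:ℂ) ^ (s-1) *
          Complex.exp (-(z n * u))) atTop
        (nhds (∫ u in (0:ℝ)..R, (u:ℂ) ^ (s-1) * Complex.exp (-(Complex.I * b * u)))) := by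
      apply intervalIntegral.tendsto_integral_filter_of_dominated_convergence
        (bound := fun u => u ^ (s.re - 1))
      · refine Eventually.of_forall fun n => ?_
        rw [uIoc_of_le hR0]
        exact (cont_integrand.mono Set.Ioc_subset_Ioi_self).aestronglyMeasurable
          measurableSet_Ioc
      · refine Eventually.of_forall fun n => Eventually.of_forall fun x hx => ?_
        rw [uIoc_of_le hR0] at hx
        have hx0 : 0 < x := hx.1
        rw [norm_mul, 
          Complex.norm_cpow_eq_rpow_re_of_pos hx0, Complex.norm_exp]
        have h1 : (s-1).re = s.re - 1 := by simp
        rw [h1]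
        have h2 : Real.exp ((-(z n * x)).re) ≤ 1 := by
          apply Real.exp_le_one_iff.2
          simp only [Complex.neg_re, Complex.mul_re, Complex.ofReal_re, Complex.ofReal_im,
            mul_zero, sub_zero]
          nlinarith [hzrepos n, hx0]
        calc x ^ (s.re - 1) * Real.exp ((-(z n * x)).re)
            ≤ x ^ (s.re - 1) * 1 :=
              mul_le_mul_of_nonneg_left h2 (Real.rpow_nonneg hx0.le _)
          _ = x ^ (s.re - 1) := by ring
      · exact intervalIntegral.intervalIntegrable_rpow' (by linarith)
      · refine Eventually.of_forall fun x hx => ?_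
        have harg : Tendsto (fun n => -(z n * x)) atTop (nhds (-(Complex.I * b * x))) :=
          (hzlim.mul_const _).neg
        exact tendsto_const_nhds.mul
          ((Complex.continuous_exp.tendsto _).comp harg)
    -- convergence of the Gamma terms
    have hconv2 : Tendsto (fun n => Complex.Gamma s * (z n) ^ (-s)) atTop (nhds L) := by
      rw [hL]
      apply Tendsto.const_mul
      have hmem : (Complex.I * (b:ℂ)) ∈ Complex.slitPlane := by
        rw [Complex.mem_slitPlane_iff]
        right
        simp [hb.ne']
      have hcont : ContinuousAt (fun w : ℂ => w ^ (-s)) (Complex.I * b) :=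
        continuousAt_cpow_const hmem
      exact hcont.tendsto.comp hzlim
    have hdiff : Tendsto (fun n =>
        (∫ u in (0:ℝ)..R, (u:ℂ) ^ (s-1) * Complex.exp (-(z n * u)))
          - Complex.Gamma s * (z n) ^ (-s)) atTop
        (nhds ((∫ u in (0:ℝ)..R, (u:ℂ) ^ (s-1) * Complex.exp (-(Complex.I * b * u))) - L)) :=
      hconv1.sub hconv2
    refine le_of_tendsto hdiff.norm (Eventually.of_forall fun n => ?_)
    rw [hid n]
    rw [show Complex.Gamma s * (z n) ^ (-s)
        - (∫ u in Ioi R, (u:ℂ) ^ (s-1) * Complex.exp (-(z n * u)))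
        - Complex.Gamma s * (z n) ^ (-s)
        = -(∫ u in Ioi R, (u:ℂ) ^ (s-1) * Complex.exp (-(z n * u))) by ring, norm_neg]
    exact htail n
  -- squeeze
  rw [tendsto_iff_norm_sub_tendsto_zero]
  apply squeeze_zero' (Eventually.of_forall fun R => norm_nonneg _)
    (by filter_upwards [eventually_ge_atTop (1:ℝ)] with R hR; exact main R hR)
  have h1 : Tendsto (fun R : ℝ => R ^ (s.re - 1)) atTop (nhds 0) := by
    rw [show s.re - 1 = -(1 - s.re) by ring]
    exact tendsto_rpow_neg_atTop (by linarith)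
  simpa using h1.const_mul C
end aux

theorem weyl_fracderiv_exp_boundary (α : ℂ) (hα1 : -1 < α.re) (hα2 : α.re < 0)
    (b : ℝ) (hb : 0 < b) (t : ℝ) :
    Filter.Tendsto
      (fun R : ℝ => (1 / Complex.Gamma (-α)) *
        ∫ u in (0 : ℝ)..R,
          (u : ℂ) ^ (-α - 1) * Complex.exp (-(Complex.I * (b : ℂ)) * ((t : ℂ) + (u : ℂ))))
      Filter.atTop
      (nhds ((Complex.I * (b : ℂ)) ^ α * Complex.exp (-(Complex.I * (b : ℂ)) * (t : ℂ)))) := by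
  have hs0 : 0 < (-α).re := by simp; linarith
  have hs1 : (-α).re < 1 := by simp; linarith
  have hΓ : Complex.Gamma (-α) ≠ 0 := Complex.Gamma_ne_zero_of_re_pos hs0
  have hcore := core_limit hs0 hs1 hb
  have h1 := (hcore.mul_const (Complex.exp (-(Complex.I * (b:ℂ)) * (t:ℂ)))).const_mul
    (1 / Complex.Gamma (-α))
  have hfun : ∀ R : ℝ, (1 / Complex.Gamma (-α)) *
        ((∫ u in (0:ℝ)..R, (u:ℂ) ^ (-α - 1) * Complex.exp (-(Complex.I * b * u)))
          * Complex.exp (-(Complex.I * (b:ℂ)) * (t:ℂ)))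
      = (1 / Complex.Gamma (-α)) *
        ∫ u in (0:ℝ)..R, (u:ℂ) ^ (-α - 1) *
          Complex.exp (-(Complex.I * (b:ℂ)) * ((t:ℂ) + (u:ℂ))) := by
    intro R
    congr 1
    rw [← intervalIntegral.integral_mul_const]
    apply intervalIntegral.integral_congr
    intro u hu
    simp only
    rw [show -(Complex.I * (b:ℂ)) * ((t:ℂ) + (u:ℂ))
        = -(Complex.I * (b:ℂ) * (u:ℂ)) + -(Complex.I * (b:ℂ)) * (t:ℂ) by ring,
      Complex.exp_add]
    ring
  have h2 : Tendsto (fun R : ℝ => (1 / Complex.Gamma (-α)) *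
        ∫ u in (0:ℝ)..R, (u:ℂ) ^ (-α - 1) *
          Complex.exp (-(Complex.I * (b:ℂ)) * ((t:ℂ) + (u:ℂ)))) atTop
      (nhds ((1 / Complex.Gamma (-α)) * (Complex.Gamma (-α) * (Complex.I * b) ^ (-(-α))
        * Complex.exp (-(Complex.I * (b:ℂ)) * (t:ℂ))))) := by
    refine Tendsto.congr (fun R => hfun R) ?_
    convert h1 using 2
  convert h2 using 2
  rw [neg_neg]
  field_simp
end

section
/- Let t, x, s ∈ ℂ with Im(t) > 0, Re(x) > 0, Im(x) < 0, and Re(s) > 0. Then the function u ↦ u^(s−1) e^(2πi(t−u)x) / (1 − e^(2πi(t−u))) is integrable on (0, ∞), and L(t,x,s) = (2π)^s e^(iπ(s/2 − 2tx)) · (1/Γ(s)) ∫_0^∞ u^(s−1) e^(2πi(t−u)x) / (1 − e^(2πi(t−u))) du, where (2π)^s is defined by the principal branch. -/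
open MeasureTheory

/-- The Lerch zeta function, defined by its (absolutely convergent, for `Im t > 0` and
`Re x > 0`) series, with all complex powers taken with the principal branch. -/
noncomputable def lerchZeta (t x s : ℂ) : ℂ :=
  ∑' m : ℕ, ((m : ℂ) + x) ^ (-s) * Complex.exp (2 * Real.pi * Complex.I * t * m)

section LerchAux

open MeasureTheory Set Complex Filter
open scoped Real Topology

private lemma myContOn (w a : ℂ) :
    ContinuousOn (fun u : ℝ => (u:ℂ) ^ w * Complex.exp (-(a * u))) (Set.Ioi 0) := by
  apply ContinuousOn.mul
  · intro u hu
    exact (continuousAt_ofReal_cpow_const u w (Or.inr (ne_of_gt hu))).continuousWithinAt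
  · exact (Complex.continuous_exp.comp
      ((continuous_const.mul Complex.continuous_ofReal).neg)).continuousOn

private lemma myNorm {u : ℝ} (hu : 0 < u) (w a : ℂ) :
    ‖(u:ℂ) ^ w * Complex.exp (-(a * u))‖ = u ^ w.re * Real.exp (-a.re * u) := by
  rw [norm_mul, Complex.norm_exp,
    Complex.norm_cpow_eq_rpow_re_of_pos hu]
  congr 1
  simp [Complex.neg_re, Complex.mul_re]
  try ring

private lemma myIntbound {c b : ℝ} (hc : -1 < c) (hb : 0 < b) :
    IntegrableOn (fun u : ℝ => u ^ c * Real.exp (-b * u)) (Set.Ioi 0) := by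
  have := integrableOn_rpow_mul_exp_neg_mul_rpow (p := 1) hc one_pos hb
  simpa using this

private lemma myIntegrable {s : ℂ} (hs : 0 < s.re) {a : ℂ} (ha : 0 < a.re) :
    IntegrableOn (fun u : ℝ => (u:ℂ) ^ (s-1) * Complex.exp (-(a * u))) (Set.Ioi 0) := by
  refine (myIntbound (c := s.re - 1) (by linarith) ha).mono'
    ((myContOn _ _).aestronglyMeasurable measurableSet_Ioi) ?_
  filter_upwards [ae_restrict_mem measurableSet_Ioi] with u hu
  rw [myNorm hu]
  simp


private lemma myDeriv {s : ℂ} (hs : 0 < s.re) {a : ℂ} (ha : 0 < a.re) :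
    HasDerivAt (fun z : ℂ => ∫ u in Set.Ioi (0:ℝ), (u:ℂ) ^ (s-1) * Complex.exp (-(z * u)))
      (∫ u in Set.Ioi (0:ℝ), (u:ℂ) ^ (s-1) * (Complex.exp (-(a * u)) * -(u:ℂ))) a := by
  set ε := a.re / 2 with hε
  have hεpos : 0 < ε := by positivity
  have hre : ∀ z ∈ Metric.ball a ε, ε ≤ z.re := by
    intro z hz
    rw [Metric.mem_ball, Complex.dist_eq] at hz
    have h1 : |(z - a).re| ≤ ‖z - a‖ := Complex.abs_re_le_norm _
    simp only [Complex.sub_re] at h1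
    have := abs_le.mp (h1.trans hz.le)
    simp only [hε]
    linarith [this.1]
  have main := hasDerivAt_integral_of_dominated_loc_of_deriv_le (𝕜 := ℂ)
    (μ := volume.restrict (Set.Ioi (0:ℝ)))
    (F := fun z (u : ℝ) => (u:ℂ) ^ (s-1) * Complex.exp (-(z * u)))
    (F' := fun z (u : ℝ) => (u:ℂ) ^ (s-1) * (Complex.exp (-(z * u)) * -(u:ℂ)))
    (x₀ := a) (bound := fun u : ℝ => u ^ s.re * Real.exp (-ε * u)) (Metric.ball_mem_nhds a hεpos)
    (Eventually.of_forall fun z =>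
      (myContOn (s-1) z).aestronglyMeasurable measurableSet_Ioi)
    (myIntegrable hs ha)
    ?_ ?_ ?_ ?_
  · exact main.2
  · -- measurability of F' a
    apply ContinuousOn.aestronglyMeasurable _ measurableSet_Ioi
    exact (myContOn (s-1) a).mul
      ((continuous_ofReal.neg).continuousOn : ContinuousOn (fun u : ℝ => -(u:ℂ)) _)
      |>.congr (fun u _ => by simp only [Pi.neg_apply, Pi.mul_apply]; ring)
  · -- bound
    filter_upwards [ae_restrict_mem measurableSet_Ioi] with u hu
    intro z hz
    have h1 : ‖(u:ℂ) ^ (s-1) * (Complex.exp (-(z * u)) * -(u:ℂ))‖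
        = (u ^ (s.re - 1) * Real.exp (-z.re * u)) * u := by
      rw [show (u:ℂ) ^ (s-1) * (Complex.exp (-(z * u)) * -(u:ℂ))
          = ((u:ℂ) ^ (s-1) * Complex.exp (-(z * u))) * (-(u:ℂ)) by ring, norm_mul,
        myNorm hu, norm_neg, Complex.norm_real, Real.norm_of_nonneg hu.le]
      simp [Complex.sub_re]
    rw [h1]
    have hpow : u ^ (s.re - 1) * u = u ^ s.re := by
      rw [← Real.rpow_add_one (ne_of_gt hu) (s.re - 1)]
      ring_nf
    have h2 : (u ^ (s.re - 1) * Real.exp (-z.re * u)) * u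
        = u ^ s.re * Real.exp (-z.re * u) := by
      rw [← hpow]; ring
    rw [h2]
    have : Real.exp (-z.re * u) ≤ Real.exp (-ε * u) := by
      apply Real.exp_le_exp.mpr
      nlinarith [hre z hz, (Set.mem_Ioi.mp hu).le]
    exact mul_le_mul_of_nonneg_left this (Real.rpow_nonneg hu.le _)
  · -- bound integrable
    exact myIntbound (by linarith) hεpos
  · -- differentiability
    filter_upwards [ae_restrict_mem measurableSet_Ioi] with u _
    intro z _
    have : HasDerivAt (fun z : ℂ => Complex.exp (-(z * u)))
        (Complex.exp (-(z * u)) * -(u:ℂ)) z := by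
      have h0 : HasDerivAt (fun z : ℂ => -(z * (u:ℂ))) (-(u:ℂ)) z := by
        have h := (((hasDerivAt_id z).mul_const (u:ℂ)).neg : HasDerivAt (fun y : ℂ => -(id y * (u:ℂ))) (-(1 * (u:ℂ))) z); rw [one_mul] at h; exact h
      exact h0.cexp
    exact this.const_mul _

private lemma myIntegral {s : ℂ} (hs : 0 < s.re) {a : ℂ} (ha : 0 < a.re) :
    ∫ u in Set.Ioi (0:ℝ), (u:ℂ) ^ (s-1) * Complex.exp (-(a * u))
      = Complex.Gamma s * a ^ (-s) := by
  set U : Set ℂ := {z : ℂ | 0 < z.re} with hU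
  have hUo : IsOpen U := isOpen_lt continuous_const Complex.continuous_re
  set f : ℂ → ℂ := fun z => ∫ u in Set.Ioi (0:ℝ), (u:ℂ) ^ (s-1) * Complex.exp (-(z * u)) with hf
  set g : ℂ → ℂ := fun z => Complex.Gamma s * z ^ (-s) with hg
  have hfa : AnalyticOnNhd ℂ f U := by
    refine DifferentiableOn.analyticOnNhd (fun z hz => ?_) hUo
    exact (myDeriv hs hz).differentiableAt.differentiableWithinAt
  have hga : AnalyticOnNhd ℂ g U := by
    refine DifferentiableOn.analyticOnNhd (fun z hz => ?_) hUo
    refine DifferentiableAt.differentiableWithinAt ?_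
    refine ((differentiableAt_id.cpow (differentiableAt_const (-s)) ?_).const_mul _)
    exact Complex.mem_slitPlane_iff.2 (Or.inl hz)
  have hUc : IsPreconnected U := (convex_halfSpace_re_gt 0).isPreconnected
  have h1U : (1:ℂ) ∈ U := by simp [hU]
  have haU : a ∈ U := ha
  have hreal : ∀ r : ℝ, 0 < r → f r = g r := by
    intro r hr
    have h1 := Complex.integral_cpow_mul_exp_neg_mul_Ioi hs hr
    have h2 : f r = ∫ (u : ℝ) in Set.Ioi 0, (u:ℂ) ^ (s - 1) * Complex.exp (-(↑r * ↑u)) := rfl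
    rw [h2]
    rw [h1]
    have hrne : (r:ℂ) ≠ 0 := Complex.ofReal_ne_zero.2 (ne_of_gt hr)
    show _ = Complex.Gamma s * (r:ℂ) ^ (-s)
    have : ((1:ℂ) / r) ^ s = (r:ℂ) ^ (-s) := by
      rw [one_div, Complex.inv_cpow _ _ (by
        rw [Complex.arg_ofReal_of_nonneg hr.le]; exact Real.pi_ne_zero.symm),
        ← Complex.cpow_neg]
    rw [this, mul_comm]
  have hfreq : ∃ᶠ z in 𝓝[≠] (1:ℂ), f z = g z := by
    have htend : Tendsto (fun n : ℕ => ((1 + ((n:ℝ)+1)⁻¹ : ℝ) : ℂ)) atTop (𝓝[≠] (1:ℂ)) := by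
      apply tendsto_nhdsWithin_of_tendsto_nhds_of_eventually_within
      · have h0 : Tendsto (fun n : ℕ => (1 + ((n:ℝ)+1)⁻¹ : ℝ)) atTop (𝓝 1) := by
          have h1 := tendsto_one_div_add_atTop_nhds_zero_nat (𝕜 := ℝ)
          have := (tendsto_const_nhds (x := (1:ℝ)) (f := atTop (α := ℕ))).add
            (by simpa [one_div] using h1)
          simpa using this
        have h2 := (Complex.continuous_ofReal.tendsto 1).comp h0
        simpa [Function.comp_def] using h2
      · filter_upwards with n
        simp only [Set.mem_compl_iff, Set.mem_singleton_iff]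
        intro h
        have : (1 + ((n:ℝ)+1)⁻¹ : ℝ) = 1 := by exact_mod_cast h
        have hpos : (0:ℝ) < ((n:ℝ)+1)⁻¹ := by positivity
        linarith
    refine Filter.Tendsto.frequently (p := fun z : ℂ => f z = g z) htend
      (Frequently.of_forall (fun n : ℕ => ?_))
    have hp : (0:ℝ) < 1 + ((n:ℝ)+1)⁻¹ := by positivity
    exact hreal _ hp
  exact (hfa.eqOn_of_preconnected_of_frequently_eq hga hUc h1U hfreq) haU

private lemma myCpow {z : ℂ} (hre : 0 < z.re) (him : z.im < 0) (s : ℂ) :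
    (2 * (Real.pi:ℂ) * Complex.I * z) ^ (-s)
      = (2 * (Real.pi:ℂ)) ^ (-s) * Complex.exp (-(Real.pi/2 * Complex.I * s)) * z ^ (-s) := by
  have hz : z ≠ 0 := by
    intro h; rw [h] at hre; simp at hre
  have hIz : Complex.I * z ≠ 0 := mul_ne_zero Complex.I_ne_zero hz
  have h2π : (0:ℝ) < 2 * Real.pi := by positivity
  have harg1 : |Complex.arg z| < Real.pi / 2 :=
    Complex.abs_arg_lt_pi_div_two_iff.2 (Or.inl hre)
  have harg2 : Complex.arg z < 0 := Complex.arg_neg_iff.2 him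
  have hlog2 : Complex.log (Complex.I * z) = Real.pi/2 * Complex.I + Complex.log z := by
    rw [Complex.log_mul Complex.I_ne_zero hz ?_, Complex.log_I]
    rw [Complex.arg_I]
    constructor
    · have := abs_lt.1 harg1
      linarith [Real.pi_pos]
    · have := abs_lt.1 harg1
      linarith [Real.pi_pos]
  have hfact : 2 * (Real.pi:ℂ) * Complex.I * z = ((2 * Real.pi : ℝ) : ℂ) * (Complex.I * z) := by
    push_cast; ring
  have hlog1 : Complex.log (2 * (Real.pi:ℂ) * Complex.I * z)
      = (Real.log (2 * Real.pi) : ℂ) + (Real.pi/2 * Complex.I + Complex.log z) := by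
    rw [hfact, Complex.log_ofReal_mul h2π hIz, hlog2]
  have hne : (2 * (Real.pi:ℂ) * Complex.I * z) ≠ 0 := by
    rw [hfact]
    exact mul_ne_zero (Complex.ofReal_ne_zero.2 (ne_of_gt h2π)) hIz
  have h2πne : (2 * (Real.pi:ℂ)) ≠ 0 := by
    simp [Real.pi_ne_zero]
  rw [Complex.cpow_def_of_ne_zero hne, Complex.cpow_def_of_ne_zero h2πne,
    Complex.cpow_def_of_ne_zero hz, hlog1]
  rw [show (2 * (Real.pi:ℂ)) = ((2 * Real.pi : ℝ) : ℂ) by push_cast; ring,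
    ← Complex.ofReal_log h2π.le]
  rw [← Complex.exp_add, ← Complex.exp_add]
  congr 1
  ring

end LerchAux

section LerchMain
open MeasureTheory Set Complex Filter
open scoped Real Topology

theorem lerch_eq_rl_fracint (t x s : ℂ) (ht : 0 < t.im) (hx : 0 < x.re)
    (hx' : x.im < 0) (hs : 0 < s.re) :
    IntegrableOn
      (fun u : ℝ => (u : ℂ) ^ (s - 1) *
        Complex.exp (2 * Real.pi * Complex.I * (t - u) * x) /
          (1 - Complex.exp (2 * Real.pi * Complex.I * (t - u))))
      (Set.Ioi 0) ∧
    lerchZeta t x s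
      = (2 * Real.pi : ℂ) ^ s * Complex.exp (Complex.I * Real.pi * (s / 2 - 2 * t * x)) *
        ((1 / Complex.Gamma s) *
          ∫ u in Set.Ioi (0 : ℝ),
            (u : ℂ) ^ (s - 1) * Complex.exp (2 * Real.pi * Complex.I * (t - u) * x) /
              (1 - Complex.exp (2 * Real.pi * Complex.I * (t - u)))) := by
  set c : ℂ := 2 * Real.pi * Complex.I with hc
  have hcre : ∀ z : ℂ, (c * z).re = -(2 * Real.pi * z.im) := by
    intro z
    simp [hc, Complex.mul_re, Complex.mul_im]
    try ring
  -- geometric ratio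
  set r : ℝ := Real.exp (-(2 * Real.pi * t.im)) with hrdef
  have hr1 : r < 1 := by
    rw [hrdef]
    apply Real.exp_lt_one_iff.2
    nlinarith [Real.pi_pos]
  have hr0 : 0 ≤ r := Real.exp_nonneg _
  have hqnorm : ∀ u : ℝ, ‖Complex.exp (c * (t - u))‖ = r := by
    intro u
    rw [Complex.norm_exp, hcre]
    simp [hrdef]
  have hden : ∀ u : ℝ, (1 : ℂ) - Complex.exp (c * (t - u)) ≠ 0 := by
    intro u
    rw [sub_ne_zero]
    intro h
    have := hqnorm u
    rw [← h] at this
    simp at this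
    rw [this] at hr1
    exact lt_irrefl _ hr1
  -- the series terms
  set F : ℕ → ℝ → ℂ := fun m u => (u:ℂ) ^ (s-1) * Complex.exp (c * (t - u) * (x + m)) with hF
  have hkey : ∀ u : ℝ, HasSum (fun m => F m u)
      ((u:ℂ) ^ (s-1) * Complex.exp (c * (t - u) * x) / (1 - Complex.exp (c * (t - u)))) := by
    intro u
    have hgeo := hasSum_geometric_of_norm_lt_one (ξ := Complex.exp (c * (t - u)))
      (by rw [hqnorm u]; exact hr1)
    have h2 := hgeo.mul_left ((u:ℂ) ^ (s-1) * Complex.exp (c * (t - u) * x))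
    rw [div_eq_mul_inv]
    have hfun : (fun m : ℕ => (u:ℂ) ^ (s-1) * Complex.exp (c * (t - u) * x)
        * Complex.exp (c * (t - u)) ^ m) = fun m => F m u := by
      funext m
      rw [← Complex.exp_nat_mul, mul_assoc, ← Complex.exp_add]
      rw [hF]
      congr 2
      ring
    rwa [hfun] at h2
  -- positivity of real parts
  have ham : ∀ m : ℕ, 0 < (c * (x + m)).re := by
    intro m
    rw [hcre]
    simp only [Complex.add_im, Complex.natCast_im, add_zero]
    nlinarith [Real.pi_pos]
  have hFrw : ∀ (m : ℕ) (u : ℝ), F m u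
      = Complex.exp (c * t * (x + m)) * ((u:ℂ) ^ (s-1) * Complex.exp (-(c * (x + m) * u))) := by
    intro m u
    simp only [hF]
    rw [show c * (t - u) * (x + m) = c * t * (x + m) + -(c * (x + m) * u) by ring,
      Complex.exp_add]
    ring
  have hFint : ∀ m : ℕ, IntegrableOn (F m) (Set.Ioi 0) := by
    intro m
    refine ((myIntegrable hs (ham m)).const_mul (Complex.exp (c * t * (x + m)))).congr ?_
    exact Eventually.of_forall fun u => (hFrw m u).symm
  have hFval : ∀ m : ℕ, ∫ u in Set.Ioi (0:ℝ), F m u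
      = Complex.exp (c * t * (x + m)) * (Complex.Gamma s * (c * (x + m)) ^ (-s)) := by
    intro m
    rw [setIntegral_congr_fun measurableSet_Ioi (fun u _ => hFrw m u),
      MeasureTheory.integral_const_mul, myIntegral hs (ham m)]
  set A : ℝ := -(2 * Real.pi * x.im) with hAdef
  have hA : 0 < A := by rw [hAdef]; nlinarith [Real.pi_pos]
  have hAre : ∀ m : ℕ, (c * (x + m)).re = A := by
    intro m
    rw [hcre]
    simp [hAdef]
  have hr2 : ‖Complex.exp (c * t)‖ = r := by
    rw [Complex.norm_exp, hcre]
  have hK : ∀ m : ℕ, ‖Complex.exp (c * t * (x + m))‖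
      = ‖Complex.exp (c * t * x)‖ * r ^ m := by
    intro m
    rw [show c * t * (x + m) = c * t * x + (m : ℂ) * (c * t) by ring, Complex.exp_add,
      norm_mul, Complex.exp_nat_mul, norm_pow, hr2]
  have hnormF : ∀ (m : ℕ), ∀ u ∈ Set.Ioi (0:ℝ), ‖F m u‖
      = (‖Complex.exp (c * t * x)‖ * r ^ m) * (u ^ (s.re - 1) * Real.exp (-A * u)) := by
    intro m u hu
    rw [hFrw m u, norm_mul, myNorm hu (s-1) (c * (x + m)), hK m, hAre m]
    simp [Complex.sub_re]
  have hsumnormu : ∀ u ∈ Set.Ioi (0:ℝ), Summable fun m : ℕ => ‖F m u‖ := by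
    intro u hu
    apply Summable.congr (f := fun m : ℕ =>
      ((‖Complex.exp (c * t * x)‖ * (u ^ (s.re - 1) * Real.exp (-A * u))) * r ^ m))
    · exact (summable_geometric_of_lt_one hr0 hr1).mul_left _
    · intro m
      rw [hnormF m u hu]
      ring
  have hnormint : ∀ m : ℕ, ∫ u in Set.Ioi (0:ℝ), ‖F m u‖
      = (‖Complex.exp (c * t * x)‖ * r ^ m)
        * ∫ u in Set.Ioi (0:ℝ), u ^ (s.re - 1) * Real.exp (-A * u) := by
    intro m
    rw [setIntegral_congr_fun measurableSet_Ioi (hnormF m), MeasureTheory.integral_const_mul]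
  have hsummable : Summable (fun m : ℕ => ∫ u in Set.Ioi (0:ℝ), ‖F m u‖) := by
    apply Summable.congr (f := fun m : ℕ =>
      ((‖Complex.exp (c * t * x)‖ * ∫ u in Set.Ioi (0:ℝ), u ^ (s.re - 1) * Real.exp (-A * u))
        * r ^ m))
    · exact (summable_geometric_of_lt_one hr0 hr1).mul_left _
    · intro m
      rw [hnormint m]
      ring
  have hintsum : ∑' m : ℕ, ∫ u in Set.Ioi (0:ℝ), F m u
      = ∫ u in Set.Ioi (0:ℝ), (u:ℂ) ^ (s-1) * Complex.exp (c * (t - u) * x)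
          / (1 - Complex.exp (c * (t - u))) := by
    rw [MeasureTheory.integral_tsum_of_summable_integral_norm hFint hsummable]
    exact setIntegral_congr_fun measurableSet_Ioi (fun u _ => (hkey u).tsum_eq)
  -- continuity / measurability of the integrand
  have hcont : ContinuousOn (fun u : ℝ => (u:ℂ) ^ (s-1) * Complex.exp (c * (t - u) * x)
      / (1 - Complex.exp (c * (t - u)))) (Set.Ioi 0) := by
    apply ContinuousOn.div
    · apply ContinuousOn.mul
      · intro u hu
        exact (continuousAt_ofReal_cpow_const u (s-1) (Or.inr (ne_of_gt hu))).continuousWithinAt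
      · apply Continuous.continuousOn
        apply Complex.continuous_exp.comp
        fun_prop
    · apply Continuous.continuousOn
      apply Continuous.sub continuous_const
      apply Complex.continuous_exp.comp
      fun_prop
    · exact fun u _ => hden u
  have hInt : IntegrableOn
      (fun u : ℝ => (u:ℂ) ^ (s - 1) * Complex.exp (c * (t - u) * x)
        / (1 - Complex.exp (c * (t - u)))) (Set.Ioi 0) := by
    refine ((myIntbound (show (-1:ℝ) < s.re - 1 by linarith) hA).const_mul
      (‖Complex.exp (c * t * x)‖ * (1-r)⁻¹)).mono'
      (hcont.aestronglyMeasurable measurableSet_Ioi) ?_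
    filter_upwards [ae_restrict_mem measurableSet_Ioi] with u hu
    rw [← (hkey u).tsum_eq]
    calc ‖∑' m : ℕ, F m u‖ ≤ ∑' m : ℕ, ‖F m u‖ := norm_tsum_le_tsum_norm (hsumnormu u hu)
      _ = ∑' m : ℕ, (‖Complex.exp (c * t * x)‖ * (u ^ (s.re - 1) * Real.exp (-A * u))) * r ^ m := by
          apply tsum_congr
          intro m
          rw [hnormF m u hu]
          ring
      _ = (‖Complex.exp (c * t * x)‖ * (u ^ (s.re - 1) * Real.exp (-A * u))) * (1-r)⁻¹ := by
          rw [tsum_mul_left, tsum_geometric_of_lt_one hr0 hr1]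
      _ = ‖Complex.exp (c * t * x)‖ * (1-r)⁻¹ * (u ^ (s.re - 1) * Real.exp (-A * u)) := by
          ring
  refine ⟨hInt, ?_⟩
  -- the value computation
  set E : ℂ := Complex.exp (-(Real.pi/2 * Complex.I * s)) with hE
  set D : ℂ := Complex.exp (c * t * x) * Complex.Gamma s * (2 * (Real.pi:ℂ)) ^ (-s) * E with hD
  have hsumval : ∑' m : ℕ, ∫ u in Set.Ioi (0:ℝ), F m u = D * lerchZeta t x s := by
    have hterm : ∀ m : ℕ, (∫ u in Set.Ioi (0:ℝ), F m u)
        = D * (((m:ℂ) + x) ^ (-s) * Complex.exp (c * t * m)) := by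
      intro m
      rw [hFval m]
      have hzre : 0 < (x + (m:ℂ)).re := by
        simp only [Complex.add_re, Complex.natCast_re]
        positivity
      have hzim : (x + (m:ℂ)).im < 0 := by
        simp only [Complex.add_im, Complex.natCast_im, add_zero]
        exact hx'
      rw [show c * (x + (m:ℂ)) = 2 * (Real.pi:ℂ) * Complex.I * (x + m) by rw [hc],
        myCpow hzre hzim s, show c * t * (x + (m:ℂ)) = c * t * x + (m:ℂ) * (c * t) by ring,
        Complex.exp_add, show ((m:ℂ) + x) = (x + (m:ℂ)) by ring, hD, hE]
      rw [show (m:ℂ) * (c * t) = c * t * m by ring]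
      ring
    rw [tsum_congr hterm, tsum_mul_left]
    congr 1
  rw [← hintsum, hsumval]
  have h2πne : (2 * (Real.pi:ℂ)) ≠ 0 := by simp [Real.pi_ne_zero]
  have h2up : (2 * (Real.pi:ℂ)) ^ s * (2 * (Real.pi:ℂ)) ^ (-s) = 1 := by
    rw [← Complex.cpow_add _ _ h2πne, add_neg_cancel, Complex.cpow_zero]
  have hΓ : (1 / Complex.Gamma s) * Complex.Gamma s = 1 := by
    rw [one_div]
    exact inv_mul_cancel₀ (Complex.Gamma_ne_zero_of_re_pos hs)
  have hexp : Complex.exp (Complex.I * Real.pi * (s / 2 - 2 * t * x))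
      * (Complex.exp (c * t * x) * E) = 1 := by
    rw [hE, ← Complex.exp_add, ← Complex.exp_add, ← Complex.exp_zero]
    congr 1
    rw [hc]
    ring
  have hfin : (2 * (Real.pi:ℂ)) ^ s * Complex.exp (Complex.I * Real.pi * (s / 2 - 2 * t * x))
      * ((1 / Complex.Gamma s) * (D * lerchZeta t x s))
      = (((2 * (Real.pi:ℂ)) ^ s * (2 * (Real.pi:ℂ)) ^ (-s)) * ((1 / Complex.Gamma s) * Complex.Gamma s)
        * (Complex.exp (Complex.I * Real.pi * (s / 2 - 2 * t * x)) * (Complex.exp (c * t * x) * E)))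
        * lerchZeta t x s := by
    rw [hD]
    ring
  rw [hfin, h2up, hΓ, hexp]
  ring

end LerchMain
end

section
/- Let t, x, s ∈ ℂ with Im(t) > 0, Re(x) > 0, Im(x) > 0, and Re(s) > 0. Then the function u ↦ u^(s−1) e^(2πi(t+u)x) / (1 − e^(2πi(t+u))) is integrable on (0, ∞), and L(t,x,s) = (2π)^s e^(−iπ(s/2 + 2tx)) · (1/Γ(s)) ∫_0^∞ u^(s−1) e^(2πi(t+u)x) / (1 − e^(2πi(t+u))) du, where (2π)^s is defined by the principal branch. -/
open MeasureTheory Set Complex Filter Topology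


lemma intOn_G {a r : ℝ} (ha : -1 < a) (hr : 0 < r) :
    IntegrableOn (fun u : ℝ => u ^ a * Real.exp (-(r * u))) (Set.Ioi 0) := by
  refine (integrableOn_rpow_mul_exp_neg_mul_rpow ha zero_lt_one hr).congr_fun
    (fun u hu => ?_) measurableSet_Ioi
  simp only [Real.rpow_one, neg_mul]

lemma contOn_cpow (s : ℂ) : ContinuousOn (fun u : ℝ => (u:ℂ) ^ (s-1)) (Set.Ioi 0) := by
  apply continuousOn_of_forall_continuousAt
  intro x hx
  exact (continuousAt_cpow_const <| ofReal_mem_slitPlane.2 hx).comp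
    continuous_ofReal.continuousAt

lemma aesm_aux (s b : ℂ) :
    AEStronglyMeasurable (fun u : ℝ => (u:ℂ) ^ (s-1) * Complex.exp (-(b*u)))
      (volume.restrict (Set.Ioi 0)) := by
  refine ContinuousOn.aestronglyMeasurable ?_ measurableSet_Ioi
  exact (contOn_cpow s).mul (((continuous_const.mul continuous_ofReal).neg.cexp).continuousOn)

lemma norm_aux {s b : ℂ} {u : ℝ} (hu : 0 < u) :
    ‖(u:ℂ) ^ (s-1) * Complex.exp (-(b*u))‖ = u ^ (s.re - 1) * Real.exp (-(b.re * u)) := by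
  rw [norm_mul, Complex.norm_exp,
    Complex.norm_cpow_eq_rpow_re_of_pos hu]
  simp [Complex.sub_re]

lemma int_aux {s b : ℂ} (hs : 0 < s.re) (hb : 0 < b.re) :
    IntegrableOn (fun u : ℝ => (u:ℂ) ^ (s-1) * Complex.exp (-(b*u))) (Set.Ioi 0) := by
  refine (intOn_G (by linarith : (-1:ℝ) < s.re - 1) hb).integrable.mono' (aesm_aux s b) ?_
  filter_upwards [ae_restrict_mem measurableSet_Ioi] with u hu
  rw [norm_aux hu]

lemma diff_aux {s : ℂ} (hs : 0 < s.re) {b : ℂ} (hb : 0 < b.re) :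
    DifferentiableAt ℂ
      (fun b : ℂ => ∫ u in Ioi (0:ℝ), (u:ℂ) ^ (s-1) * Complex.exp (-(b*u))) b := by
  set ε : ℝ := b.re / 2 with hε
  have hεpos : 0 < ε := by positivity
  obtain ⟨-, hder⟩ := hasDerivAt_integral_of_dominated_loc_of_deriv_le
    (μ := volume.restrict (Set.Ioi 0))
    (F := fun b (u:ℝ) => (u:ℂ)^(s-1) * Complex.exp (-(b*u)))
    (F' := fun b (u:ℝ) => (u:ℂ)^(s-1) * (Complex.exp (-(b*u)) * -(u:ℂ)))
    (x₀ := b) (bound := fun u : ℝ => u ^ s.re * Real.exp (-(ε * u)))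
    (Metric.ball_mem_nhds b hεpos)
    (Eventually.of_forall fun c => aesm_aux s c)
    ((int_aux hs hb).integrable)
    (by
      refine ContinuousOn.aestronglyMeasurable ?_ measurableSet_Ioi
      exact (contOn_cpow s).mul
        ((((continuous_const.mul continuous_ofReal).neg.cexp).mul
          continuous_ofReal.neg).continuousOn))
    (by
      filter_upwards [ae_restrict_mem measurableSet_Ioi] with u hu c hc
      have hcre : ε ≤ c.re := by
        have h1 : |c.re - b.re| ≤ dist c b := by
          simpa [Complex.dist_eq] using Complex.abs_re_le_norm (c - b)
        have h2 : dist c b < ε := Metric.mem_ball.mp hc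
        have := abs_sub_abs_le_abs_sub c.re b.re
        have := abs_le.mp h1
        simp only [hε] at *
        linarith [(abs_le.mp h1).1]
      calc ‖(u:ℂ)^(s-1) * (Complex.exp (-(c*u)) * -(u:ℂ))‖
          = (u ^ (s.re - 1) * Real.exp (-(c.re * u))) * u := by
            rw [norm_mul, norm_mul, ← mul_assoc, ← norm_mul, norm_aux hu, norm_neg]
            simp [abs_of_pos (show (0:ℝ) < u from hu), (show (0:ℝ) < u from hu).le]
        _ = u ^ s.re * Real.exp (-(c.re * u)) := by
            have h := Real.rpow_add (show (0:ℝ) < u from hu) 1 (s.re - 1)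
            rw [Real.rpow_one] at h
            have : u * u ^ (s.re - 1) = u ^ s.re := by
              rw [← h]; norm_num
            rw [mul_comm (_ * _) u, ← mul_assoc, this]
        _ ≤ u ^ s.re * Real.exp (-(ε * u)) := by
            have h0u : (0:ℝ) ≤ u := le_of_lt hu
            have hexp : Real.exp (-(c.re * u)) ≤ Real.exp (-(ε * u)) :=
              Real.exp_le_exp.mpr (by nlinarith)
            exact mul_le_mul_of_nonneg_left hexp (Real.rpow_nonneg h0u _)
    )
    (intOn_G (by linarith : (-1:ℝ) < s.re) hεpos).integrable
    (by
      filter_upwards [ae_restrict_mem measurableSet_Ioi] with u hu c hc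
      have h1 : HasDerivAt (fun c : ℂ => -(c * u)) (-(u:ℂ)) c := by
        exact (hasDerivAt_mul_const (u:ℂ)).neg
      exact (h1.cexp.const_mul _))
  exact hder.differentiableAt

lemma val_aux {s : ℂ} (hs : 0 < s.re) {b : ℂ} (hb : 0 < b.re) :
    ∫ u in Ioi (0:ℝ), (u:ℂ) ^ (s-1) * Complex.exp (-(b*u)) = Complex.Gamma s * b ^ (-s) := by
  set f : ℂ → ℂ := fun c => ∫ u in Ioi (0:ℝ), (u:ℂ) ^ (s-1) * Complex.exp (-(c*u)) with hfdef
  set g : ℂ → ℂ := fun c => Complex.Gamma s * c ^ (-s) with hgdef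
  set U : Set ℂ := {z : ℂ | 0 < z.re} with hUdef
  have hUopen : IsOpen U := isOpen_lt continuous_const Complex.continuous_re
  have hfa : AnalyticOnNhd ℂ f U := by
    refine DifferentiableOn.analyticOnNhd (fun z hz => ?_) hUopen
    exact (diff_aux hs hz).differentiableWithinAt
  have hga : AnalyticOnNhd ℂ g U := by
    refine DifferentiableOn.analyticOnNhd (fun z hz => ?_) hUopen
    exact (((hasDerivAt_id z).cpow_const (Or.inl hz)).differentiableAt.const_mul
      _).differentiableWithinAt
  have key : ∀ r : ℝ, 0 < r → f r = g r := by
    intro r hr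
    have h1 := Complex.integral_cpow_mul_exp_neg_mul_Ioi hs hr
    rw [hfdef]
    simp only []
    rw [h1, hgdef]
    have hrne : (r:ℂ) ≠ 0 := Complex.ofReal_ne_zero.mpr hr.ne'
    rw [one_div, Complex.inv_cpow _ _ (by
        rw [Complex.arg_ofReal_of_nonneg hr.le]
        exact Real.pi_ne_zero.symm), ← Complex.cpow_neg]
    ring
  have hfreq : ∃ᶠ z in nhdsWithin (1:ℂ) {(1:ℂ)}ᶜ, f z = g z := by
    have htend : Filter.Tendsto (fun n : ℕ => ((1 + 1/((n:ℝ)+1) : ℝ) : ℂ)) Filter.atTop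
        (nhdsWithin (1:ℂ) {(1:ℂ)}ᶜ) := by
      apply tendsto_nhdsWithin_of_tendsto_nhds_of_eventually_within
      · have h0 : Filter.Tendsto (fun n : ℕ => (1 + 1/((n:ℝ)+1) : ℝ)) Filter.atTop (𝓝 1) := by
          simpa using (tendsto_const_nhds : Tendsto (fun _ : ℕ => (1:ℝ)) atTop (𝓝 1)).add tendsto_one_div_add_atTop_nhds_zero_nat
        exact Complex.ofReal_one ▸ (Complex.continuous_ofReal.tendsto (1:ℝ)).comp h0
      · filter_upwards with n
        simp only [Set.mem_compl_iff, Set.mem_singleton_iff]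
        intro hcontra
        have : (1 + 1/((n:ℝ)+1) : ℝ) = 1 := by exact_mod_cast hcontra
        have hpos : 0 < 1/((n:ℝ)+1) := by positivity
        linarith
    exact htend.frequently ((Filter.Eventually.of_forall fun n : ℕ => key (1 + 1/((n:ℝ)+1)) (by positivity)).frequently)
  have heq := hfa.eqOn_of_preconnected_of_frequently_eq hga
    ((convex_halfSpace_re_gt 0).isPreconnected) (by simp [hUdef] : (1:ℂ) ∈ U) hfreq
  exact heq hb

lemma cpow_key {x : ℂ} (hxre : 0 < x.re) (hxim : 0 < x.im) (s : ℂ) (m : ℕ) :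
    (2 * (Real.pi : ℂ)) ^ s * Complex.exp (-(Complex.I * (Real.pi : ℂ) * s / 2)) *
      (-(2 * (Real.pi : ℂ) * Complex.I * (x + (m:ℂ)))) ^ (-s) = ((m:ℂ) + x) ^ (-s) := by
  set z : ℂ := x + (m:ℂ) with hz
  have hzre : 0 < z.re := by
    simp only [hz, Complex.add_re, Complex.natCast_re]
    positivity
  have hzim : 0 < z.im := by
    simp only [hz, Complex.add_im, Complex.natCast_im, add_zero]; exact hxim
  have hzne : z ≠ 0 := fun h => by simp [h] at hzre
  set w : ℂ := -Complex.I * z with hw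
  have hwne : w ≠ 0 := mul_ne_zero (neg_ne_zero.mpr Complex.I_ne_zero) hzne
  have hargz0 : 0 ≤ z.arg := Complex.arg_nonneg_iff.mpr hzim.le
  have hargz2 : z.arg < Real.pi / 2 :=
    (abs_lt.mp (Complex.abs_arg_lt_pi_div_two_iff.mpr (Or.inl hzre))).2
  have hlogw : Complex.log w = -(Real.pi/2) * Complex.I + Complex.log z := by
    rw [hw, Complex.log_mul (neg_ne_zero.mpr Complex.I_ne_zero) hzne ?harg, Complex.log_neg_I]
    case harg =>
      rw [Complex.arg_neg_I]
      constructor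
      · nlinarith [Real.pi_pos]
      · nlinarith [Real.pi_pos]
  have hb : -(2 * (Real.pi : ℂ) * Complex.I * z) = ((2 * Real.pi : ℝ) : ℂ) * w := by
    push_cast; ring
  have hbne : -(2 * (Real.pi : ℂ) * Complex.I * z) ≠ 0 := by
    rw [hb]
    exact mul_ne_zero (Complex.ofReal_ne_zero.mpr (by positivity)) hwne
  have hlogb : Complex.log (-(2 * (Real.pi : ℂ) * Complex.I * z)) =
      (Real.log (2 * Real.pi) : ℂ) + (-(Real.pi/2) * Complex.I + Complex.log z) := by
    rw [hb, Complex.log_ofReal_mul (by positivity) hwne, hlogw]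
  have h2pi : (2 * (Real.pi : ℂ)) = ((2 * Real.pi : ℝ) : ℂ) := by push_cast; ring
  have hmx : (m:ℂ) + x = z := add_comm _ _
  rw [hmx, Complex.cpow_def_of_ne_zero hbne, Complex.cpow_def_of_ne_zero hzne, hlogb, h2pi,
    Complex.cpow_def_of_ne_zero (Complex.ofReal_ne_zero.mpr (by positivity)),
    ← Complex.ofReal_log (by positivity : (0:ℝ) ≤ 2 * Real.pi), ← Complex.exp_add,
    ← Complex.exp_add]
  congr 1
  ring


set_option maxHeartbeats 2000000 in
theorem lerch_eq_weyl_fracint (t x s : ℂ) (ht : 0 < t.im) (hx : 0 < x.re)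
    (hx' : 0 < x.im) (hs : 0 < s.re) :
    IntegrableOn
      (fun u : ℝ => (u : ℂ) ^ (s - 1) *
        Complex.exp (2 * Real.pi * Complex.I * (t + u) * x) /
          (1 - Complex.exp (2 * Real.pi * Complex.I * (t + u))))
      (Set.Ioi 0) ∧
    lerchZeta t x s
      = (2 * Real.pi : ℂ) ^ s * Complex.exp (-(Complex.I * Real.pi * (s / 2 + 2 * t * x))) *
        ((1 / Complex.Gamma s) *
          ∫ u in Set.Ioi (0 : ℝ),
            (u : ℂ) ^ (s - 1) * Complex.exp (2 * Real.pi * Complex.I * (t + u) * x) /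
              (1 - Complex.exp (2 * Real.pi * Complex.I * (t + u)))) := by
  have hπ := Real.pi_pos
  set c : ℂ := 2 * Real.pi * Complex.I with hc
  have hcre : ∀ w : ℂ, (c * w).re = -(2 * Real.pi * w.im) := by
    intro w
    rw [hc]
    simp [Complex.mul_re, Complex.mul_im]
  set r : ℝ := Real.exp (-(2 * Real.pi * t.im)) with hrdef
  have hr0 : 0 < r := Real.exp_pos _
  have hr1 : r < 1 := by
    rw [hrdef, Real.exp_lt_one_iff]
    nlinarith
  have hzu : ∀ u : ℝ, ‖Complex.exp (c * (t + u))‖ = r := by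
    intro u
    rw [Complex.norm_exp, hcre, hrdef]
    simp
  have hden : ∀ u : ℝ, 1 - Complex.exp (c * (t + u)) ≠ 0 := by
    intro u h
    rw [sub_eq_zero] at h
    have h2 := hzu u
    rw [← h, norm_one] at h2
    linarith
  set F : ℕ → ℝ → ℂ := fun m u => (u:ℂ)^(s-1) * Complex.exp (c * (t+u) * (x+m)) with hF
  set b : ℕ → ℂ := fun m => -(c * (x + m)) with hbdef
  have hbre : ∀ m : ℕ, (b m).re = 2 * Real.pi * x.im := by
    intro m
    rw [hbdef]
    simp only [Complex.neg_re, hcre]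
    simp
  have hbre' : ∀ m : ℕ, 0 < (b m).re := by
    intro m; rw [hbre m]; positivity
  have hFeq : ∀ m : ℕ, F m =
      fun u : ℝ => Complex.exp (c*t*(x+m)) * ((u:ℂ)^(s-1) * Complex.exp (-(b m * u))) := by
    intro m; funext u
    rw [hF, hbdef]
    simp only []
    rw [show c*(t+u)*(x+(m:ℂ)) = c*t*(x+(m:ℂ)) + -(-(c*(x+(m:ℂ))) * u) by ring,
      Complex.exp_add]
    ring
  have hFint : ∀ m : ℕ, IntegrableOn (F m) (Set.Ioi 0) := by
    intro m
    rw [hFeq m]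
    exact ((int_aux hs (hbre' m)).const_mul _)
  have hFval : ∀ m : ℕ, ∫ u in Set.Ioi (0:ℝ), F m u =
      Complex.exp (c*t*(x+m)) * (Complex.Gamma s * (b m) ^ (-s)) := by
    intro m
    rw [hFeq m, MeasureTheory.integral_const_mul, val_aux hs (hbre' m)]
  have hpt : ∀ u : ℝ, (u:ℂ)^(s-1) * Complex.exp (c*(t+u)*x) / (1 - Complex.exp (c*(t+u)))
      = ∑' m : ℕ, F m u := by
    intro u
    have hnorm : ‖Complex.exp (c*(t+u))‖ < 1 := by rw [hzu u]; exact hr1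
    have h1 : ∀ m : ℕ, F m u =
        ((u:ℂ)^(s-1) * Complex.exp (c*(t+u)*x)) * Complex.exp (c*(t+u)) ^ m := by
      intro m
      rw [hF]
      simp only []
      rw [← Complex.exp_nat_mul,
        show c*(t+u)*(x+(m:ℂ)) = c*(t+u)*x + (m:ℂ)*(c*(t+u)) by ring, Complex.exp_add]
      ring
    rw [tsum_congr h1, tsum_mul_left, tsum_geometric_of_norm_lt_one hnorm, div_eq_mul_inv]
  have hnormF : ∀ m : ℕ, ∀ u ∈ Set.Ioi (0:ℝ), ‖F m u‖ =
      (Real.exp ((c*t*x).re) * r ^ m) * (u ^ (s.re - 1) *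
        Real.exp (-(2*Real.pi*x.im * u))) := by
    intro m u hu
    rw [hFeq m]
    simp only []
    rw [norm_mul, norm_aux hu, Complex.norm_exp]
    have h2 : (c*t*(x+(m:ℂ))).re = (c*t*x).re + (m:ℝ) * (c*t).re := by
      rw [show c*t*(x+(m:ℂ)) = c*t*x + ((m:ℝ):ℂ)*(c*t) by push_cast; ring, Complex.add_re,
        Complex.re_ofReal_mul]
    rw [h2, Real.exp_add, Real.exp_nat_mul, hbre m]
    have h4 : Real.exp ((c*t).re) = r := by rw [hcre, hrdef]
    rw [h4]
  set K : ℝ := ∫ u in Set.Ioi (0:ℝ), u ^ (s.re - 1) * Real.exp (-(2*Real.pi*x.im * u))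
    with hK
  have hGint : IntegrableOn (fun u : ℝ => u ^ (s.re - 1) *
      Real.exp (-(2*Real.pi*x.im * u))) (Set.Ioi 0) :=
    intOn_G (by linarith) (by positivity)
  have hnormint : ∀ m : ℕ, ∫ u in Set.Ioi (0:ℝ), ‖F m u‖ =
      (Real.exp ((c*t*x).re) * r ^ m) * K := by
    intro m
    rw [hK, ← MeasureTheory.integral_const_mul]
    exact setIntegral_congr_fun measurableSet_Ioi (fun u hu => hnormF m u hu)
  have hsummable : Summable (fun m : ℕ => ∫ u in Set.Ioi (0:ℝ), ‖F m u‖) := by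
    apply Summable.congr (f := fun m : ℕ => (Real.exp ((c*t*x).re) * r ^ m) * K)
    · exact (((summable_geometric_of_lt_one hr0.le hr1).mul_left _).mul_right _)
    · intro m; rw [hnormint m]
  have hswap : ∑' m : ℕ, ∫ u in Set.Ioi (0:ℝ), F m u
      = ∫ u in Set.Ioi (0:ℝ), ∑' m : ℕ, F m u :=
    integral_tsum_of_summable_integral_norm hFint hsummable
  have hint_main : IntegrableOn (fun u : ℝ => (u:ℂ)^(s-1) * Complex.exp (c*(t+u)*x) /
      (1 - Complex.exp (c*(t+u)))) (Set.Ioi 0) := by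
    have haesm : AEStronglyMeasurable (fun u : ℝ => (u:ℂ)^(s-1) * Complex.exp (c*(t+u)*x) /
        (1 - Complex.exp (c*(t+u)))) (volume.restrict (Set.Ioi 0)) := by
      refine ContinuousOn.aestronglyMeasurable ?_ measurableSet_Ioi
      refine ContinuousOn.div (ContinuousOn.mul (contOn_cpow s) ?_) ?_ (fun u _ => hden u)
      · exact (Continuous.cexp (by continuity)).continuousOn
      · exact (Continuous.sub continuous_const (Continuous.cexp (by continuity))).continuousOn
    refine (hGint.const_mul (Real.exp ((c*t*x).re) * (1-r)⁻¹)).mono' haesm ?_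
    filter_upwards [ae_restrict_mem measurableSet_Ioi] with u hu
    rw [norm_div]
    have hnum : ‖(u:ℂ)^(s-1) * Complex.exp (c*(t+u)*x)‖ =
        Real.exp ((c*t*x).re) * (u^(s.re-1) * Real.exp (-(2*Real.pi*x.im * u))) := by
      rw [show c*(t+u)*x = c*t*x + -(-(c*x) * (u:ℂ)) by ring, Complex.exp_add, ← mul_assoc,
        mul_comm ((u:ℂ)^(s-1)) _, mul_assoc, norm_mul, Complex.norm_exp,
        norm_aux hu]
      have : (-(c*x)).re = 2*Real.pi*x.im := by rw [Complex.neg_re, hcre]; ring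
      rw [this]
    have hden_ge : 1 - r ≤ ‖1 - Complex.exp (c*(t+u))‖ := by
      have h5 := norm_sub_norm_le (1:ℂ) (Complex.exp (c*(t+u)))
      rw [norm_one, hzu u] at h5
      exact h5
    calc ‖(u:ℂ)^(s-1) * Complex.exp (c*(t+u)*x)‖ / ‖1 - Complex.exp (c*(t+u))‖
        ≤ ‖(u:ℂ)^(s-1) * Complex.exp (c*(t+u)*x)‖ / (1 - r) :=
          div_le_div_of_nonneg_left (norm_nonneg _) (by linarith) hden_ge
      _ = Real.exp ((c*t*x).re) * (1-r)⁻¹ *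
          (u^(s.re-1) * Real.exp (-(2*Real.pi*x.im * u))) := by
          rw [hnum, div_eq_mul_inv]; ring
  refine ⟨hint_main, ?_⟩
  have hICalc : (∫ u in Set.Ioi (0:ℝ), (u:ℂ)^(s-1) * Complex.exp (c*(t+u)*x) /
      (1 - Complex.exp (c*(t+u)))) = ∑' m : ℕ, Complex.exp (c*t*(x+m)) *
        (Complex.Gamma s * (b m) ^ (-s)) := by
    rw [setIntegral_congr_fun measurableSet_Ioi (fun u _ => hpt u), ← hswap]
    exact tsum_congr hFval
  rw [hICalc, lerchZeta]
  rw [← tsum_mul_left (a := 1 / Complex.Gamma s), ← tsum_mul_left]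
  refine tsum_congr fun m => ?_
  have hΓ : Complex.Gamma s ≠ 0 := Complex.Gamma_ne_zero_of_re_pos hs
  have hsplit : Complex.exp (c*t*(x+(m:ℂ))) =
      Complex.exp (c*t*x) * Complex.exp (c*t*(m:ℂ)) := by
    rw [← Complex.exp_add]; congr 1; ring
  have hpre : Complex.exp (-(Complex.I * Real.pi * (s / 2 + 2 * t * x))) =
      Complex.exp (-(Complex.I * (Real.pi:ℂ) * s / 2)) * Complex.exp (-(c*t*x)) := by
    rw [← Complex.exp_add]; congr 1; rw [hc]; ring
  have hkey := cpow_key hx hx' s m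
  rw [hsplit, hpre, show (b m) = -(2 * (Real.pi:ℂ) * Complex.I * (x + (m:ℂ))) by
    simp only [hbdef, hc], ← hkey, one_div, Complex.exp_neg (c*t*x)]
  field_simp [Complex.exp_ne_zero]
  rw [hc]; ring_nf
end

section
/- Let t, x, s, α ∈ ℂ with Im(t) > 0, Re(x) > 0, and Re(α) > 0. Then both of the following series converge absolutely and are equal: ∑_{m=1}^∞ (2πim)^α (m+x)^(−s) e^(2πitm) = (2πi)^α ∑_{n=0}^∞ binom(α,n) (−x)^n L(t, x, s−α+n), where all complex powers are taken with the principal branch. -/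
open MeasureTheory

/-- The generalized binomial coefficient `binom(α, n) = α(α-1)⋯(α-n+1)/n!` for `α : ℂ`. -/
noncomputable def cbinom (α : ℂ) (n : ℕ) : ℂ :=
  (∏ j ∈ Finset.range n, (α - j)) / (n.factorial : ℂ)

open Complex Filter Topology

lemma cbinom_norm_eq {α : ℂ} (hα : ∀ m : ℕ, α ≠ m) (n : ℕ) (hn : 1 ≤ n) :
    ‖cbinom α n‖ = (n : ℝ) ^ (-α.re) / (‖GammaSeq (-α) n‖ * ‖(n : ℂ) - α‖) := by
  have hterm : ∀ j : ℕ, (-α + (j : ℂ)) ≠ 0 := by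
    intro j h
    exact hα j (by linear_combination -h)
  have hprod : ∀ m : ℕ, (∏ j ∈ Finset.range m, (-α + j)) ≠ 0 := fun m =>
    Finset.prod_ne_zero_iff.2 fun j _ => hterm j
  have hn0 : ((n : ℂ)) ≠ 0 := Nat.cast_ne_zero.2 (by omega)
  have hfac : ((n.factorial : ℂ)) ≠ 0 := Nat.cast_ne_zero.2 n.factorial_ne_zero
  have hkey : GammaSeq (-α) n * ((∏ j ∈ Finset.range n, (-α + j)) * ((n : ℂ) - α))
      = (n : ℂ) ^ (-α) * n.factorial := by
    rw [GammaSeq, Finset.prod_range_succ]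
    field_simp
    rw [show (n:ℂ) - α = -α + (n:ℂ) from by ring, mul_assoc, mul_div_assoc,
      div_self (mul_ne_zero (hprod n) (hterm n)), mul_one]
  have hnormprod : ∀ m : ℕ, ‖∏ j ∈ Finset.range m, (-α + (j:ℂ))‖
      = ∏ j ∈ Finset.range m, ‖α - (j:ℂ)‖ := by
    intro m
    rw [norm_prod]
    exact Finset.prod_congr rfl fun j _ => by rw [show -α + (j:ℂ) = -(α - j) from by ring, norm_neg]
  have hcpow : ‖(n:ℂ) ^ (-α)‖ = (n : ℝ) ^ (-α.re) := by
    rw [show ((n:ℂ)) = (((n:ℝ)):ℂ) from by push_cast; ring,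
      norm_cpow_eq_rpow_re_of_pos (by exact_mod_cast Nat.pos_of_ne_zero (by omega)) _,
      Complex.neg_re]
  have hnkey := congrArg norm hkey
  rw [norm_mul, norm_mul, norm_mul, hnormprod, hcpow] at hnkey
  have hGSpos : 0 < ‖GammaSeq (-α) n‖ := by
    rcases eq_or_lt_of_le (norm_nonneg (GammaSeq (-α) n)) with h | h
    · exfalso
      rw [← h, zero_mul] at hnkey
      have : (0:ℝ) < (n : ℝ) ^ (-α.re) * ‖(n.factorial : ℂ)‖ := by
        apply mul_pos (Real.rpow_pos_of_pos (by exact_mod_cast Nat.pos_of_ne_zero (by omega)) _)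
        simpa using Nat.factorial_pos n
      linarith
    · exact h
  have hsub : (0:ℝ) < ‖(n:ℂ) - α‖ := by
    rw [norm_pos_iff]
    intro h
    exact hα n (by linear_combination -h)
  have hfacpos : (0:ℝ) < ‖((n.factorial : ℂ))‖ := by simpa using Nat.factorial_pos n
  have hcb : ‖cbinom α n‖ = (∏ j ∈ Finset.range n, ‖α - (j:ℂ)‖) / ‖((n.factorial : ℂ))‖ := by
    rw [cbinom, norm_div, norm_prod]
  rw [hcb, div_eq_div_iff hfacpos.ne' (mul_pos hGSpos hsub).ne']
  linear_combination hnkey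

lemma summable_norm_cbinom {α : ℂ} (hα : 0 < α.re) : Summable fun n => ‖cbinom α n‖ := by
  by_cases hnat : ∃ m : ℕ, α = m
  · obtain ⟨m, rfl⟩ := hnat
    apply summable_of_ne_finset_zero (s := Finset.range (m + 1))
    intro n hn
    simp only [Finset.mem_range, not_lt] at hn
    have : ((m:ℂ) - m) ∈ (Finset.range n).image fun j : ℕ => (m:ℂ) - j := by
      exact Finset.mem_image.2 ⟨m, Finset.mem_range.2 (by omega), rfl⟩
    rw [cbinom, Finset.prod_eq_zero (Finset.mem_range.2 (show m < n by omega)) (by ring), zero_div]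
    simp
  · push_neg at hnat
    -- Gamma (-α) ≠ 0
    have hG : Complex.Gamma (-α) ≠ 0 := by
      apply Complex.Gamma_ne_zero
      intro m h
      exact hnat m (by linear_combination -h)
    have hGpos : 0 < ‖Complex.Gamma (-α)‖ := norm_pos_iff.2 hG
    have htend : Tendsto (fun n => ‖GammaSeq (-α) n‖) atTop (𝓝 ‖Complex.Gamma (-α)‖) :=
      (Complex.GammaSeq_tendsto_Gamma (-α)).norm
    have hev1 : ∀ᶠ n : ℕ in atTop, ‖Complex.Gamma (-α)‖ / 2 ≤ ‖GammaSeq (-α) n‖ :=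
      htend.eventually (eventually_ge_nhds (by linarith))
    have hev2 : ∀ᶠ n : ℕ in atTop, (n : ℝ) / 2 ≤ ‖(n : ℂ) - α‖ := by
      filter_upwards [eventually_ge_atTop (Nat.ceil (2 * ‖α‖) + 1)] with n hn
      have h1 : 2 * ‖α‖ ≤ (n : ℝ) := by
        calc 2 * ‖α‖ ≤ Nat.ceil (2 * ‖α‖) := Nat.le_ceil _
        _ ≤ (n : ℝ) := by exact_mod_cast Nat.le_of_succ_le hn
      have h2 : (n:ℝ) - ‖α‖ ≤ ‖(n : ℂ) - α‖ := by
        calc (n:ℝ) - ‖α‖ = ‖((n:ℂ))‖ - ‖α‖ := by simp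
        _ ≤ ‖(n : ℂ) - α‖ := norm_sub_norm_le _ _
      linarith
    -- the comparison
    have hsum : Summable (fun n : ℕ => (4 / ‖Complex.Gamma (-α)‖) * (n : ℝ) ^ (-(α.re + 1))) := by
      apply Summable.mul_left
      exact Real.summable_nat_rpow.2 (by linarith)
    apply Summable.of_norm_bounded_eventually hsum
    rw [Nat.cofinite_eq_atTop]
    filter_upwards [hev1, hev2, eventually_ge_atTop 1] with n h1 h2 h3
    have hn0 : (0:ℝ) < n := by exact_mod_cast h3
    rw [Real.norm_eq_abs, _root_.abs_of_nonneg (norm_nonneg _), cbinom_norm_eq hnat n h3]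
    have hb : (n:ℝ)/2 * (‖Complex.Gamma (-α)‖/2) ≤ ‖(n:ℂ) - α‖ * ‖GammaSeq (-α) n‖ := by
      apply mul_le_mul h2 h1 (by linarith) (norm_nonneg _)
    have hnum : (0:ℝ) < (n:ℝ) ^ (-α.re) := Real.rpow_pos_of_pos hn0 _
    have hden : (0:ℝ) < ‖GammaSeq (-α) n‖ * ‖(n:ℂ) - α‖ := by nlinarith [hGpos]
    rw [div_le_iff₀ hden]
    have hr : (n : ℝ) ^ (-(α.re + 1)) = (n:ℝ) ^ (-α.re) / n := by
      rw [show -(α.re + 1) = -α.re + (-1 : ℝ) by ring, Real.rpow_add hn0, Real.rpow_neg_one]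
      ring
    rw [hr]
    have : 4 / ‖Complex.Gamma (-α)‖ * ((n:ℝ) ^ (-α.re) / n) * ((n:ℝ)/2 * (‖Complex.Gamma (-α)‖/2))
        = (n:ℝ) ^ (-α.re) := by
      have hGne : ‖Complex.Gamma (-α)‖ ≠ 0 := by
        exact hGpos.ne'
      have hnne : (n:ℝ) ≠ 0 := hn0.ne'
      field_simp
      ring
    nlinarith [mul_le_mul_of_nonneg_left hb (le_of_lt (by positivity :
      (0:ℝ) < 4 / ‖Complex.Gamma (-α)‖ * ((n:ℝ) ^ (-α.re) / n)))]

lemma iteratedDeriv_one_add_cpow (α : ℂ) (n : ℕ) :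
    ∀ z : ℂ, 1 + z ∈ Complex.slitPlane →
    iteratedDeriv n (fun w : ℂ => (1 + w) ^ α) z
      = (∏ j ∈ Finset.range n, (α - j)) * (1 + z) ^ (α - n) := by
  induction n with
  | zero => intro z _; simp
  | succ n ih =>
    intro z hz
    have hU : IsOpen {w : ℂ | 1 + w ∈ Complex.slitPlane} :=
      Complex.isOpen_slitPlane.preimage (by continuity)
    have hev : iteratedDeriv n (fun w : ℂ => (1 + w) ^ α)
        =ᶠ[nhds z] fun w => (∏ j ∈ Finset.range n, (α - j)) * (1 + w) ^ (α - n) := by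
      filter_upwards [hU.mem_nhds hz] with w hw using ih w hw
    rw [iteratedDeriv_succ, hev.deriv_eq]
    have hd : HasDerivAt (fun w : ℂ => (1 + w) ^ (α - n))
        ((α - n) * (1 + z) ^ (α - n - 1) * 1) z :=
      HasDerivAt.cpow_const ((hasDerivAt_id z).const_add 1) hz
    rw [((hd.const_mul (∏ j ∈ Finset.range n, (α - (j:ℂ)))).deriv), Finset.prod_range_succ]
    push_cast
    rw [show α - ((n:ℂ) + 1) = α - n - 1 from by ring]
    ring

lemma hasSum_cbinom (α : ℂ) {z : ℂ} (hz : ‖z‖ < 1) :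
    HasSum (fun n => cbinom α n * z ^ n) ((1 + z) ^ α) := by
  have hmem : ∀ w : ℂ, ‖w‖ < 1 → 1 + w ∈ Complex.slitPlane := by
    intro w hw
    refine Or.inl ?_
    have : |w.re| < 1 := lt_of_le_of_lt (Complex.abs_re_le_norm w) hw
    simp only [Complex.add_re, Complex.one_re]
    cases abs_lt.1 this with
    | intro h1 h2 => linarith
  set r : NNReal := ⟨(1 + ‖z‖) / 2, by positivity⟩ with hrdef
  have hzr : ‖z‖ < (r : ℝ) := by
    show ‖z‖ < (1 + ‖z‖) / 2; linarith
  have hr1 : (r : ℝ) < 1 := by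
    show (1 + ‖z‖) / 2 < 1; linarith
  have hr0 : 0 < r := by
    rw [← NNReal.coe_lt_coe]
    simp only [NNReal.coe_zero]
    exact lt_of_le_of_lt (norm_nonneg z) hzr
  have hd : DifferentiableOn ℂ (fun w : ℂ => (1 + w) ^ α) (Metric.closedBall (0:ℂ) r) := by
    intro w hw
    have hw1 : ‖w‖ < 1 := by
      have : ‖w‖ ≤ r := by simpa [Metric.mem_closedBall] using hw
      linarith
    exact (HasDerivAt.cpow_const ((hasDerivAt_id w).const_add 1)
      (hmem w hw1)).differentiableAt.differentiableWithinAt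
  have hg := hd.hasFPowerSeriesOnBall hr0
  have hz' : z ∈ Metric.eball (0:ℂ) (r : ENNReal) := by
    simp only [Metric.mem_eball, edist_zero_right]
    exact_mod_cast (by simpa [← NNReal.coe_lt_coe] using hzr : ‖z‖₊ < r)
  have h1 := hg.hasSum_iteratedFDeriv hz'
  rw [zero_add] at h1
  have heq : ∀ n : ℕ, ((n.factorial : ℂ))⁻¹ • iteratedFDeriv ℂ n (fun w : ℂ => (1 + w) ^ α) 0
      (fun _ => z) = cbinom α n * z ^ n := by
    intro n
    rw [iteratedFDeriv_apply_eq_iteratedDeriv_mul_prod,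
      iteratedDeriv_one_add_cpow α n 0 (by simpa using hmem 0 (by simp))]
    simp only [Finset.prod_const, Finset.card_univ, Fintype.card_fin, add_zero, Complex.one_cpow,
      mul_one, smul_eq_mul]
    rw [cbinom]
    field_simp [Nat.cast_ne_zero.2 n.factorial_ne_zero]
  simp only [heq] at h1
  exact h1

lemma hasSum_cbinom_neg_one {α : ℂ} (hα : 0 < α.re) :
    HasSum (fun n => cbinom α n * (-1 : ℂ) ^ n) 0 := by
  have hnorm := summable_norm_cbinom hα
  have hsummable : Summable (fun n => cbinom α n * (-1 : ℂ) ^ n) := by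
    apply Summable.of_norm
    simpa using hnorm
  -- the sequence z_j = -(1 - 1/(j+2)) → -1
  set zf : ℕ → ℂ := fun j => -(1 - (1 : ℂ) / (j + 2)) with hzf
  have hzlt : ∀ j : ℕ, ‖zf j‖ < 1 := by
    intro j
    have h2 : (0:ℝ) < (j:ℝ) + 2 := by positivity
    rw [hzf]
    simp only [norm_neg]
    have : (1 : ℂ) - 1 / ((j:ℂ) + 2) = (((1 : ℝ) - 1 / ((j:ℝ) + 2) : ℝ) : ℂ) := by
      push_cast; ring
    rw [this, Complex.norm_real, Real.norm_eq_abs, _root_.abs_of_nonneg (by rw [sub_nonneg, div_le_one h2]; linarith)]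
    rw [sub_lt_self_iff]
    positivity
  -- tsum values along the sequence
  have hval : ∀ j : ℕ, (∑' n, cbinom α n * (zf j) ^ n) = ((1 : ℂ) / (j + 2)) ^ α := by
    intro j
    rw [(hasSum_cbinom α (hzlt j)).tsum_eq]
    congr 1
    rw [hzf]; ring
  -- dominated convergence
  have hdom : Tendsto (fun j : ℕ => ∑' n, cbinom α n * (zf j) ^ n) atTop
      (𝓝 (∑' n, cbinom α n * (-1 : ℂ) ^ n)) := by
    have hrtend : Tendsto (fun j : ℕ => (1 : ℝ) / ((j:ℝ) + 2)) atTop (𝓝 0) :=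
      Tendsto.div_atTop tendsto_const_nhds
        (tendsto_atTop_add_const_right _ 2 tendsto_natCast_atTop_atTop)
    have hctend : Tendsto (fun j : ℕ => (1 : ℂ) / ((j:ℂ) + 2)) atTop (𝓝 0) := by
      have := (Complex.continuous_ofReal.tendsto 0).comp hrtend
      simp only [Function.comp_def, Complex.ofReal_zero] at this
      convert this using 2 with j
      push_cast; ring
    have hz1 : Tendsto zf atTop (𝓝 (-1 : ℂ)) := by
      rw [hzf]
      have := (tendsto_const_nhds (x := (1:ℂ)) (f := atTop (α := ℕ))).sub hctend
      rw [sub_zero] at this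
      simpa using this.neg
    apply tendsto_tsum_of_dominated_convergence hnorm
    · intro n
      exact ((hz1.pow n).const_mul _)
    · filter_upwards with j n
      rw [norm_mul, norm_pow]
      calc ‖cbinom α n‖ * ‖zf j‖ ^ n ≤ ‖cbinom α n‖ * 1 := by
            apply mul_le_mul_of_nonneg_left _ (norm_nonneg _)
            exact pow_le_one₀ (norm_nonneg _) (le_of_lt (hzlt j))
        _ = ‖cbinom α n‖ := mul_one _
  -- the limit of the values is 0
  have hlim : Tendsto (fun j : ℕ => ((1 : ℂ) / (j + 2)) ^ α) atTop (𝓝 0) := by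
    rw [tendsto_zero_iff_norm_tendsto_zero]
    have hnormval : ∀ j : ℕ, ‖((1 : ℂ) / ((j:ℂ) + 2)) ^ α‖ = ((1 : ℝ) / ((j:ℝ) + 2)) ^ α.re := by
      intro j
      have hpos : (0:ℝ) < 1 / ((j:ℝ) + 2) := by positivity
      rw [show (1 : ℂ) / ((j:ℂ) + 2) = (((1 : ℝ) / ((j:ℝ) + 2) : ℝ) : ℂ) from by push_cast; ring,
        norm_cpow_eq_rpow_re_of_pos hpos]
    simp only [hnormval]
    have h2tend : Tendsto (fun j : ℕ => ((j:ℝ) + 2)) atTop atTop :=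
      tendsto_atTop_add_const_right _ 2 tendsto_natCast_atTop_atTop
    have := (tendsto_rpow_neg_atTop hα).comp h2tend
    simp only [Function.comp_def] at this
    convert this using 2 with j
    rw [one_div, ← Real.rpow_neg_one, ← Real.rpow_mul (by positivity)]
    ring_nf
  rw [show (0 : ℂ) = ∑' n, cbinom α n * (-1 : ℂ) ^ n from ?_]
  · exact hsummable.hasSum
  · simp only [hval] at hdom
    exact (tendsto_nhds_unique hdom hlim).symm

-- helper: cpow of positive real multiple
lemma cpow_ofReal_mul {r : ℝ} (hr : 0 < r) {z : ℂ} (hz : z ≠ 0) (s : ℂ) :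
    ((r : ℂ) * z) ^ s = (r : ℂ) ^ s * z ^ s := by
  have hr0 : (r : ℂ) ≠ 0 := Complex.ofReal_ne_zero.2 hr.ne'
  rw [Complex.cpow_def_of_ne_zero (mul_ne_zero hr0 hz), Complex.cpow_def_of_ne_zero hr0,
    Complex.cpow_def_of_ne_zero hz, Complex.log_ofReal_mul hr hz, ← Complex.ofReal_log hr.le, add_mul, Complex.exp_add]

-- norm factorization of the general term
lemma lterm_norm (t x s α : ℂ) (hx : 0 < x.re) (k n : ℕ) :
    ‖cbinom α n * (-x) ^ n * ((k : ℂ) + x) ^ (α - s - n) *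
        Complex.exp (2 * Real.pi * Complex.I * t * k)‖
    = ‖cbinom α n‖ * (‖x‖ / ‖(k : ℂ) + x‖) ^ n *
        (‖((k : ℂ) + x) ^ (α - s)‖ * ‖Complex.exp (2 * Real.pi * Complex.I * t * k)‖) := by
  have hw0 : ((k : ℂ) + x) ≠ 0 := by
    intro h
    have : ((k : ℂ) + x).re = 0 := by rw [h]; simp
    simp only [Complex.add_re, Complex.natCast_re] at this
    have : (0:ℝ) ≤ (k:ℝ) := Nat.cast_nonneg k
    linarith [hx]
  have hsplit : ((k : ℂ) + x) ^ (α - s - n) = ((k : ℂ) + x) ^ (α - s) * (((k : ℂ) + x) ^ n)⁻¹ := by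
    rw [show α - s - (n:ℂ) = (α - s) + (-(n:ℂ)) from by ring, Complex.cpow_add _ _ hw0,
      Complex.cpow_neg, Complex.cpow_natCast]
  rw [hsplit]
  rw [norm_mul, norm_mul, norm_mul, norm_mul, norm_inv, norm_pow, norm_pow, norm_neg, div_pow]
  ring
-- ‖x‖ ≤ ‖k + x‖
lemma norm_x_le (x : ℂ) (hx : 0 < x.re) (k : ℕ) : ‖x‖ ≤ ‖(k : ℂ) + x‖ := by
  have h1 : Complex.normSq x ≤ Complex.normSq ((k:ℂ) + x) := by
    simp only [Complex.normSq_apply, Complex.add_re, Complex.add_im, Complex.natCast_re,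
      Complex.natCast_im]
    have hk : (0:ℝ) ≤ (k:ℝ) := Nat.cast_nonneg k
    nlinarith
  rw [Complex.norm_def, Complex.norm_def]
  exact Real.sqrt_le_sqrt h1

open Real in
lemma summable_F (t x s α : ℂ) (ht : 0 < t.im) (hx : 0 < x.re) :
    Summable (fun k : ℕ => ‖((k : ℂ) + x) ^ (α - s)‖ *
      ‖Complex.exp (2 * Real.pi * Complex.I * t * k)‖) := by
  set u : ℂ := α - s with hu
  set r : ℝ := Real.exp (-(2 * π * t.im)) with hrdef
  have hπ : (0:ℝ) < π := Real.pi_pos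
  have hr0 : 0 < r := Real.exp_pos _
  have hr1 : r < 1 := by
    rw [hrdef, Real.exp_lt_one_iff]
    nlinarith
  -- norm of the exponential is r ^ k
  have hexp : ∀ k : ℕ, ‖Complex.exp (2 * Real.pi * Complex.I * t * k)‖ = r ^ k := by
    intro k
    rw [Complex.norm_exp]
    have hre : (2 * (π:ℂ) * Complex.I * t * k).re = (k:ℝ) * (-(2 * π * t.im)) := by
      simp [Complex.mul_re, Complex.mul_im]
      ring
    rw [hre, Real.exp_nat_mul]
  -- bound for the cpow part
  set C : ℝ := 1 + ‖x‖ + (x.re)⁻¹ with hC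
  have hC1 : 1 ≤ C := by
    have : 0 ≤ ‖x‖ := norm_nonneg x
    have : 0 < (x.re)⁻¹ := by positivity
    rw [hC]; linarith [norm_nonneg x]
  set B : ℝ := |u.re| with hB
  set N : ℕ := Nat.ceil B with hN
  set E : ℝ := Real.exp (π * |u.im|) with hE
  have hEpos : 0 < E := Real.exp_pos _
  have hwbound : ∀ k : ℕ, ‖((k : ℂ) + x) ^ u‖ ≤ E * (C * ((k:ℝ) + 1)) ^ B := by
    intro k
    set w : ℂ := (k : ℂ) + x with hw
    have hw0 : w ≠ 0 := by
      intro h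
      have : w.re = 0 := by rw [h]; simp
      simp only [hw, Complex.add_re, Complex.natCast_re] at this
      have := Nat.cast_nonneg (α := ℝ) k
      linarith
    have hwre : 0 < w.re := by
      simp only [hw, Complex.add_re, Complex.natCast_re]
      have := Nat.cast_nonneg (α := ℝ) k
      linarith
    have habs : ‖w‖ ≤ C * ((k:ℝ) + 1) := by
      have h1 : ‖w‖ ≤ (k:ℝ) + ‖x‖ := by
        calc ‖w‖ ≤ ‖(k:ℂ)‖ + ‖x‖ := norm_add_le _ _
        _ = (k:ℝ) + ‖x‖ := by rw [Complex.norm_natCast]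
      have h2 : (k:ℝ) + ‖x‖ ≤ C * ((k:ℝ) + 1) := by
        have hk := Nat.cast_nonneg (α := ℝ) k
        have hxi : 0 < (x.re)⁻¹ := by positivity
        rw [hC]
        nlinarith [norm_nonneg x]
      linarith
    have habsinv : (‖w‖)⁻¹ ≤ C * ((k:ℝ) + 1) := by
      have hxw : x.re ≤ ‖w‖ := by
        have hh : x.re ≤ w.re := by
          simp only [hw, Complex.add_re, Complex.natCast_re]
          have := Nat.cast_nonneg (α := ℝ) k
          linarith
        exact hh.trans (Complex.re_le_norm w)
      have h2 : (‖w‖)⁻¹ ≤ (x.re)⁻¹ := inv_anti₀ hx hxw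
      have hk := Nat.cast_nonneg (α := ℝ) k
      have hxnn := norm_nonneg x
      calc (‖w‖)⁻¹ ≤ (x.re)⁻¹ := h2
      _ ≤ C * ((k:ℝ) + 1) := by rw [hC]; nlinarith [inv_pos.2 hx]
    have habs0 : 0 < ‖w‖ := norm_pos_iff.mpr hw0
    have hM1 : (1:ℝ) ≤ C * ((k:ℝ)+1) := by
      have hk := Nat.cast_nonneg (α := ℝ) k
      nlinarith
    have hpow : ‖w‖ ^ u.re ≤ (C * ((k:ℝ) + 1)) ^ B := by
      rcases le_or_gt 0 u.re with h | h
      · calc ‖w‖ ^ u.re ≤ (C * ((k:ℝ)+1)) ^ u.re :=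
            Real.rpow_le_rpow habs0.le habs h
        _ ≤ (C * ((k:ℝ)+1)) ^ B := Real.rpow_le_rpow_of_exponent_le hM1 (le_abs_self _)
      · have : ‖w‖ ^ u.re = ((‖w‖)⁻¹) ^ (-u.re) := by
          rw [Real.inv_rpow habs0.le, ← Real.rpow_neg habs0.le, neg_neg]
        rw [this]
        calc ((‖w‖)⁻¹) ^ (-u.re) ≤ (C * ((k:ℝ)+1)) ^ (-u.re) :=
            Real.rpow_le_rpow (by positivity) habsinv (by linarith)
        _ ≤ (C * ((k:ℝ)+1)) ^ B := Real.rpow_le_rpow_of_exponent_le hM1 (neg_le_abs _)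
    have hargb : -π * |u.im| ≤ Complex.arg w * u.im := by
      have h1 : |Complex.arg w * u.im| ≤ π * |u.im| := by
        rw [abs_mul]
        exact mul_le_mul_of_nonneg_right (Complex.abs_arg_le_pi w) (abs_nonneg _)
      have := neg_abs_le (Complex.arg w * u.im)
      linarith
    rw [Complex.norm_cpow_of_ne_zero hw0]
    have hdiv : ‖w‖ ^ u.re / Real.exp (Complex.arg w * u.im)
        ≤ ‖w‖ ^ u.re * E := by
      rw [div_eq_mul_inv]
      apply mul_le_mul_of_nonneg_left _ (Real.rpow_nonneg habs0.le _)
      rw [← Real.exp_neg, hE]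
      apply Real.exp_le_exp.2
      linarith
    calc ‖w‖ ^ u.re / Real.exp (Complex.arg w * u.im)
        ≤ ‖w‖ ^ u.re * E := hdiv
      _ ≤ (C * ((k:ℝ)+1)) ^ B * E := mul_le_mul_of_nonneg_right hpow hEpos.le
      _ = E * (C * ((k:ℝ)+1)) ^ B := mul_comm _ _
  -- summable majorant
  have hmaj : Summable (fun k : ℕ => (E * C ^ N) * (((k:ℝ) + 1) ^ N * r ^ k)) := by
    apply Summable.mul_left
    have h0 : Summable (fun k : ℕ => ((k:ℝ)) ^ N * r ^ k) := by
      have := summable_pow_mul_geometric_of_norm_lt_one (R := ℝ) N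
        (r := r) (by rwa [Real.norm_eq_abs, abs_of_pos hr0])
      exact this
    have h1 : Summable (fun k : ℕ => (((k:ℕ) + 1 : ℝ)) ^ N * r ^ (k + 1)) := by
      have := (summable_nat_add_iff 1).2 h0
      simpa using this
    have h2 := h1.mul_left r⁻¹
    apply h2.congr
    intro k
    field_simp
    ring
  apply Summable.of_nonneg_of_le (fun k => by positivity) _ hmaj
  intro k
  rw [hexp k]
  have h1 : ‖((k : ℂ) + x) ^ u‖ * r ^ k ≤ (E * (C * ((k:ℝ)+1)) ^ B) * r ^ k :=
    mul_le_mul_of_nonneg_right (hwbound k) (by positivity)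
  have h2 : (C * ((k:ℝ)+1)) ^ B ≤ C ^ N * ((k:ℝ)+1) ^ N := by
    have hk := Nat.cast_nonneg (α := ℝ) k
    have hM1 : (1:ℝ) ≤ C * ((k:ℝ)+1) := by nlinarith [hC1]
    calc (C * ((k:ℝ)+1)) ^ B ≤ (C * ((k:ℝ)+1)) ^ (N:ℝ) :=
        Real.rpow_le_rpow_of_exponent_le hM1 (le_trans (Nat.le_ceil B) (by rw [hN]))
    _ = (C * ((k:ℝ)+1)) ^ N := Real.rpow_natCast _ N
    _ = C ^ N * ((k:ℝ)+1) ^ N := mul_pow _ _ _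
  calc ‖((k : ℂ) + x) ^ u‖ * r ^ k ≤ (E * (C * ((k:ℝ)+1)) ^ B) * r ^ k := h1
    _ ≤ (E * (C ^ N * ((k:ℝ)+1) ^ N)) * r ^ k := by
        apply mul_le_mul_of_nonneg_right _ (by positivity)
        exact mul_le_mul_of_nonneg_left h2 hEpos.le
    _ = (E * C ^ N) * (((k:ℝ) + 1) ^ N * r ^ k) := by ring


set_option maxHeartbeats 1000000 in
lemma summable_lterm (t x s α : ℂ) (ht : 0 < t.im) (hx : 0 < x.re) (hα : 0 < α.re) :
    Summable (fun p : ℕ × ℕ => cbinom α p.2 * (-x) ^ p.2 * ((p.1 : ℂ) + x) ^ (α - s - p.2) *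
      Complex.exp (2 * Real.pi * Complex.I * t * p.1)) := by
  have hg : Summable (fun p : ℕ × ℕ =>
      (‖((p.1 : ℂ) + x) ^ (α - s)‖ * ‖Complex.exp (2 * Real.pi * Complex.I * t * p.1)‖) *
      ‖cbinom α p.2‖) :=
    Summable.mul_of_nonneg (summable_F t x s α ht hx) (summable_norm_cbinom hα)
      (fun k => by positivity) (fun n => norm_nonneg _)
  apply Summable.of_norm_bounded hg
  intro p
  rw [lterm_norm t x s α hx p.1 p.2]
  have hw0 : (0:ℝ) < ‖(p.1 : ℂ) + x‖ := by
    have := norm_x_le x hx p.1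
    have hx0 : (0:ℝ) < ‖x‖ := by
      rw [norm_pos_iff]
      intro h
      rw [h] at hx
      simp at hx
    linarith
  have hle1 : (‖x‖ / ‖(p.1 : ℂ) + x‖) ^ p.2 ≤ 1 := by
    apply pow_le_one₀ (by positivity)
    rw [div_le_one hw0]
    exact norm_x_le x hx p.1
  calc ‖cbinom α p.2‖ * (‖x‖ / ‖(p.1 : ℂ) + x‖) ^ p.2 *
        (‖((p.1 : ℂ) + x) ^ (α - s)‖ * ‖Complex.exp (2 * Real.pi * Complex.I * t * p.1)‖)
      ≤ ‖cbinom α p.2‖ * 1 *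
        (‖((p.1 : ℂ) + x) ^ (α - s)‖ * ‖Complex.exp (2 * Real.pi * Complex.I * t * p.1)‖) := by
        apply mul_le_mul_of_nonneg_right _ (by positivity)
        exact mul_le_mul_of_nonneg_left hle1 (norm_nonneg _)
    _ = (‖((p.1 : ℂ) + x) ^ (α - s)‖ * ‖Complex.exp (2 * Real.pi * Complex.I * t * p.1)‖) *
        ‖cbinom α p.2‖ := by ring

lemma hasSum_row (t x s α : ℂ) (hx : 0 < x.re) (k : ℕ) :
    HasSum (fun n : ℕ => cbinom α n * (-x) ^ n * (((k : ℂ) + 1) + x) ^ (α - s - n) *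
        Complex.exp (2 * Real.pi * Complex.I * t * ((k : ℂ) + 1)))
      (((k : ℂ) + 1) ^ α * (((k : ℂ) + 1) + x) ^ (-s) *
        Complex.exp (2 * Real.pi * Complex.I * t * ((k : ℂ) + 1))) := by
  set E := Complex.exp (2 * Real.pi * Complex.I * t * ((k : ℂ) + 1)) with hE
  set w : ℂ := ((k : ℂ) + 1) + x with hw
  have hk0 : (0:ℝ) ≤ (k:ℝ) := Nat.cast_nonneg k
  have hwre : 0 < w.re := by
    simp only [hw, Complex.add_re, Complex.natCast_re, Complex.one_re]
    linarith
  have hw0 : w ≠ 0 := by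
    intro h; rw [h] at hwre; simp at hwre
  have hxw : ‖x‖ < ‖w‖ := by
    have h1 : Complex.normSq x < Complex.normSq w := by
      simp only [hw, Complex.normSq_apply, Complex.add_re, Complex.add_im, Complex.natCast_re,
        Complex.natCast_im, Complex.one_re, Complex.one_im]
      nlinarith
    rw [Complex.norm_def, Complex.norm_def]
    exact Real.sqrt_lt_sqrt (Complex.normSq_nonneg x) h1
  set z : ℂ := -x / w with hz
  have hznorm : ‖z‖ < 1 := by
    rw [hz, norm_div, norm_neg, div_lt_one (lt_of_le_of_lt (norm_nonneg x) hxw)]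
    exact hxw
  have h := (hasSum_cbinom α hznorm).mul_left (w ^ (α - s) * E)
  have hterm : ∀ n : ℕ, (w ^ (α - s) * E) * (cbinom α n * z ^ n)
      = cbinom α n * (-x) ^ n * w ^ (α - s - n) * E := by
    intro n
    have hsplit : w ^ (α - s - n) = w ^ (α - s) * (w ^ n)⁻¹ := by
      rw [show α - s - (n:ℂ) = (α - s) + (-(n:ℂ)) from by ring, Complex.cpow_add _ _ hw0,
        Complex.cpow_neg, Complex.cpow_natCast]
    rw [hsplit, hz, div_pow]
    have hwn : (w : ℂ) ^ n ≠ 0 := pow_ne_zero n hw0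
    field_simp
  have hval : (w ^ (α - s) * E) * ((1 + z) ^ α)
      = ((k : ℂ) + 1) ^ α * w ^ (-s) * E := by
    have h1z : 1 + z = ((k : ℂ) + 1) * w⁻¹ := by
      rw [hz]
      field_simp
      rw [hw]; ring
    have hKr : ((k : ℂ) + 1) = (((k:ℝ) + 1 : ℝ) : ℂ) := by push_cast; ring
    have hargw : w.arg ≠ Real.pi := by
      intro h
      have := Complex.arg_eq_pi_iff.1 h
      linarith [this.1]
    have h2 : (1 + z) ^ α = ((k : ℂ) + 1) ^ α * (w ^ α)⁻¹ := by
      rw [h1z, hKr, cpow_ofReal_mul (by positivity) (inv_ne_zero hw0) α, ← hKr,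
        Complex.inv_cpow _ _ hargw]
    have h3 : w ^ (α - s) = w ^ α * w ^ (-s) := by
      rw [show α - s = α + (-s) from by ring, Complex.cpow_add _ _ hw0]
    rw [h2, h3]
    have hwα : w ^ α ≠ 0 := by
      rw [Complex.cpow_def_of_ne_zero hw0]
      exact Complex.exp_ne_zero _
    field_simp
  rw [hval] at h
  simp only [hterm] at h
  exact h

lemma hasSum_row_zero (t x s α : ℂ) (hx : 0 < x.re) (hα : 0 < α.re) :
    HasSum (fun n : ℕ => cbinom α n * (-x) ^ n * (((0:ℕ) : ℂ) + x) ^ (α - s - n) *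
        Complex.exp (2 * Real.pi * Complex.I * t * ((0:ℕ) : ℂ))) 0 := by
  have hx0 : x ≠ 0 := by
    intro h; rw [h] at hx; simp at hx
  have hterm : ∀ n : ℕ, cbinom α n * (-x) ^ n * (((0:ℕ) : ℂ) + x) ^ (α - s - n) *
      Complex.exp (2 * Real.pi * Complex.I * t * ((0:ℕ) : ℂ))
      = (x ^ (α - s)) * (cbinom α n * (-1 : ℂ) ^ n) := by
    intro n
    simp only [Nat.cast_zero, zero_add, mul_zero, Complex.exp_zero, mul_one]
    have hsplit : x ^ (α - s - n) = x ^ (α - s) * (x ^ n)⁻¹ := by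
      rw [show α - s - (n:ℂ) = (α - s) + (-(n:ℂ)) from by ring, Complex.cpow_add _ _ hx0,
        Complex.cpow_neg, Complex.cpow_natCast]
    rw [hsplit, show (-x) ^ n = (-1 : ℂ) ^ n * x ^ n from by rw [← neg_one_mul, mul_pow]]
    have hxn : x ^ n ≠ 0 := pow_ne_zero n hx0
    field_simp
  have h := (hasSum_cbinom_neg_one hα).mul_left (x ^ (α - s))
  rw [mul_zero] at h
  simp only [hterm]
  exact h

theorem rl_fracderiv_lerch_t (t x s α : ℂ) (ht : 0 < t.im) (hx : 0 < x.re)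
    (hα : 0 < α.re) :
    Summable (fun m : ℕ =>
      (2 * Real.pi * Complex.I * ((m : ℂ) + 1)) ^ α * (((m : ℂ) + 1) + x) ^ (-s) *
        Complex.exp (2 * Real.pi * Complex.I * t * ((m : ℂ) + 1))) ∧
    Summable (fun n : ℕ => cbinom α n * (-x) ^ n * lerchZeta t x (s - α + n)) ∧
    (∑' m : ℕ,
      (2 * Real.pi * Complex.I * ((m : ℂ) + 1)) ^ α * (((m : ℂ) + 1) + x) ^ (-s) *
        Complex.exp (2 * Real.pi * Complex.I * t * ((m : ℂ) + 1)))
      = (2 * Real.pi * Complex.I) ^ α *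
        ∑' n : ℕ, cbinom α n * (-x) ^ n * lerchZeta t x (s - α + n) := by
  set f : ℕ × ℕ → ℂ := fun p => cbinom α p.2 * (-x) ^ p.2 * ((p.1 : ℂ) + x) ^ (α - s - p.2) *
      Complex.exp (2 * Real.pi * Complex.I * t * p.1) with hf
  have hsum : Summable f := summable_lterm t x s α ht hx hα
  have hrow : ∀ k : ℕ, HasSum (fun n => f (k + 1, n))
      (((k:ℂ)+1) ^ α * (((k:ℂ)+1) + x) ^ (-s)
        * Complex.exp (2 * Real.pi * Complex.I * t * ((k:ℂ)+1))) := by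
    intro k
    have heq : (fun n => f (k + 1, n)) = fun n : ℕ => cbinom α n * (-x) ^ n *
        (((k : ℂ) + 1) + x) ^ (α - s - n) *
        Complex.exp (2 * Real.pi * Complex.I * t * ((k : ℂ) + 1)) := by
      funext n
      simp only [hf]
      push_cast
      ring_nf
    rw [heq]
    exact hasSum_row t x s α hx k
  have hG : Summable (fun k => ∑' n, f (k, n)) := hsum.prod
  have hGk : ∀ k : ℕ, ∑' n, f (k + 1, n) = ((k:ℂ)+1) ^ α * (((k:ℂ)+1) + x) ^ (-s)
      * Complex.exp (2 * Real.pi * Complex.I * t * ((k:ℂ)+1)) := fun k => (hrow k).tsum_eq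
  have hG0 : ∑' n, f (0, n) = 0 := by
    apply HasSum.tsum_eq
    have h := hasSum_row_zero t x s α hx hα
    exact h
  have h2πI : (2 * (Real.pi:ℂ) * Complex.I) ≠ 0 := by
    simp [Real.pi_ne_zero, Complex.I_ne_zero]
  have hL : ∀ m : ℕ, (2 * Real.pi * Complex.I * ((m : ℂ) + 1)) ^ α *
      (((m : ℂ) + 1) + x) ^ (-s) *
      Complex.exp (2 * Real.pi * Complex.I * t * ((m : ℂ) + 1))
      = (2 * Real.pi * Complex.I) ^ α * ∑' n, f (m + 1, n) := by
    intro m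
    rw [hGk m]
    have h1 : (2 * (Real.pi:ℂ) * Complex.I * ((m:ℂ) + 1))
        = ((((m:ℝ) + 1 : ℝ)) : ℂ) * (2 * Real.pi * Complex.I) := by push_cast; ring
    have hsplitpow : (2 * (Real.pi:ℂ) * Complex.I * ((m:ℂ) + 1)) ^ α
        = (2 * (Real.pi:ℂ) * Complex.I) ^ α * ((m:ℂ) + 1) ^ α := by
      rw [h1, cpow_ofReal_mul (by positivity) h2πI α,
        show ((((m:ℝ) + 1 : ℝ)) : ℂ) = ((m:ℂ) + 1) from by push_cast; ring]
      ring
    rw [hsplitpow]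
    ring
  have hcolsummable : Summable (fun n => ∑' k, f (k, n)) := by
    have h1 := hsum.prod_symm.prod
    exact h1
  have hcolval : ∀ n : ℕ, ∑' k, f (k, n)
      = cbinom α n * (-x) ^ n * lerchZeta t x (s - α + n) := by
    intro n
    rw [lerchZeta]
    rw [show ∑' (m : ℕ), ((m : ℂ) + x) ^ (-(s - α + n)) *
        Complex.exp (2 * Real.pi * Complex.I * t * m)
        = ∑' (m : ℕ), ((m : ℂ) + x) ^ (α - s - n) *
        Complex.exp (2 * Real.pi * Complex.I * t * m) from
      tsum_congr fun m => by rw [show -(s - α + (n:ℂ)) = α - s - n from by ring]]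
    rw [← tsum_mul_left]
    apply tsum_congr
    intro k
    simp only [hf]
    ring
  refine ⟨?_, ?_, ?_⟩
  · apply Summable.congr (((summable_nat_add_iff 1).2 hG).mul_left
      ((2 * Real.pi * Complex.I) ^ α))
    intro m
    exact (hL m).symm
  · exact hcolsummable.congr hcolval
  · calc (∑' m : ℕ, (2 * Real.pi * Complex.I * ((m : ℂ) + 1)) ^ α *
        (((m : ℂ) + 1) + x) ^ (-s) *
        Complex.exp (2 * Real.pi * Complex.I * t * ((m : ℂ) + 1)))
        = ∑' m : ℕ, (2 * Real.pi * Complex.I) ^ α * ∑' n, f (m + 1, n) := tsum_congr hL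
      _ = (2 * Real.pi * Complex.I) ^ α * ∑' m : ℕ, ∑' n, f (m + 1, n) := tsum_mul_left
      _ = (2 * Real.pi * Complex.I) ^ α * ∑' k : ℕ, ∑' n, f (k, n) := by
          rw [Summable.tsum_eq_zero_add hG, hG0, zero_add]
      _ = (2 * Real.pi * Complex.I) ^ α * ∑' p : ℕ × ℕ, f p := by
          rw [← Summable.tsum_prod hsum]
      _ = (2 * Real.pi * Complex.I) ^ α * ∑' n : ℕ, ∑' k : ℕ, f (k, n) := by
          congr 1
          rw [← (Equiv.prodComm ℕ ℕ).tsum_eq f]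
          exact Summable.tsum_prod hsum.prod_symm
      _ = (2 * Real.pi * Complex.I) ^ α *
          ∑' n : ℕ, cbinom α n * (-x) ^ n * lerchZeta t x (s - α + n) := by
          rw [tsum_congr hcolval]
end

section
/- Let x, s ∈ ℂ with Re(x) > 0, and let k ∈ ℕ. Then on the open upper half-plane {t ∈ ℂ : Im(t) > 0}, the function t ↦ L(t,x,s) is k times complex differentiable, and its k-th iterated derivative at any t with Im(t) > 0 equals (2πi)^k ∑_{n=0}^{k} C(k,n) (−x)^n L(t, x, s−k+n), where C(k,n) denotes the ordinary binomial coefficient. -/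
open MeasureTheory

open Complex Finset

private lemma norm_exp_term (t : ℂ) (m : ℕ) :
    ‖Complex.exp (2 * Real.pi * Complex.I * t * m)‖ = Real.exp (-(2 * Real.pi * t.im) * m) := by
  rw [Complex.norm_exp]
  congr 1
  simp [Complex.mul_re, Complex.mul_im]

private lemma cpow_bound (x s : ℂ) (hx : 0 < x.re) :
    ∃ C : ℝ, 0 < C ∧ ∀ m : ℕ,
      ‖((m : ℂ) + x) ^ (-s)‖ ≤ C * ((m : ℝ) + 1) ^ (⌈|s.re|⌉₊) := by
  set K : ℕ := ⌈|s.re|⌉₊ with hK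
  refine ⟨Real.exp (Real.pi * |s.im|) * (x.re ^ (-s.re) + (1 + ‖x‖) ^ K), by positivity, ?_⟩
  intro m
  set z : ℂ := (m : ℂ) + x with hz
  have hzre : 0 < z.re := by
    simp only [hz, Complex.add_re, Complex.natCast_re]
    positivity
  have hz0 : z ≠ 0 := fun h => by simp [h] at hzre
  have habs_lb : x.re ≤ ‖z‖ := by
    have := Complex.re_le_norm z
    have : z.re ≤ ‖z‖ := Complex.re_le_norm z
    have hre : z.re = (m : ℝ) + x.re := by simp [hz]
    nlinarith [Nat.cast_nonneg (α := ℝ) m]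
  have habs_ub : ‖z‖ ≤ ((m : ℝ) + 1) * (1 + ‖x‖) := by
    calc ‖z‖ ≤ ‖(m : ℂ)‖ + ‖x‖ := norm_add_le _ _
    _ = (m : ℝ) + ‖x‖ := by simp
    _ ≤ ((m : ℝ) + 1) * (1 + ‖x‖) := by nlinarith [Nat.cast_nonneg (α := ℝ) m, norm_nonneg x]
  have hnorm : ‖z ^ (-s)‖ = ‖z‖ ^ (-s.re) / Real.exp (z.arg * (-s).im) := by
    rw [Complex.norm_cpow_of_ne_zero hz0]
    simp
  have hbase : ‖z ^ (-s)‖ ≤ Real.exp (Real.pi * |s.im|) * ‖z‖ ^ (-s.re) := by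
    rw [hnorm, div_eq_mul_inv, mul_comm]
    apply mul_le_mul_of_nonneg_right _ (Real.rpow_nonneg (norm_nonneg z) _)
    rw [← Real.exp_neg]
    apply Real.exp_le_exp.2
    have h1 : |z.arg| ≤ Real.pi := Complex.abs_arg_le_pi z
    have h2 : |z.arg * (-s).im| ≤ Real.pi * |s.im| := by
      rw [abs_mul]
      simp only [Complex.neg_im, abs_neg]
      exact mul_le_mul_of_nonneg_right h1 (abs_nonneg _)
    cases' abs_le.1 h2 with h3 h4
    linarith
  have hpow : ‖z‖ ^ (-s.re) ≤ (x.re ^ (-s.re) + (1 + ‖x‖) ^ K) * ((m : ℝ) + 1) ^ K := by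
    have hmK : (1 : ℝ) ≤ ((m : ℝ) + 1) ^ K := one_le_pow₀ (by linarith [Nat.cast_nonneg (α := ℝ) m])
    rcases le_or_gt (-s.re) 0 with hc | hc
    · have h1 : ‖z‖ ^ (-s.re) ≤ x.re ^ (-s.re) :=
        Real.rpow_le_rpow_of_nonpos hx habs_lb hc
      have h2 : (0 : ℝ) ≤ x.re ^ (-s.re) := Real.rpow_nonneg hx.le _
      nlinarith [pow_nonneg (by positivity : (0:ℝ) ≤ 1 + ‖x‖) K]
    · have h1 : ‖z‖ ^ (-s.re) ≤ (((m : ℝ) + 1) * (1 + ‖x‖)) ^ (-s.re) :=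
        Real.rpow_le_rpow (norm_nonneg z) habs_ub hc.le
      have hb1 : (1 : ℝ) ≤ ((m : ℝ) + 1) * (1 + ‖x‖) := by
        nlinarith [Nat.cast_nonneg (α := ℝ) m, norm_nonneg x]
      have h2 : (((m : ℝ) + 1) * (1 + ‖x‖)) ^ (-s.re) ≤ (((m : ℝ) + 1) * (1 + ‖x‖)) ^ (K : ℝ) := by
        apply Real.rpow_le_rpow_of_exponent_le hb1
        calc -s.re ≤ |s.re| := by cases' abs_le.1 (le_refl |s.re|) with h _; linarith [le_abs_self (-s.re), abs_neg s.re]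
        _ ≤ (K : ℝ) := by rw [hK]; exact Nat.le_ceil _
      have h3 : (((m : ℝ) + 1) * (1 + ‖x‖)) ^ (K : ℝ) = (((m : ℝ) + 1) * (1 + ‖x‖)) ^ K := by
        rw [Real.rpow_natCast]
      have h4 : (((m : ℝ) + 1) * (1 + ‖x‖)) ^ K = ((m : ℝ) + 1) ^ K * (1 + ‖x‖) ^ K :=
        mul_pow _ _ _
      have h5 : (0 : ℝ) ≤ x.re ^ (-s.re) := Real.rpow_nonneg hx.le _
      nlinarith [pow_nonneg (by positivity : (0:ℝ) ≤ (m:ℝ) + 1) K,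
        pow_nonneg (by positivity : (0:ℝ) ≤ 1 + ‖x‖) K]
  calc ‖z ^ (-s)‖ ≤ Real.exp (Real.pi * |s.im|) * ‖z‖ ^ (-s.re) := hbase
  _ ≤ Real.exp (Real.pi * |s.im|) * ((x.re ^ (-s.re) + (1 + ‖x‖) ^ K) * ((m : ℝ) + 1) ^ K) :=
      mul_le_mul_of_nonneg_left hpow (Real.exp_nonneg _)
  _ = Real.exp (Real.pi * |s.im|) * (x.re ^ (-s.re) + (1 + ‖x‖) ^ K) * ((m : ℝ) + 1) ^ K := by
      ring

private lemma aux_summable (K : ℕ) {b : ℝ} (hb : 0 < b) :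
    Summable (fun m : ℕ => ((m : ℝ) + 1) ^ K * Real.exp (-b * m)) := by
  set r : ℝ := Real.exp (-b) with hr
  have hr1 : ‖r‖ < 1 := by
    rw [Real.norm_eq_abs, abs_of_pos (Real.exp_pos _)]
    exact Real.exp_lt_one_iff.2 (by linarith)
  have h0 : Summable (fun n : ℕ => (n : ℝ) ^ K * r ^ n) :=
    summable_pow_mul_geometric_of_norm_lt_one K hr1
  have h1 : Summable (fun n : ℕ => ((n + 1 : ℕ) : ℝ) ^ K * r ^ (n + 1)) :=
    (summable_nat_add_iff 1).2 h0
  have h2 := h1.mul_left r⁻¹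
  have hrne : r ≠ 0 := (Real.exp_pos _).ne'
  refine h2.congr fun n => ?_
  have : Real.exp (-b * n) = r ^ n := by
    rw [hr, ← Real.exp_nat_mul]
    ring_nf
  rw [this]
  push_cast
  field_simp
  ring

private lemma lerch_term_summable (x s : ℂ) (hx : 0 < x.re) {t : ℂ} (ht : 0 < t.im) :
    Summable (fun m : ℕ => ((m : ℂ) + x) ^ (-s) * Complex.exp (2 * Real.pi * Complex.I * t * m)) := by
  obtain ⟨C, hC, hbound⟩ := cpow_bound x s hx
  apply Summable.of_norm
  apply Summable.of_nonneg_of_le (fun m => norm_nonneg _) _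
    ((aux_summable (⌈|s.re|⌉₊) (by positivity : (0:ℝ) < 2 * Real.pi * t.im)).mul_left C)
  intro m
  rw [norm_mul, norm_exp_term]
  calc ‖((m : ℂ) + x) ^ (-s)‖ * Real.exp (-(2 * Real.pi * t.im) * m)
      ≤ C * ((m : ℝ) + 1) ^ (⌈|s.re|⌉₊) * Real.exp (-(2 * Real.pi * t.im) * m) :=
        mul_le_mul_of_nonneg_right (hbound m) (Real.exp_nonneg _)
  _ = C * (((m : ℝ) + 1) ^ (⌈|s.re|⌉₊) * Real.exp (-(2 * Real.pi * t.im) * m)) := by ring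

private lemma lerch_hasDerivAt (x s : ℂ) (hx : 0 < x.re) {t : ℂ} (ht : 0 < t.im) :
    HasDerivAt (fun t : ℂ => lerchZeta t x s)
      (2 * Real.pi * Complex.I * (lerchZeta t x (s - 1) - x * lerchZeta t x s)) t := by
  obtain ⟨C, hC, hbound⟩ := cpow_bound x s hx
  set K : ℕ := ⌈|s.re|⌉₊
  set S : Set ℂ := {z : ℂ | t.im / 2 < z.im} with hS
  have hSopen : IsOpen S := isOpen_lt continuous_const Complex.continuous_im
  have hSconn : IsPreconnected S := (convex_halfSpace_im_gt (t.im / 2)).isPreconnected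
  have htS : t ∈ S := by simp [hS]; linarith
  set g : ℕ → ℂ → ℂ := fun m z => ((m : ℂ) + x) ^ (-s) * Complex.exp (2 * Real.pi * Complex.I * z * m) with hg
  set g' : ℕ → ℂ → ℂ := fun m z =>
    ((m : ℂ) + x) ^ (-s) * (Complex.exp (2 * Real.pi * Complex.I * z * m) * (2 * Real.pi * Complex.I * m)) with hg'
  set u : ℕ → ℝ := fun m => (2 * Real.pi * C) * (((m : ℝ) + 1) ^ (K + 1) * Real.exp (-(Real.pi * t.im) * m)) with hu
  have hu_sum : Summable u :=
    (aux_summable (K + 1) (by positivity : (0:ℝ) < Real.pi * t.im)).mul_left _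
  have hgderiv : ∀ m : ℕ, ∀ z ∈ S, HasDerivAt (g m) (g' m z) z := by
    intro m z _
    have h1 : HasDerivAt (fun w : ℂ => 2 * Real.pi * Complex.I * w * m)
        (2 * Real.pi * Complex.I * m) z := by
      simpa using (hasDerivAt_id z).const_mul (2 * (Real.pi : ℂ) * Complex.I) |>.mul_const (m : ℂ)
    exact (h1.cexp).const_mul _
  have hgbound : ∀ m : ℕ, ∀ z ∈ S, ‖g' m z‖ ≤ u m := by
    intro m z hz
    have hz2 : t.im / 2 < z.im := hz
    rw [hg']
    simp only
    rw [norm_mul, norm_mul, norm_exp_term]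
    have hnm : ‖2 * (Real.pi : ℂ) * Complex.I * m‖ = 2 * Real.pi * m := by
      simp [norm_mul, Complex.norm_real, Real.norm_eq_abs, abs_of_pos Real.pi_pos]
    rw [hnm]
    have hexp : Real.exp (-(2 * Real.pi * z.im) * m) ≤ Real.exp (-(Real.pi * t.im) * m) := by
      apply Real.exp_le_exp.2
      have : Real.pi * t.im ≤ 2 * Real.pi * z.im := by nlinarith [Real.pi_pos]
      nlinarith [Nat.cast_nonneg (α := ℝ) m]
    have hmle : (m : ℝ) ≤ (m : ℝ) + 1 := by linarith
    calc ‖((m : ℂ) + x) ^ (-s)‖ * (Real.exp (-(2 * Real.pi * z.im) * m) * (2 * Real.pi * m))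
        ≤ (C * ((m : ℝ) + 1) ^ K) * (Real.exp (-(Real.pi * t.im) * m) * (2 * Real.pi * ((m : ℝ) + 1))) := by
          apply mul_le_mul (hbound m)
          · apply mul_le_mul hexp (by nlinarith [Real.pi_pos]) (by positivity) (Real.exp_nonneg _)
          · positivity
          · positivity
    _ = (2 * Real.pi * C) * (((m : ℝ) + 1) ^ K * ((m : ℝ) + 1) * Real.exp (-(Real.pi * t.im) * m)) := by ring
    _ = u m := by rw [hu]; ring_nf
  have hg0 : Summable fun m => g m t := lerch_term_summable x s hx ht
  have hmain : HasDerivAt (fun z => ∑' m, g m z) (∑' m, g' m t) t :=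
    hasDerivAt_tsum_of_isPreconnected hu_sum hSopen hSconn hgderiv hgbound htS hg0 htS
  have hsum_eq : (∑' m, g' m t) =
      2 * Real.pi * Complex.I * (lerchZeta t x (s - 1) - x * lerchZeta t x s) := by
    have hterm : ∀ m : ℕ, g' m t =
        2 * Real.pi * Complex.I *
          (((m : ℂ) + x) ^ (-(s - 1)) * Complex.exp (2 * Real.pi * Complex.I * t * m)
            - x * (((m : ℂ) + x) ^ (-s) * Complex.exp (2 * Real.pi * Complex.I * t * m))) := by
      intro m
      have hzre : 0 < ((m : ℂ) + x).re := by
        simp only [Complex.add_re, Complex.natCast_re]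
        positivity
      have hz0 : ((m : ℂ) + x) ≠ 0 := fun h => by simp [h] at hzre
      have hcp : ((m : ℂ) + x) ^ (-(s - 1)) = ((m : ℂ) + x) ^ (-s) * ((m : ℂ) + x) := by
        rw [show -(s - 1) = -s + 1 by ring, Complex.cpow_add _ _ hz0, Complex.cpow_one]
      rw [hg', hcp]
      simp only
      ring
    rw [tsum_congr hterm, tsum_mul_left]
    congr 1
    rw [Summable.tsum_sub (lerch_term_summable x (s - 1) hx ht)
      ((lerch_term_summable x s hx ht).mul_left x), tsum_mul_left]
    rfl
  rw [← hsum_eq]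
  exact hmain

private lemma pascal_sum (x : ℂ) (y : ℕ → ℂ) (k : ℕ) :
    ∑ n ∈ Finset.range (k + 1), (k.choose n : ℂ) * (-x) ^ n * (y n - x * y (n + 1))
    = ∑ n ∈ Finset.range (k + 2), ((k + 1).choose n : ℂ) * (-x) ^ n * y n := by
  have h1 : ∑ n ∈ Finset.range (k + 1), (k.choose n : ℂ) * (-x) ^ n * (y n - x * y (n + 1))
      = (∑ n ∈ Finset.range (k + 1), (k.choose n : ℂ) * (-x) ^ n * y n)
        + ∑ n ∈ Finset.range (k + 1), (k.choose n : ℂ) * (-x) ^ (n + 1) * y (n + 1) := by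
    rw [← Finset.sum_add_distrib]
    refine Finset.sum_congr rfl fun n _ => ?_
    rw [pow_succ]
    ring
  rw [h1,
    Finset.sum_range_succ' (fun n => (((k + 1).choose n : ℕ) : ℂ) * (-x) ^ n * y n) (k + 1),
    Finset.sum_range_succ' (fun n => ((k.choose n : ℕ) : ℂ) * (-x) ^ n * y n) k]
  have h2 : ∀ n ∈ Finset.range (k + 1),
      (((k + 1).choose (n + 1) : ℕ) : ℂ) * (-x) ^ (n + 1) * y (n + 1)
      = (k.choose n : ℂ) * (-x) ^ (n + 1) * y (n + 1)
        + (k.choose (n + 1) : ℂ) * (-x) ^ (n + 1) * y (n + 1) := by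
    intro n _
    rw [Nat.choose_succ_succ']
    push_cast
    ring
  rw [Finset.sum_congr rfl h2, Finset.sum_add_distrib]
  have h3 : ∑ n ∈ Finset.range (k + 1), (k.choose (n + 1) : ℂ) * (-x) ^ (n + 1) * y (n + 1)
      = ∑ n ∈ Finset.range k, (k.choose (n + 1) : ℂ) * (-x) ^ (n + 1) * y (n + 1) := by
    rw [Finset.sum_range_succ, Nat.choose_succ_self]
    simp
  rw [h3]
  simp [Nat.choose_zero_right]
  ring

theorem iteratedDeriv_lerch_t (x s : ℂ) (hx : 0 < x.re) (k : ℕ) :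
    ContDiffOn ℂ k (fun t : ℂ => lerchZeta t x s) {t : ℂ | 0 < t.im} ∧
    ∀ t : ℂ, 0 < t.im →
      iteratedDeriv k (fun t : ℂ => lerchZeta t x s) t
        = (2 * Real.pi * Complex.I) ^ k *
          ∑ n ∈ Finset.range (k + 1),
            (k.choose n : ℂ) * (-x) ^ n * lerchZeta t x (s - k + n) := by
  have hopen : IsOpen {t : ℂ | 0 < t.im} := isOpen_lt continuous_const Complex.continuous_im
  constructor
  · apply DifferentiableOn.contDiffOn _ hopen
    intro t ht
    exact (lerch_hasDerivAt x s hx ht).differentiableAt.differentiableWithinAt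
  · have key : ∀ (k : ℕ) (s : ℂ) (t : ℂ), 0 < t.im →
        iteratedDeriv k (fun t : ℂ => lerchZeta t x s) t
          = (2 * Real.pi * Complex.I) ^ k *
            ∑ n ∈ Finset.range (k + 1),
              (k.choose n : ℂ) * (-x) ^ n * lerchZeta t x (s - k + n) := by
      intro k
      induction k with
      | zero =>
        intro s t ht
        simp [iteratedDeriv_zero]
      | succ k ih =>
        intro s t ht
        rw [iteratedDeriv_succ]
        have hev : iteratedDeriv k (fun t : ℂ => lerchZeta t x s) =ᶠ[nhds t]
            (fun t : ℂ => (2 * Real.pi * Complex.I) ^ k *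
              ∑ n ∈ Finset.range (k + 1),
                (k.choose n : ℂ) * (-x) ^ n * lerchZeta t x (s - k + n)) :=
          Filter.eventually_of_mem (hopen.mem_nhds ht) (fun z hz => ih s z hz)
        rw [hev.deriv_eq]
        have hG : HasDerivAt (fun t : ℂ => (2 * Real.pi * Complex.I) ^ k *
            ∑ n ∈ Finset.range (k + 1),
              (k.choose n : ℂ) * (-x) ^ n * lerchZeta t x (s - k + n))
            ((2 * Real.pi * Complex.I) ^ k *
              ∑ n ∈ Finset.range (k + 1),
                (k.choose n : ℂ) * (-x) ^ n *
                  (2 * Real.pi * Complex.I *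
                    (lerchZeta t x (s - k + n - 1) - x * lerchZeta t x (s - k + n)))) t := by
          apply HasDerivAt.const_mul
          apply HasDerivAt.fun_sum
          intro n _
          exact (lerch_hasDerivAt x (s - k + n) hx ht).const_mul _
        rw [hG.deriv]
        have hre : ∀ n : ℕ, s - (k : ℂ) + n - 1 = s - ((k : ℕ) + 1 : ℕ) + n := by
          intro n; push_cast; ring
        have hre2 : ∀ n : ℕ, s - (k : ℂ) + n = s - ((k : ℕ) + 1 : ℕ) + ((n + 1 : ℕ) : ℂ) := by
          intro n; push_cast; ring
        calc (2 * Real.pi * Complex.I) ^ k *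
            ∑ n ∈ Finset.range (k + 1),
              (k.choose n : ℂ) * (-x) ^ n *
                (2 * Real.pi * Complex.I *
                  (lerchZeta t x (s - k + n - 1) - x * lerchZeta t x (s - k + n)))
            = (2 * Real.pi * Complex.I) ^ (k + 1) *
              ∑ n ∈ Finset.range (k + 1),
                (k.choose n : ℂ) * (-x) ^ n *
                  (lerchZeta t x (s - ((k : ℕ) + 1 : ℕ) + n)
                    - x * lerchZeta t x (s - ((k : ℕ) + 1 : ℕ) + ((n + 1 : ℕ) : ℂ))) := by
              rw [Finset.mul_sum, Finset.mul_sum, pow_succ]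
              refine Finset.sum_congr rfl fun n _ => ?_
              rw [← hre n, ← hre2 n]
              ring
        _ = (2 * Real.pi * Complex.I) ^ (k + 1) *
              ∑ n ∈ Finset.range (k + 2),
                ((k + 1).choose n : ℂ) * (-x) ^ n *
                  lerchZeta t x (s - ((k : ℕ) + 1 : ℕ) + n) := by
              rw [pascal_sum x (fun n => lerchZeta t x (s - ((k : ℕ) + 1 : ℕ) + n)) k]
    exact key k s
end

section
/- Let t, s ∈ ℂ with Im(t) > 0. Then on the open right half-plane {x ∈ ℂ : Re(x) > 0}, the function x ↦ L(t,x,s) is complex differentiable, and its derivative at any x with Re(x) > 0 equals −s · L(t, x, s+1). -/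
open MeasureTheory

open Complex Real in
private lemma sgeom_aux (k : ℕ) {r : ℝ} (hr0 : 0 < r) (hr1 : r < 1) :
    Summable fun n : ℕ => ((n : ℝ) + 1) ^ k * r ^ n := by
  have h : Summable fun n : ℕ => (n : ℝ) ^ k * r ^ n :=
    summable_pow_mul_geometric_of_norm_lt_one k (by rwa [Real.norm_eq_abs, abs_of_pos hr0])
  have h2 : Summable fun n : ℕ => ((n + 1 : ℕ) : ℝ) ^ k * r ^ (n + 1) :=
    h.comp_injective (add_left_injective 1)
  have h3 := h2.mul_left r⁻¹
  refine h3.congr fun n => ?_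
  push_cast
  rw [pow_succ]
  field_simp

open Complex Real in
private lemma poly_geom_aux (a C : ℝ) (hC : 0 < C) {r : ℝ} (hr0 : 0 < r) (hr1 : r < 1)
    (_ha : 0 ≤ a) : Summable fun n : ℕ => (C * ((n : ℝ) + 1)) ^ a * r ^ n := by
  set k := ⌈a⌉₊ with hk
  have h := (sgeom_aux k hr0 hr1).mul_left (C ^ a)
  refine Summable.of_nonneg_of_le (fun n => ?_) (fun n => ?_) h
  · positivity
  · have hn1 : (0:ℝ) ≤ (n : ℝ) + 1 := by positivity
    rw [Real.mul_rpow hC.le hn1]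
    have hle : ((n : ℝ) + 1) ^ a ≤ ((n : ℝ) + 1) ^ k := by
      rw [← Real.rpow_natCast ((n:ℝ)+1) k]
      exact Real.rpow_le_rpow_of_exponent_le (by simp) (Nat.le_ceil a)
    have := mul_le_mul_of_nonneg_left hle (Real.rpow_nonneg hC.le a)
    calc C ^ a * ((n : ℝ) + 1) ^ a * r ^ n ≤ C ^ a * ((n : ℝ) + 1) ^ k * r ^ n := by
          exact mul_le_mul_of_nonneg_right this (pow_nonneg hr0.le n)
      _ = C ^ a * (((n : ℝ) + 1) ^ k * r ^ n) := by ring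

open Complex Real in
/-- Uniform bound for the norm of a complex power. -/
private lemma cpow_norm_bound (w z : ℂ) {ε M : ℝ} (hε : 0 < ε) (hzre : ε ≤ z.re)
    (hzM : ‖z‖ ≤ M) :
    ‖z ^ w‖ ≤ Real.exp (π * |w.im|) * (max ε⁻¹ 1 * (M + 1)) ^ |w.re| := by
  have hz0 : z ≠ 0 := by
    intro h; rw [h] at hzre; simp at hzre; linarith
  have habs : ε ≤ ‖z‖ := hzre.trans (Complex.re_le_norm z)
  have habs0 : 0 < ‖z‖ := lt_of_lt_of_le hε habs
  have hM0 : 0 < M + 1 := by linarith [habs0.trans_le hzM]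
  have hK1 : (1:ℝ) ≤ max ε⁻¹ 1 * (M + 1) := by
    have : (1:ℝ) ≤ max ε⁻¹ 1 := le_max_right _ _
    nlinarith [habs0.trans_le hzM]
  have hK0 : (0:ℝ) < max ε⁻¹ 1 * (M + 1) := lt_of_lt_of_le one_pos hK1
  rw [Complex.norm_cpow_of_ne_zero hz0]
  have hexp : Real.exp (-(π * |w.im|)) ≤ Real.exp (z.arg * w.im) := by
    apply Real.exp_le_exp.2
    have h1 : |z.arg * w.im| ≤ π * |w.im| := by
      rw [abs_mul]
      exact mul_le_mul_of_nonneg_right (Complex.abs_arg_le_pi z) (abs_nonneg _)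
    linarith [neg_abs_le (z.arg * w.im)]
  have hbase : ‖z‖ ^ w.re ≤ (max ε⁻¹ 1 * (M + 1)) ^ |w.re| := by
    rcases le_or_gt 0 w.re with h | h
    · rw [_root_.abs_of_nonneg h]
      exact Real.rpow_le_rpow habs0.le (hzM.trans (by nlinarith [le_max_right ε⁻¹ (1:ℝ)])) h
    · rw [_root_.abs_of_neg h]
      have h1 : ‖z‖ ^ w.re ≤ ε ^ w.re :=
        Real.rpow_le_rpow_of_nonpos hε habs h.le
      have h2 : ε ^ w.re = (ε⁻¹) ^ (-w.re) := by
        rw [Real.inv_rpow hε.le, Real.rpow_neg hε.le, inv_inv]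
      have h3 : (ε⁻¹ : ℝ) ^ (-w.re) ≤ (max ε⁻¹ 1 * (M + 1)) ^ (-w.re) := by
        apply Real.rpow_le_rpow (by positivity) _ (by linarith)
        calc ε⁻¹ ≤ max ε⁻¹ 1 := le_max_left _ _
          _ ≤ max ε⁻¹ 1 * (M + 1) := le_mul_of_one_le_right (by positivity) (by linarith)
      calc ‖z‖ ^ w.re ≤ ε ^ w.re := h1
        _ = (ε⁻¹) ^ (-w.re) := h2
        _ ≤ (max ε⁻¹ 1 * (M + 1)) ^ (-w.re) := h3
  calc ‖z‖ ^ w.re / Real.exp (z.arg * w.im)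
      ≤ ‖z‖ ^ w.re / Real.exp (-(π * |w.im|)) := by
        apply div_le_div_of_nonneg_left (Real.rpow_nonneg habs0.le _) (Real.exp_pos _) hexp
    _ = Real.exp (π * |w.im|) * ‖z‖ ^ w.re := by
        rw [div_eq_mul_inv, ← Real.exp_neg, neg_neg, mul_comm]
    _ ≤ Real.exp (π * |w.im|) * (max ε⁻¹ 1 * (M + 1)) ^ |w.re| :=
        mul_le_mul_of_nonneg_left hbase (Real.exp_pos _).le

open Complex Real in
private lemma exp_term_norm (t : ℂ) (n : ℕ) :
    ‖Complex.exp (2 * (π:ℝ) * Complex.I * t * n)‖ = Real.exp (-(2 * π * t.im)) ^ n := by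
  rw [Complex.norm_exp, ← Real.exp_nat_mul]
  congr 1
  have : (2 * (π:ℝ) * Complex.I * t * n).re = -(2 * π * t.im) * n := by
    simp only [Complex.mul_re, Complex.mul_im, Complex.I_re, Complex.I_im, Complex.ofReal_re,
      Complex.ofReal_im, Complex.natCast_re, Complex.natCast_im, Complex.re_ofNat,
      Complex.im_ofNat]
    ring
  rw [this]
  ring

set_option maxHeartbeats 1000000 in
theorem deriv_lerch_x (t s : ℂ) (ht : 0 < t.im) :
    ∀ x : ℂ, 0 < x.re →
      HasDerivAt (fun y : ℂ => lerchZeta t y s) (-s * lerchZeta t x (s + 1)) x := by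
  intro x hx
  set r : ℝ := Real.exp (-(2 * Real.pi * t.im)) with hr
  have hr0 : 0 < r := Real.exp_pos _
  have hr1 : r < 1 := by
    rw [hr, Real.exp_lt_one_iff]
    have := Real.pi_pos
    nlinarith
  set ε : ℝ := x.re / 2 with hεdef
  have hε : 0 < ε := by positivity
  set E : ℕ → ℂ := fun n => Complex.exp (2 * (Real.pi:ℝ) * Complex.I * t * n) with hE
  set g : ℕ → ℂ → ℂ := fun n y => ((n : ℂ) + y) ^ (-s) * E n with hg
  set g' : ℕ → ℂ → ℂ := fun n y => -s * ((n : ℂ) + y) ^ (-s - 1) * E n with hg'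
  set K : ℝ := max ε⁻¹ 1 * (‖x‖ + ε + 1) with hKdef
  set u : ℕ → ℝ := fun n =>
    ‖s‖ * (Real.exp (Real.pi * |(-s - 1).im|) * (K * ((n : ℝ) + 1)) ^ |(-s - 1).re|)
      * r ^ n with hu
  have hC : 0 < ‖x‖ + ε + 1 := by positivity
  have hK0 : 0 < K := by
    have : (1:ℝ) ≤ max ε⁻¹ 1 := le_max_right _ _
    positivity
  -- uniform estimates on the ball
  have hball : ∀ y ∈ Metric.ball x ε, ε ≤ y.re ∧ ‖y‖ ≤ ‖x‖ + ε := by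
    intro y hy
    rw [Metric.mem_ball, dist_eq_norm] at hy
    constructor
    · have h1 : |y.re - x.re| ≤ ‖y - x‖ := by
        simpa using Complex.abs_re_le_norm (y - x)
      have h2 : |y.re - x.re| < ε := lt_of_le_of_lt h1 hy
      have := abs_lt.1 h2
      simp only [hεdef] at *
      linarith [this.1]
    · have hxy : ‖y - x‖ ≤ ε := by
        exact hy.le
      calc ‖y‖ = ‖x + (y - x)‖ := by congr 1; ring
        _ ≤ ‖x‖ + ‖y - x‖ := norm_add_le _ _
        _ ≤ ‖x‖ + ε := by linarith
  -- derivative of each term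
  have hderiv : ∀ n : ℕ, ∀ y ∈ Metric.ball x ε, HasDerivAt (g n) (g' n y) y := by
    intro n y hy
    have hyre : 0 < ((n : ℂ) + y).re := by
      have h1 := (hball y hy).1
      have h2 : (0:ℝ) ≤ (n:ℝ) := Nat.cast_nonneg n
      simp only [Complex.add_re, Complex.natCast_re]
      linarith
    have hslit : ((n : ℂ) + y) ∈ Complex.slitPlane := Complex.mem_slitPlane_iff.2 (Or.inl hyre)
    have h1 : HasDerivAt (fun z : ℂ => (n : ℂ) + z) 1 y := by
      simpa using (hasDerivAt_id y).const_add (n : ℂ)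
    have h2 := (h1.cpow_const (c := -s) hslit).mul_const (E n)
    simpa only [hg, hg', mul_one] using h2
  -- bound on derivatives
  have hbound : ∀ n : ℕ, ∀ y ∈ Metric.ball x ε, ‖g' n y‖ ≤ u n := by
    intro n y hy
    obtain ⟨h1, h2⟩ := hball y hy
    have hre : ε ≤ ((n : ℂ) + y).re := by
      simp only [Complex.add_re, Complex.natCast_re]
      have : (0:ℝ) ≤ (n:ℝ) := Nat.cast_nonneg n
      linarith
    have habs : ‖(n : ℂ) + y‖ ≤ (n : ℝ) + (‖x‖ + ε) := by
      calc ‖(n : ℂ) + y‖ ≤ ‖(n : ℂ)‖ + ‖y‖ :=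
            norm_add_le _ _
        _ ≤ (n : ℝ) + (‖x‖ + ε) := by
            simp only [Complex.norm_natCast]; linarith
    have hcb := cpow_norm_bound (-s - 1) ((n : ℂ) + y) hε hre habs
    have hKn : (max ε⁻¹ 1 * ((n : ℝ) + (‖x‖ + ε) + 1)) ^ |(-s - 1).re|
        ≤ (K * ((n : ℝ) + 1)) ^ |(-s - 1).re| := by
      apply Real.rpow_le_rpow (by positivity) _ (abs_nonneg _)
      rw [hKdef]
      have hmax : (0:ℝ) < max ε⁻¹ 1 := lt_of_lt_of_le one_pos (le_max_right _ _)
      have : (n : ℝ) + (‖x‖ + ε) + 1 ≤ (‖x‖ + ε + 1) * ((n : ℝ) + 1) := by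
        have hn : (0:ℝ) ≤ (n:ℝ) := Nat.cast_nonneg n
        have hA : (0:ℝ) ≤ ‖x‖ := norm_nonneg x
        nlinarith
      nlinarith
    calc ‖g' n y‖ = ‖s‖ * ‖((n : ℂ) + y) ^ (-s - 1)‖ * ‖E n‖ := by
          simp only [hg', norm_mul, norm_neg]
      _ ≤ ‖s‖ * (Real.exp (Real.pi * |(-s - 1).im|)
            * (K * ((n : ℝ) + 1)) ^ |(-s - 1).re|) * ‖E n‖ := by
          apply mul_le_mul_of_nonneg_right _ (norm_nonneg _)
          apply mul_le_mul_of_nonneg_left _ (norm_nonneg s)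
          exact hcb.trans (mul_le_mul_of_nonneg_left hKn (Real.exp_pos _).le)
      _ = u n := by simp only [hu, hE]; rw [exp_term_norm t n]
  -- summability of the bound
  have husum : Summable u := by
    rw [hu]
    have := ((poly_geom_aux |(-s - 1).re| K hK0 hr0 hr1 (abs_nonneg _)).mul_left
      (Real.exp (Real.pi * |(-s - 1).im|))).mul_left (‖s‖)
    refine this.congr fun n => by ring
  -- summability of the series at x
  have hg0 : Summable fun n => g n x := by
    apply Summable.of_norm
    set K' : ℝ := max (x.re)⁻¹ 1 * (‖x‖ + 1) with hK'
    have hK'0 : 0 < K' := by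
      have : (1:ℝ) ≤ max (x.re)⁻¹ 1 := le_max_right _ _
      have : 0 < ‖x‖ + 1 := by positivity
      positivity
    have hmaj := (poly_geom_aux |(-s).re| K' hK'0 hr0 hr1 (abs_nonneg _)).mul_left
      (Real.exp (Real.pi * |(-s).im|))
    refine Summable.of_nonneg_of_le (fun n => norm_nonneg _) (fun n => ?_) hmaj
    have hre : x.re ≤ ((n : ℂ) + x).re := by
      simp only [Complex.add_re, Complex.natCast_re]
      have : (0:ℝ) ≤ (n:ℝ) := Nat.cast_nonneg n
      linarith
    have habs : ‖(n : ℂ) + x‖ ≤ (n : ℝ) + ‖x‖ := by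
      calc ‖(n : ℂ) + x‖ ≤ ‖(n : ℂ)‖ + ‖x‖ :=
            norm_add_le _ _
        _ = (n : ℝ) + ‖x‖ := by simp
    have hcb := cpow_norm_bound (-s) ((n : ℂ) + x) hx hre habs
    have hKn : (max (x.re)⁻¹ 1 * ((n : ℝ) + ‖x‖ + 1)) ^ |(-s).re|
        ≤ (K' * ((n : ℝ) + 1)) ^ |(-s).re| := by
      apply Real.rpow_le_rpow (by positivity) _ (abs_nonneg _)
      rw [hK']
      have hmax : (0:ℝ) < max (x.re)⁻¹ 1 := lt_of_lt_of_le one_pos (le_max_right _ _)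
      have : (n : ℝ) + ‖x‖ + 1 ≤ (‖x‖ + 1) * ((n : ℝ) + 1) := by
        have hn : (0:ℝ) ≤ (n:ℝ) := Nat.cast_nonneg n
        have := norm_nonneg x
        nlinarith
      nlinarith
    calc ‖g n x‖ = ‖((n : ℂ) + x) ^ (-s)‖ * ‖E n‖ := by
          simp only [hg, norm_mul]
      _ ≤ (Real.exp (Real.pi * |(-s).im|) * (K' * ((n : ℝ) + 1)) ^ |(-s).re|) * ‖E n‖ := by
          apply mul_le_mul_of_nonneg_right _ (norm_nonneg _)
          exact hcb.trans (mul_le_mul_of_nonneg_left hKn (Real.exp_pos _).le)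
      _ = Real.exp (Real.pi * |(-s).im|) * ((K' * ((n : ℝ) + 1)) ^ |(-s).re| * r ^ n) := by
          rw [hE, exp_term_norm t n]; ring
  -- apply the term-by-term differentiation theorem
  have hmain := hasDerivAt_tsum_of_isPreconnected husum Metric.isOpen_ball
    (convex_ball x ε).isPreconnected hderiv hbound (Metric.mem_ball_self hε) hg0
    (Metric.mem_ball_self hε)
  have heq : (∑' n : ℕ, g' n x) = -s * lerchZeta t x (s + 1) := by
    rw [lerchZeta, ← tsum_mul_left]
    apply tsum_congr
    intro n
    have h : (-s - 1 : ℂ) = -(s + 1) := by ring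
    simp only [hg', hE, h]
    ring
  have hfun : (fun y : ℂ => lerchZeta t y s) = fun z => ∑' n, g n z := by
    funext y
    rfl
  rw [hfun, ← heq]
  exact hmain
end
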